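/- arXiv:1909.02045 — 8 statements merged into one kernel-verified Lean document; each statement's English description precedes it below -/
import Mathlib

section
/- Let r ≥ 1 and t ≥ 1 be integers, and let a = r mod t. If M is a finite simple matroid of rank r with no (t+1)-claw, then the ground set of M has at least (t − a)·2^⌊r/t⌋ + a·2^⌈r/t⌉ − t elements. -/
/-- A matroid is *simple* if every one- or two-element subset of the ground set
is independent (equivalently: it is loopless and has no two distinct parallel elements). -/
def Matroid.IsSimple {α : Type*} (M : Matroid α) : Prop :=
  ∀ e ∈ M.E, ∀ f ∈ M.E, M.Indep {e, f}

/-- A *claw* of a matroid is a set that is both a flat and independent. -/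
def Matroid.IsClaw {α : Type*} (M : Matroid α) (S : Set α) : Prop :=
  M.IsFlat S ∧ M.Indep S

open Set

section Aux
variable {α : Type*} {M : Matroid α} {S T C I : Set α} {e f x y z : α}

lemma closure_flat_aux (M : Matroid α) (X : Set α) : M.IsFlat (M.closure X) := by
  have hne : Nonempty {F : Set α // M.IsFlat F ∧ X ∩ M.E ⊆ F} :=
    ⟨⟨M.E, M.ground_isFlat, Set.inter_subset_right⟩⟩
  have h : M.closure X = ⋂ (F : {F : Set α // M.IsFlat F ∧ X ∩ M.E ⊆ F}), F.1 := by
    rw [Matroid.closure_def, Set.sInter_eq_iInter]; rfl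
  rw [h]
  exact Matroid.IsFlat.iInter fun F => F.2.1

lemma flat_of_closure_eq (h : M.closure S = S) : M.IsFlat S := h ▸ closure_flat_aux M S

lemma Matroid.IsSimple.indep_singleton (hs : M.IsSimple) (he : e ∈ M.E) : M.Indep {e} := by
  have := hs e he e he; rwa [Set.pair_eq_singleton] at this

lemma Matroid.IsSimple.closure_singleton (hs : M.IsSimple) (he : e ∈ M.E) :
    M.closure {e} = {e} := by
  refine subset_antisymm ?_ (M.subset_closure {e} (by simpa))
  intro f hf
  by_contra hfe
  simp only [mem_singleton_iff] at hfe
  have hfE : f ∈ M.E := M.closure_subset_ground _ hf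
  have hdep : M.Dep (insert f {e}) :=
    ((hs.indep_singleton he).mem_closure_iff_of_notMem (fun h => hfe (by simpa using h))).1 hf
  exact hdep.1 (hs f hfE e he)

lemma Matroid.IsSimple.closure_empty (hs : M.IsSimple) : M.closure ∅ = ∅ := by
  ext f
  simp only [mem_empty_iff_false, iff_false]
  intro hf
  have hfE : f ∈ M.E := M.closure_subset_ground _ hf
  have hdep : M.Dep (insert f ∅) := (M.empty_indep.mem_closure_iff_of_notMem (by simp)).1 hf
  exact hdep.1 (by simpa using hs.indep_singleton hfE)

lemma Matroid.IsClaw.subset_claw (hS : M.IsClaw S) (hTS : T ⊆ S) : M.IsClaw T := by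
  have hTind : M.Indep T := hS.2.subset hTS
  refine ⟨flat_of_closure_eq ?_, hTind⟩
  refine subset_antisymm ?_ (M.subset_closure T hTind.subset_ground)
  intro z hz
  have hzS : z ∈ S := by
    rw [← hS.1.closure]
    exact M.closure_subset_closure hTS hz
  by_contra hzT
  have hdep : M.Dep (insert z T) := (hTind.mem_closure_iff_of_notMem hzT).1 hz
  exact hdep.1 (hS.2.subset (insert_subset hzS hTS))

lemma exists_minimal_subset_aux (P : Set α → Prop) :
    ∀ n : ℕ, ∀ S : Set α, S.Finite → S.ncard ≤ n → P S →
      ∃ T ⊆ S, P T ∧ ∀ T' ⊂ T, ¬ P T' := by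
  intro n
  induction n with
  | zero =>
    intro S hfin hcard hP
    have : S = ∅ := by rw [← Set.ncard_eq_zero hfin]; omega
    subst this
    exact ⟨∅, Subset.rfl, hP, fun T' hT' => absurd (Set.subset_empty_iff.1 hT'.subset) hT'.ne⟩
  | succ n ih =>
    intro S hfin hcard hP
    by_cases h : ∀ T' ⊂ S, ¬ P T'
    · exact ⟨S, Subset.rfl, hP, h⟩
    push_neg at h
    obtain ⟨T', hT'S, hPT'⟩ := h
    have hlt : T'.ncard < S.ncard := Set.ncard_lt_ncard hT'S hfin
    obtain ⟨T, hTT', hPT, hmin⟩ := ih T' (hfin.subset hT'S.subset) (by omega) hPT'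
    exact ⟨T, hTT'.trans hT'S.subset, hPT, hmin⟩

lemma exists_minimal_subset {P : Set α → Prop} (hfin : S.Finite) (hP : P S) :
    ∃ T ⊆ S, P T ∧ ∀ T' ⊂ T, ¬ P T' :=
  exists_minimal_subset_aux P S.ncard S hfin le_rfl hP

end Aux

def clawSum (t r : ℕ) : ℕ := ∑ i ∈ Finset.range r, 2 ^ (i / t)

lemma clawSum_add (t m n : ℕ) :
    clawSum t (m + n) = clawSum t m + ∑ j ∈ Finset.range n, 2 ^ ((m + j) / t) := by
  induction n with
  | zero => simp [clawSum]
  | succ n ih =>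
    rw [← Nat.add_assoc, clawSum, Finset.sum_range_succ, ← clawSum, ih, Finset.sum_range_succ]
    omega

lemma clawSum_mono_t {t t' : ℕ} (h : t' ≤ t) (ht' : 1 ≤ t') (r : ℕ) :
    clawSum t r ≤ clawSum t' r := by
  apply Finset.sum_le_sum
  intro i _
  exact Nat.pow_le_pow_right (by norm_num) (Nat.div_le_div_left h ht')

lemma clawSum_const_block {t : ℕ} (ht : 1 ≤ t) (q c : ℕ) (hc : c ≤ t) :
    ∑ j ∈ Finset.range c, 2 ^ ((t * q + j) / t) = c * 2 ^ q := by
  have h : ∀ j ∈ Finset.range c, 2 ^ ((t * q + j) / t) = 2 ^ q := by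
    intro j hj
    rw [Finset.mem_range] at hj
    congr 1
    rw [Nat.mul_add_div ht, Nat.div_eq_of_lt (by omega)]
    omega
  rw [Finset.sum_congr rfl h, Finset.sum_const, smul_eq_mul, Finset.card_range]

lemma clawSum_rec {k r : ℕ} (hk : 1 ≤ k) (hkr : k ≤ r) :
    clawSum k r = k + 2 * clawSum k (r - k) := by
  obtain ⟨m, rfl⟩ : ∃ m, r = k + m := ⟨r - k, by omega⟩
  rw [Nat.add_sub_cancel_left, clawSum_add]
  have h1 : clawSum k k = k := by
    have h := clawSum_const_block hk 0 k le_rfl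
    simpa [clawSum] using h
  have h2 : ∑ j ∈ Finset.range m, 2 ^ ((k + j) / k) = 2 * clawSum k m := by
    rw [clawSum, Finset.mul_sum]
    apply Finset.sum_congr rfl
    intro j _
    have : (k + j) / k = j / k + 1 := by rw [Nat.add_comm, Nat.add_div_right _ hk]
    rw [this, pow_succ]
    ring
  rw [h1, h2]

lemma clawSum_block {t : ℕ} (ht : 1 ≤ t) : ∀ q : ℕ, clawSum t (t * q) + t = t * 2 ^ q := by
  intro q
  induction q with
  | zero => simp [clawSum]
  | succ n ih =>
    have he : t * (n + 1) = t * n + t := by ring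
    rw [he, clawSum_add, clawSum_const_block ht n t le_rfl]
    have h2 : t * 2 ^ (n + 1) = t * 2 ^ n + t * 2 ^ n := by ring
    omega

lemma clawSum_closed {t : ℕ} (ht : 1 ≤ t) (r : ℕ) :
    (t - r % t) * 2 ^ (r / t) + (r % t) * 2 ^ ((r + t - 1) / t) = clawSum t r + t := by
  have hmod : r % t < t := Nat.mod_lt _ ht
  have hdm : t * (r / t) + r % t = r := Nat.div_add_mod r t
  set q := r / t with hq
  set a := r % t with ha
  have hceil : a * 2 ^ ((r + t - 1) / t) = a * 2 ^ (q + 1) := by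
    rcases Nat.eq_zero_or_pos a with h0 | hpos
    · rw [h0]; ring
    · congr 2
      have hmul : t * (q + 1) = t * q + t := by ring
      have he : r + t - 1 = t * (q + 1) + (a - 1) := by omega
      rw [he, Nat.mul_add_div ht]
      have : (a - 1) / t = 0 := Nat.div_eq_of_lt (by omega)
      omega
  rw [hceil]
  have hsum : clawSum t r = clawSum t (t * q) + a * 2 ^ q := by
    have he : r = t * q + a := by omega
    rw [he, clawSum_add, clawSum_const_block ht q a (by omega)]
  have hblock := clawSum_block ht q
  have h2 : a * 2 ^ (q + 1) = a * 2 ^ q + a * 2 ^ q := by ring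
  have h3 : (t - a) * 2 ^ q + a * 2 ^ q = t * 2 ^ q := by
    rw [← Nat.add_mul]
    congr 1
    omega
  omega

lemma claw_main {α : Type*} : ∀ r : ℕ, ∀ (t : ℕ) (M : Matroid α), 1 ≤ t → M.E.Finite →
    M.IsSimple → (∃ B, M.IsBase B ∧ B.ncard = r) →
    (¬ ∃ S, M.IsClaw S ∧ S.ncard = t + 1) → clawSum t r ≤ M.E.ncard := by
  intro r
  induction r using Nat.strong_induction_on with
  | _ r IH =>
  intro t M ht hfin hsimple hrank hclaw
  rcases Nat.eq_zero_or_pos r with hr0 | hr1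
  · subst hr0; simp [clawSum]
  obtain ⟨B, hB, hBcard⟩ := hrank
  have hBfin : B.Finite := hfin.subset hB.subset_ground
  obtain ⟨e0, he0⟩ := Set.nonempty_of_ncard_ne_zero (show B.ncard ≠ 0 by omega)
  haveI : Nonempty α := ⟨e0⟩
  classical
  -- no claw has size > t
  have hclaw_le : ∀ S, M.IsClaw S → S.ncard ≤ t := by
    intro S hS
    by_contra h
    push_neg at h
    obtain ⟨T, hTS, hTcard⟩ := Set.exists_subset_card_eq (show t + 1 ≤ S.ncard by omega)
    exact hclaw ⟨T, hS.subset_claw hTS, hTcard⟩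
  -- max claw size k
  have hP1 : ∃ S, M.IsClaw S ∧ S.ncard = 1 := by
    have heE : e0 ∈ M.E := hB.subset_ground he0
    exact ⟨{e0}, ⟨flat_of_closure_eq (hsimple.closure_singleton heE),
      hsimple.indep_singleton heE⟩, Set.ncard_singleton e0⟩
  set k := Nat.findGreatest (fun n => ∃ S, M.IsClaw S ∧ S.ncard = n) t with hkdef
  have hk1 : 1 ≤ k := Nat.le_findGreatest ht hP1
  have hkt : k ≤ t := Nat.findGreatest_le t
  obtain ⟨C, hCclaw, hCcard⟩ : ∃ S, M.IsClaw S ∧ S.ncard = k := by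
    rw [hkdef]
    exact Nat.findGreatest_spec (P := fun n => ∃ S, M.IsClaw S ∧ S.ncard = n) ht hP1
  have hno_succ : ¬ ∃ S, M.IsClaw S ∧ S.ncard = k + 1 := by
    rcases Nat.lt_or_ge k t with hlt | hge
    · intro hx
      exact Nat.findGreatest_is_greatest
        (P := fun n => ∃ S, M.IsClaw S ∧ S.ncard = n) (k := k + 1) (n := t)
        (by omega) (by omega) hx
    · have hkt' : k = t := le_antisymm hkt hge
      rw [hkt']
      exact hclaw
  have hCindep := hCclaw.2
  have hCE : C ⊆ M.E := hCindep.subset_ground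
  have hCfin : C.Finite := hfin.subset hCE
  have hCcl : M.closure C = C := hCclaw.1.closure
  obtain ⟨B', hB', hCB'⟩ := hCindep.exists_isBase_superset
  have hkr : k ≤ r := by
    rw [← hCcard, ← hBcard, hB.ncard_eq_ncard_of_isBase hB']
    exact Set.ncard_le_ncard hCB' (hfin.subset hB'.subset_ground)
  -- classes
  set cls : α → Set α := fun x => M.closure (insert x C) \ C with hcls
  have hcls_sub : ∀ x, cls x ⊆ M.E \ C := fun x =>
    diff_subset_diff_left (M.closure_subset_ground _)
  have hmem_cls : ∀ x ∈ M.E \ C, x ∈ cls x := by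
    intro x hx
    exact ⟨M.subset_closure (insert x C) (insert_subset hx.1 hCE) (mem_insert _ _), hx.2⟩
  have hins_indep : ∀ x ∈ M.E \ C, M.Indep (insert x C) := by
    intro x hx
    rw [hCindep.insert_indep_iff_of_notMem hx.2, hCcl]
    exact hx
  -- each class has a second element
  have hcls_two : ∀ x ∈ M.E \ C, ∃ z, z ∈ cls x ∧ z ≠ x := by
    intro x hx
    by_contra h
    push_neg at h
    apply hno_succ
    refine ⟨insert x C, ⟨flat_of_closure_eq ?_, hins_indep x hx⟩, ?_⟩
    · refine subset_antisymm ?_ (M.subset_closure _ (insert_subset hx.1 hCE))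
      intro z hz
      rw [mem_insert_iff]
      rcases em (z ∈ C) with hzC | hzC
      · exact Or.inr hzC
      · exact Or.inl (h z ⟨hz, hzC⟩)
    · rw [Set.ncard_insert_of_notMem hx.2 hCfin, hCcard]
  -- class equivalence
  have hcls_eq : ∀ x ∈ M.E \ C, ∀ y ∈ cls x, cls y = cls x := by
    intro x hx y hy
    have hcc : M.closure (insert y C) = M.closure (insert x C) := by
      apply Matroid.closure_insert_congr
      rw [hCcl]
      exact ⟨hy.1, hy.2⟩
    show M.closure (insert y C) \ C = M.closure (insert x C) \ C
    rw [hcc]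
  -- representatives
  set pick : Set α → α := fun A => Classical.epsilon (· ∈ A) with hpick
  have hpick_mem : ∀ (A : Set α), A.Nonempty → pick A ∈ A := by
    intro A hA
    exact Classical.epsilon_spec hA
  set rep : α → α := fun x => pick (cls x) with hrep
  have hrep_mem : ∀ x ∈ M.E \ C, rep x ∈ cls x := fun x hx =>
    hpick_mem _ ⟨x, hmem_cls x hx⟩
  have hrep_cls : ∀ x ∈ M.E \ C, cls (rep x) = cls x := fun x hx =>
    hcls_eq x hx _ (hrep_mem x hx)
  have hrep_eq : ∀ x ∈ M.E \ C, rep (rep x) = rep x := by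
    intro x hx
    show pick (cls (rep x)) = rep x
    rw [hrep_cls x hx]
  set R : Set α := rep '' (M.E \ C) with hR
  have hR_sub : R ⊆ M.E \ C := by
    rintro _ ⟨x, hx, rfl⟩
    exact hcls_sub x (hrep_mem x hx)
  have hRfin : R.Finite := (hfin.diff (t := C)).subset hR_sub
  have hrep_id : ∀ x ∈ R, rep x = x := by
    rintro _ ⟨x, hx, rfl⟩
    exact hrep_eq x hx
  have hR_inj : ∀ x ∈ R, ∀ y ∈ R, y ∈ cls x → y = x := by
    intro x hx y hy hyx
    have hxE : x ∈ M.E \ C := hR_sub hx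
    have hce : cls y = cls x := hcls_eq x hxE y hyx
    calc y = rep y := (hrep_id y hy).symm
    _ = rep x := by show pick (cls y) = pick (cls x); rw [hce]
    _ = x := hrep_id x hx
  -- second elements
  set oth : α → α := fun x => Classical.epsilon (fun z => z ∈ cls x ∧ z ≠ x) with hoth
  have hoth_spec : ∀ x ∈ M.E \ C, oth x ∈ cls x ∧ oth x ≠ x := by
    intro x hx
    exact Classical.epsilon_spec (hcls_two x hx)
  -- counting
  have hcount : 2 * R.ncard ≤ (M.E \ C).ncard := by
    have hsub : R ∪ oth '' R ⊆ M.E \ C := by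
      apply union_subset hR_sub
      rintro _ ⟨x, hx, rfl⟩
      exact hcls_sub x (hoth_spec x (hR_sub hx)).1
    have hdisj : Disjoint R (oth '' R) := by
      rw [Set.disjoint_left]
      rintro a haR ⟨y, hyR, hay⟩
      have h1 : a ∈ cls y := hay ▸ (hoth_spec y (hR_sub hyR)).1
      have h2 : a = y := hR_inj y hyR a haR h1
      exact (hoth_spec y (hR_sub hyR)).2 (hay.trans h2)
    have hothinj : Set.InjOn oth R := by
      intro x hx y hy hxy
      have h1 : oth x ∈ cls x := (hoth_spec x (hR_sub hx)).1
      have h2 : oth x ∈ cls y := hxy ▸ (hoth_spec y (hR_sub hy)).1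
      have e1 : cls (oth x) = cls x := hcls_eq x (hR_sub hx) _ h1
      have e2 : cls (oth x) = cls y := hcls_eq y (hR_sub hy) _ h2
      have : rep x = rep y := by
        show pick (cls x) = pick (cls y)
        rw [← e1, e2]
      rwa [hrep_id x hx, hrep_id y hy] at this
    calc 2 * R.ncard = R.ncard + (oth '' R).ncard := by
          rw [Set.ncard_image_of_injOn hothinj]; ring
    _ = (R ∪ oth '' R).ncard := (Set.ncard_union_eq hdisj hRfin (hRfin.image _)).symm
    _ ≤ (M.E \ C).ncard := Set.ncard_le_ncard hsub (hfin.diff (t := C))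
  -- the contracted simplified matroid N on R
  set NI : Set α → Prop := fun J => J ⊆ R ∧ M.Indep (C ∪ J) with hNI
  have hNI_empty : NI ∅ := ⟨empty_subset _, by rw [union_empty]; exact hCindep⟩
  have hNI_subset : ∀ ⦃I J⦄, NI J → I ⊆ J → NI I := by
    rintro I J ⟨hJR, hJind⟩ hIJ
    exact ⟨hIJ.trans hJR, hJind.subset (union_subset_union_right _ hIJ)⟩
  have hNI_aug : ∀ ⦃I J⦄, NI I → NI J → I.ncard < J.ncard →
      ∃ e ∈ J, e ∉ I ∧ NI (insert e I) := by
    rintro I J ⟨hIR, hIind⟩ ⟨hJR, hJind⟩ hIJ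
    have hIfin : I.Finite := hRfin.subset hIR
    have hJfin : J.Finite := hRfin.subset hJR
    have hIC : Disjoint C I := Set.disjoint_right.2 fun a ha => (hR_sub (hIR ha)).2
    have hJC : Disjoint C J := Set.disjoint_right.2 fun a ha => (hR_sub (hJR ha)).2
    have hencard : (C ∪ I).encard < (C ∪ J).encard := by
      rw [Set.encard_union_eq hIC, Set.encard_union_eq hJC]
      have hlt : I.encard < J.encard := by
        rw [← hIfin.cast_ncard_eq, ← hJfin.cast_ncard_eq]
        exact_mod_cast hIJ
      exact WithTop.add_lt_add_left hCfin.encard_lt_top.ne hlt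
    obtain ⟨e, he, hins⟩ := hIind.augment hJind hencard
    have heJ : e ∈ J := by
      rcases he.1 with h | h
      · exact absurd (Or.inl h) he.2
      · exact h
    refine ⟨e, heJ, fun heI => he.2 (Or.inr heI), insert_subset (hJR heJ) hIR, ?_⟩
    rw [Set.union_insert]
    exact hins
  have hNI_ground : ∀ ⦃I⦄, NI I → I ⊆ R := fun I hI => hI.1
  set N : Matroid α :=
    (IndepMatroid.ofFinite hRfin NI hNI_empty hNI_subset hNI_aug hNI_ground).matroid with hN
  have hNE : N.E = R := by rw [hN]; simp
  have hNindep : ∀ J, N.Indep J ↔ NI J := by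
    intro J
    rw [hN]
    simp
  -- N is simple
  have hNsimple : N.IsSimple := by
    intro x hx y hy
    rw [hNE] at hx hy
    rw [hNindep]
    refine ⟨?_, ?_⟩
    · intro a ha
      rcases ha with rfl | ha
      · exact hx
      · rw [mem_singleton_iff] at ha; subst ha; exact hy
    · rcases em (y = x) with rfl | hyx
      · have : C ∪ {y, y} = insert y C := by
          rw [Set.pair_eq_singleton, Set.union_singleton]
        rw [this]
        exact hins_indep y (hR_sub hx)
      · have hyclsx : y ∉ cls x := fun h => hyx (hR_inj x hx y hy h)
        have hynx : y ∉ M.closure (insert x C) := fun h => hyclsx ⟨h, (hR_sub hy).2⟩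
        have h1 : M.Indep (insert y (insert x C)) := by
          rw [(hins_indep x (hR_sub hx)).insert_indep_iff_of_notMem ?hne]
          · exact ⟨(hR_sub hy).1, hynx⟩
          case hne =>
            rintro (rfl | h)
            · exact hyx rfl
            · exact (hR_sub hy).2 h
        have heq : C ∪ {x, y} = insert y (insert x C) := by
          ext a
          simp only [mem_union, mem_insert_iff, mem_singleton_iff]
          tauto
        rwa [heq]
  -- rank of N
  obtain ⟨BN, hBN⟩ := N.exists_isBase
  have hBNi : NI BN := (hNindep _).1 hBN.indep
  have hBNR : BN ⊆ R := hBNi.1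
  have hBNind : M.Indep (C ∪ BN) := hBNi.2
  have hBNC : Disjoint C BN := Set.disjoint_right.2 fun a ha => (hR_sub (hBNR ha)).2
  have hclosR : ∀ x ∈ R, x ∈ M.closure (C ∪ BN) := by
    intro x hxR
    by_cases hxB : x ∈ BN
    · exact M.subset_closure _ hBNind.subset_ground (Or.inr hxB)
    · by_contra hxcl
      have hxE : x ∈ M.E := (hR_sub hxR).1
      have hxCS : x ∉ C ∪ BN := by
        rintro (h | h)
        · exact (hR_sub hxR).2 h
        · exact hxB h
      have hind : M.Indep (insert x (C ∪ BN)) := by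
        rw [hBNind.insert_indep_iff_of_notMem hxCS]
        exact ⟨hxE, hxcl⟩
      have hNI' : NI (insert x BN) := by
        refine ⟨insert_subset hxR hBNR, ?_⟩
        rwa [Set.union_insert]
      have := hBN.eq_of_subset_indep ((hNindep _).2 hNI') (subset_insert _ _)
      exact hxB (this ▸ mem_insert x BN)
  have hspan : M.E ⊆ M.closure (C ∪ BN) := by
    intro y hy
    by_cases hyC : y ∈ C
    · exact M.subset_closure _ hBNind.subset_ground (Or.inl hyC)
    · have hyE : y ∈ M.E \ C := ⟨hy, hyC⟩
      have hry : rep y ∈ R := mem_image_of_mem rep hyE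
      have h1 : rep y ∈ M.closure (C ∪ BN) := hclosR _ hry
      have h2 : y ∈ cls (rep y) := by
        rw [hrep_cls y hyE]
        exact hmem_cls y hyE
      have h3 : insert (rep y) C ⊆ M.closure (C ∪ BN) :=
        insert_subset h1 (fun a ha => M.subset_closure _ hBNind.subset_ground (Or.inl ha))
      have h4 : M.closure (insert (rep y) C) ⊆ M.closure (C ∪ BN) := by
        rw [← M.closure_closure (C ∪ BN)]
        exact M.closure_subset_closure h3
      exact h4 h2.1
  have hMbase : M.IsBase (C ∪ BN) := hBNind.isBase_of_ground_subset_closure hspan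
  have hBNcard : k + BN.ncard = r := by
    have hcc := hMbase.ncard_eq_ncard_of_isBase hB
    rw [Set.ncard_union_eq hBNC hCfin (hRfin.subset hBNR)] at hcc
    omega
  have hNrank : ∃ B0, N.IsBase B0 ∧ B0.ncard = r - k := ⟨BN, hBN, by omega⟩
  -- N has no (k+1)-claw
  have hNclaw : ¬ ∃ S, N.IsClaw S ∧ S.ncard = k + 1 := by
    rintro ⟨S, ⟨hSflat, hSind⟩, hScard⟩
    obtain ⟨hSR, hSCind⟩ := (hNindep _).1 hSind
    have hSind_M : M.Indep S := hSCind.subset subset_union_right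
    have hSE : S ⊆ M.E := hSind_M.subset_ground
    have hSfin : S.Finite := hRfin.subset hSR
    have hSC : ∀ {x}, x ∈ S → x ∉ C := fun hx => (hR_sub (hSR hx)).2
    -- Subclaim A: everything in cl(C ∪ S) \ C lies in a class of an element of S
    have hA : ∀ w ∈ M.closure (C ∪ S), w ∉ C → ∃ x ∈ S, w ∈ cls x := by
      intro w hw hwC
      have hwE : w ∈ M.E \ C := ⟨M.closure_subset_ground _ hw, hwC⟩
      have hxwR : rep w ∈ R := mem_image_of_mem rep hwE
      have hx1 : rep w ∈ M.closure (C ∪ S) := by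
        have hi : insert w C ⊆ M.closure (C ∪ S) :=
          insert_subset hw (fun a ha => M.subset_closure _ (union_subset hCE hSE) (Or.inl ha))
        have hcc : M.closure (insert w C) ⊆ M.closure (C ∪ S) := by
          rw [← M.closure_closure (C ∪ S)]
          exact M.closure_subset_closure hi
        exact hcc (hrep_mem w hwE).1
      have hxwS : rep w ∈ S := by
        by_contra hxwS
        have hxwCS : rep w ∉ C ∪ S := by
          rintro (h | h)
          · exact (hR_sub hxwR).2 h
          · exact hxwS h
        have hdep : ¬ M.Indep (insert (rep w) (C ∪ S)) := by
          intro hind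
          rw [hSCind.insert_indep_iff_of_notMem hxwCS] at hind
          exact hind.2 hx1
        have hnotNI : ¬ N.Indep (insert (rep w) S) := by
          rw [hNindep]
          rintro ⟨-, hind⟩
          apply hdep
          rwa [Set.union_insert] at hind
        have hxwcl : rep w ∈ N.closure S := by
          rw [hSind.mem_closure_iff_of_notMem hxwS]
          refine ⟨hnotNI, insert_subset ?_ ?_⟩
          · rw [hNE]; exact hxwR
          · rw [hNE]; exact hSR
        rw [hSflat.closure] at hxwcl
        exact hxwS hxwcl
      have hwmem : w ∈ cls (rep w) := by
        rw [hrep_cls w hwE]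
        exact hmem_cls w hwE
      exact ⟨rep w, hxwS, hwmem⟩
    -- fact Bj : j ∉ cl(C ∪ (S \ {j}))
    have hGj : ∀ j ∈ S, j ∉ M.closure (C ∪ (S \ {j})) := by
      intro j hj hmem
      have hI0 : M.Indep (C ∪ (S \ {j})) :=
        hSCind.subset (union_subset_union_right _ diff_subset)
      have hjI0 : j ∉ C ∪ (S \ {j}) := by
        rintro (h | h)
        · exact hSC hj h
        · exact h.2 rfl
      rw [hI0.mem_closure_iff_of_notMem hjI0] at hmem
      apply hmem.1
      have heq : insert j (C ∪ (S \ {j})) = C ∪ S := by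
        ext a
        simp only [mem_insert_iff, mem_union, mem_diff, mem_singleton_iff]
        constructor
        · rintro (rfl | h | ⟨h, -⟩)
          · exact Or.inr hj
          · exact Or.inl h
          · exact Or.inr h
        · rintro (h | h)
          · exact Or.inr (Or.inl h)
          · by_cases haj : a = j
            · exact Or.inl haj
            · exact Or.inr (Or.inr ⟨h, haj⟩)
      rwa [heq]
    -- main : closure S = S
    have hSclosure : M.closure S = S := by
      refine subset_antisymm ?_ (M.subset_closure S hSE)
      intro z hz
      by_contra hzS
      have hzCS : z ∈ M.closure (C ∪ S) :=
        M.closure_subset_closure subset_union_right hz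
      obtain ⟨T, hTS, hzT, hTmin⟩ :=
        exists_minimal_subset (P := fun T => z ∈ M.closure T) hSfin hz
      have hkey : ∃ j ∈ T, z ∈ M.closure (C ∪ (S \ {j})) ∧ j ∈ S := by
        have hTne : T.Nonempty := by
          rcases eq_empty_or_nonempty T with rfl | h
          · rw [hsimple.closure_empty] at hzT
            exact absurd hzT (notMem_empty z)
          · exact h
        by_cases hzC : z ∈ C
        · obtain ⟨j, hj⟩ := hTne
          exact ⟨j, hj, M.subset_closure _
            (union_subset hCE (diff_subset.trans hSE)) (Or.inl hzC), hTS hj⟩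
        · obtain ⟨xi, hxiS, hzxi⟩ := hA z hzCS hzC
          have hexj : ∃ j ∈ T, j ≠ xi := by
            by_contra hcon
            push_neg at hcon
            have hTsub : T ⊆ {xi} := fun j hj => hcon j hj
            have hzz : z ∈ M.closure {xi} := M.closure_subset_closure hTsub hzT
            rw [hsimple.closure_singleton (hSE hxiS)] at hzz
            rw [mem_singleton_iff] at hzz
            exact hzS (hzz ▸ hxiS)
          obtain ⟨j, hjT, hjxi⟩ := hexj
          refine ⟨j, hjT, ?_, hTS hjT⟩
          have hxiSj : xi ∈ S \ {j} := ⟨hxiS, fun h => hjxi (mem_singleton_iff.1 h).symm⟩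
          have hcc : M.closure (insert xi C) ⊆ M.closure (C ∪ (S \ {j})) :=
            M.closure_subset_closure (insert_subset (Or.inr hxiSj) subset_union_left)
          exact hcc hzxi.1
      obtain ⟨j, hjT, hzGj, hjS⟩ := hkey
      have hXT : T \ {j} ⊂ T := by
        constructor
        · exact diff_subset
        · intro h
          exact (h hjT).2 rfl
      have hz_not : z ∉ M.closure (T \ {j}) := hTmin _ hXT
      have hexch : j ∈ M.closure (insert z (T \ {j})) := by
        have he : z ∈ M.closure (insert j (T \ {j})) \ M.closure (T \ {j}) := by
          constructor
          · rwa [Set.insert_diff_singleton, Set.insert_eq_of_mem hjT]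
          · exact hz_not
        exact (Matroid.closure_exchange he).1
      have hsubG : insert z (T \ {j}) ⊆ M.closure (C ∪ (S \ {j})) := by
        refine insert_subset hzGj fun a ha => M.subset_closure _
          (union_subset hCE (diff_subset.trans hSE))
          (Or.inr ⟨hTS ha.1, ha.2⟩)
      have hcc : M.closure (insert z (T \ {j})) ⊆ M.closure (C ∪ (S \ {j})) := by
        rw [← M.closure_closure (C ∪ (S \ {j}))]
        exact M.closure_subset_closure hsubG
      exact hGj j hjS (hcc hexch)
    exact hno_succ ⟨S, ⟨flat_of_closure_eq hSclosure, hSind_M⟩, hScard⟩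
  -- apply induction hypothesis to N
  have hIH := IH (r - k) (by omega) k N hk1 (by rw [hNE]; exact hRfin) hNsimple hNrank hNclaw
  rw [hNE] at hIH
  have hdiff : (M.E \ C).ncard + C.ncard = M.E.ncard :=
    Set.ncard_diff_add_ncard_of_subset hCE hfin
  calc clawSum t r ≤ clawSum k r := clawSum_mono_t hkt hk1 r
  _ = k + 2 * clawSum k (r - k) := clawSum_rec hk1 hkr
  _ ≤ M.E.ncard := by omega

/-- If `M` is a finite simple matroid of rank `r ≥ 1` with no `(t+1)`-claw (`t ≥ 1`),
then `|M.E| ≥ (t − a)·2^⌊r/t⌋ + a·2^⌈r/t⌉ − t` where `a = r % t`. -/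
theorem claw_free_lower_bound {α : Type*} (r t : ℕ) (hr : 1 ≤ r) (ht : 1 ≤ t)
    (M : Matroid α) (hfin : M.E.Finite) (hsimple : M.IsSimple)
    (hrank : ∃ B, M.IsBase B ∧ B.ncard = r)
    (hclaw : ¬ ∃ S, M.IsClaw S ∧ S.ncard = t + 1) :
    (t - r % t) * 2 ^ (r / t) + (r % t) * 2 ^ ((r + t - 1) / t) - t ≤ M.E.ncard := by
  have hmain := claw_main r t M ht hfin hsimple hrank hclaw
  have hclosed := clawSum_closed ht r
  omega
end

section
/- Let M be a simple matroid, let X be a subset of the ground set of M, and let F be a subset of the ground set of the contraction M/X. Suppose that F is independent in M/X and that every element of the closure of F in M/X that is not a loop of M/X is parallel in M/X to some element of F (equivalently, F is a claw of a simplification of M/X). Then F is both a flat of M and an independent set of M, i.e., F is a claw of M. -/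
open Set

/-- Deletion of a set from a matroid: restriction to the complement. -/
def Matroid.deleteSet {α : Type*} (M : Matroid α) (X : Set α) : Matroid α :=
  M.restrict (M.E \ X)

/-- Contraction of a set in a matroid, defined by duality: `M ／ X = (M✶ ＼ X)✶`. -/
def Matroid.contractSet {α : Type*} (M : Matroid α) (X : Set α) : Matroid α :=
  (M✶.deleteSet X)✶

/-- `e` is a loop of `M` if it lies in the closure of the empty set. -/
def Matroid.IsLoopElem {α : Type*} (M : Matroid α) (e : α) : Prop :=
  e ∈ M.closure ∅

/-- `e` and `f` are parallel in `M` if both are nonloops of `M` and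
`f` lies in the closure of `{e}` (so they span a common rank-1 flat). -/
def Matroid.ParallelElems {α : Type*} (M : Matroid α) (e f : α) : Prop :=
  e ∈ M.E ∧ f ∈ M.E ∧ ¬ M.IsLoopElem e ∧ ¬ M.IsLoopElem f ∧ f ∈ M.closure {e}

namespace ClawAux

variable {α : Type*}

lemma nonloop_of_indep_singleton {M : Matroid α} {e : α} (h : M.Indep {e}) :
    e ∉ M.closure ∅ := by
  have h2 := h.notMem_closure_diff_of_mem (mem_singleton e)
  rwa [diff_self] at h2

/-- Key lemma: if `B` is a base of `M` containing a basis of `S`, then the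
complement trace `(M.E \ S) \ B` is a basis of `M.E \ S` in the dual. -/
lemma dual_basis_compl {M : Matroid α} {B S : Set α} (hB : M.IsBase B) (hS : S ⊆ M.E)
    (hJS : M.IsBasis (B ∩ S) S) : M✶.IsBasis ((M.E \ S) \ B) (M.E \ S) := by
  have hind : M✶.Indep ((M.E \ S) \ B) :=
    hB.compl_isBase_dual.indep.subset (fun x hx => ⟨hx.1.1, hx.2⟩)
  refine hind.isBasis_of_forall_insert diff_subset ?_
  rintro e ⟨heES, heB'⟩
  have heB : e ∈ B := by
    by_contra h; exact heB' ⟨heES, h⟩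
  have heE : e ∈ M.E := heES.1
  have heS : e ∉ S := heES.2
  rw [Matroid.dep_iff]
  constructor
  · intro hi
    rw [Matroid.dual_indep_iff_exists'] at hi
    obtain ⟨-, B₂, hB₂, hdj⟩ := hi
    have hB₂sub : B₂ ⊆ S ∪ (B \ {e}) := by
      intro x hx
      have hxE : x ∈ M.E := hB₂.subset_ground hx
      have hxnot : x ∉ insert e ((M.E \ S) \ B) :=
        fun h => (hdj.ne_of_mem h hx) rfl
      simp only [mem_insert_iff, mem_diff, not_or, not_and, not_not] at hxnot
      obtain ⟨hxe, h2⟩ := hxnot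
      by_cases hxS : x ∈ S
      · exact Or.inl hxS
      · exact Or.inr ⟨h2 ⟨hxE, hxS⟩, hxe⟩
    have h1 : M.closure (S ∪ (B \ {e})) = M.closure (B \ {e}) := by
      have h2 : M.closure ((B ∩ S) ∪ (B \ {e})) = M.closure (S ∪ (B \ {e})) := by
        rw [← M.closure_union_closure_left_eq, hJS.closure_eq_closure,
          M.closure_union_closure_left_eq]
      have hsubl : B ∩ S ⊆ B \ {e} := fun x hx =>
        ⟨hx.1, fun hxe => heS ((mem_singleton_iff.mp hxe) ▸ hx.2)⟩
      rw [← h2, union_eq_self_of_subset_left hsubl]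
    have hmem : e ∈ M.closure (B \ {e}) := by
      rw [← h1]
      exact (hB₂.closure_eq ▸ M.closure_subset_closure hB₂sub) (hB₂.closure_eq.symm ▸ heE)
    exact hB.indep.notMem_closure_diff_of_mem heB hmem
  · rw [Matroid.dual_ground]
    exact insert_subset heE ((diff_subset).trans diff_subset)

lemma contract_ground (M : Matroid α) (X : Set α) : (M.contractSet X).E = M.E \ X := rfl

lemma contract_indep_iff {M : Matroid α} {X I : Set α} (hX : X ⊆ M.E) (hI : I ⊆ M.E \ X) :
    (M.contractSet X).Indep I ↔ ∃ J, M.IsBasis J X ∧ M.Indep (I ∪ J) := by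
  have hground : M✶.E \ X = M.E \ X := by rw [Matroid.dual_ground]
  constructor
  · intro h
    rw [Matroid.contractSet, Matroid.deleteSet, Matroid.dual_indep_iff_exists'] at h
    obtain ⟨-, B', hB', hdj⟩ := h
    rw [Matroid.isBase_restrict_iff diff_subset] at hB'
    obtain ⟨D, hD, hB'D⟩ := hB'.indep.exists_isBase_superset
    have hDcap : B' = D ∩ (M✶.E \ X) :=
      hB'.eq_of_subset_indep (hD.indep.inter_right _)
        (subset_inter hB'D hB'.subset) inter_subset_right
    have hJS : M✶.IsBasis (D ∩ (M✶.E \ X)) (M✶.E \ X) := hDcap ▸ hB'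
    have hL := dual_basis_compl hD diff_subset hJS
    have hXeq : M✶.E \ (M✶.E \ X) = X := by
      rw [Matroid.dual_ground, diff_diff_cancel_left hX]
    rw [hXeq, Matroid.dual_dual] at hL
    refine ⟨X \ D, hL, ?_⟩
    have hcB : M.IsBase (M.E \ D) := by
      have := hD.compl_isBase_dual
      rwa [Matroid.dual_dual, Matroid.dual_ground] at this
    refine hcB.indep.subset (union_subset ?_ ?_)
    · intro x hxI
      refine ⟨(hI hxI).1, fun hxD => ?_⟩
      have hxB' : x ∈ B' := by
        rw [hDcap]
        exact ⟨hxD, hground.symm ▸ hI hxI⟩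
      exact (hdj.ne_of_mem hxI hxB') rfl
    · exact fun x hx => ⟨hX hx.1, hx.2⟩
  · rintro ⟨J, hJ, hIJ⟩
    obtain ⟨B, hBbase, hsub⟩ := hIJ.exists_isBase_superset
    have hJB : J ⊆ B := (subset_union_right).trans hsub
    have hcap : J = B ∩ X :=
      hJ.eq_of_subset_indep (hBbase.indep.inter_right X)
        (subset_inter hJB hJ.subset) inter_subset_right
    have hJS : M.IsBasis (B ∩ X) X := hcap ▸ hJ
    have hL := dual_basis_compl hBbase hX hJS
    rw [Matroid.contractSet, Matroid.deleteSet, Matroid.dual_indep_iff_exists']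
    refine ⟨by simpa [hground] using hI, (M.E \ X) \ B, ?_, ?_⟩
    · rw [Matroid.isBase_restrict_iff diff_subset]
      rwa [hground]
    · exact disjoint_left.2 fun x hxI hx => hx.2 (hsub (Or.inl hxI))

end ClawAux

open ClawAux

/-- If `M` is simple, `X ⊆ M.E`, and `F` is independent in `M ／ X` with every non-loop
element of the closure of `F` in `M ／ X` parallel in `M ／ X` to an element of `F`
(i.e. `F` is a claw of a simplification of `M ／ X`), then `F` is a claw of `M`:
both a flat and an independent set of `M`. -/
theorem claw_of_simplification_of_contraction_is_claw {α : Type*} (M : Matroid α)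
    (hsimple : M.IsSimple) (X : Set α) (hX : X ⊆ M.E) (F : Set α)
    (hF : F ⊆ (M.contractSet X).E)
    (hindep : (M.contractSet X).Indep F)
    (hcl : ∀ e ∈ (M.contractSet X).closure F, ¬ (M.contractSet X).IsLoopElem e →
      ∃ f ∈ F, (M.contractSet X).ParallelElems e f) :
    M.IsFlat F ∧ M.Indep F := by
  rw [contract_ground] at hF
  obtain ⟨J, hJ, hFJ⟩ := (contract_indep_iff hX hF).mp hindep
  have hFindep : M.Indep F := hFJ.subset subset_union_left
  have hFE : F ⊆ M.E := fun x hx => (hF hx).1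
  have hclsub : M.closure F ⊆ F := by
    intro e he
    have heE : e ∈ M.E := M.closure_subset_ground F he
    have heX' : e ∉ M.closure X := by
      intro hecl
      have h2 : e ∈ M.closure J := by rwa [hJ.closure_eq_closure]
      have h3 : M.closure (F ∩ J) = M.closure F ∩ M.closure J :=
        hFJ.closure_inter_eq_inter_closure
      have hFJdisj : F ∩ J = (∅ : Set α) := by
        apply eq_empty_iff_forall_notMem.mpr
        rintro x ⟨hxF, hxJ⟩
        exact (hF hxF).2 (hJ.subset hxJ)
      have hloop : e ∈ M.closure ∅ := by
        rw [← hFJdisj, h3]; exact ⟨he, h2⟩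
      have hsing : M.Indep {e} := by
        have := hsimple e heE e heE
        rwa [pair_eq_singleton] at this
      exact nonloop_of_indep_singleton hsing hloop
    have heX : e ∉ X := fun h => heX' (M.subset_closure X hX h)
    by_contra heF
    have hecl2 : e ∈ (M.contractSet X).closure F := by
      rw [hindep.mem_closure_iff]
      left
      rw [Matroid.dep_iff]
      constructor
      · intro hi
        obtain ⟨J₁, hJ₁, hiJ⟩ :=
          (contract_indep_iff hX (insert_subset ⟨heE, heX⟩ hF)).mp hi
        have h4 : M.Indep (insert e F) := hiJ.subset subset_union_left
        rw [hFindep.insert_indep_iff_of_notMem heF] at h4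
        exact h4.2 he
      · rw [contract_ground]; exact insert_subset ⟨heE, heX⟩ hF
    have henl : ¬ (M.contractSet X).IsLoopElem e := by
      intro hloop
      have h1 : M.Indep (insert e J) := by
        rw [hJ.indep.insert_indep_iff_of_notMem (fun h => heX (hJ.subset h))]
        exact ⟨heE, by rwa [hJ.closure_eq_closure]⟩
      have h2 : (M.contractSet X).Indep {e} :=
        (contract_indep_iff hX (singleton_subset_iff.2 ⟨heE, heX⟩)).mpr
          ⟨J, hJ, by rwa [singleton_union]⟩
      exact nonloop_of_indep_singleton h2 hloop
    obtain ⟨f, hfF, hpar⟩ := hcl e hecl2 henl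
    obtain ⟨heE', hfE', hlne, hlnf, hfcl⟩ := hpar
    have hfX : f ∈ M.E \ X := hF hfF
    by_cases hefeq : e = f
    · exact heF (hefeq ▸ hfF)
    have hef : f ∈ (M.contractSet X).closure (insert e ∅) \ (M.contractSet X).closure ∅ := by
      rw [insert_empty_eq]
      exact ⟨hfcl, hlnf⟩
    have hecf : e ∈ (M.contractSet X).closure {f} := by
      have h5 := Matroid.closure_exchange hef
      rw [insert_empty_eq] at h5
      exact h5.1
    have hfJ : M.Indep ({f} ∪ J) :=
      hFJ.subset (union_subset_union_left J (singleton_subset_iff.2 hfF))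
    have hfind : (M.contractSet X).Indep {f} :=
      (contract_indep_iff hX (singleton_subset_iff.2 hfX)).mpr ⟨J, hJ, hfJ⟩
    have hdep : (M.contractSet X).Dep (insert e {f}) := by
      rwa [hfind.mem_closure_iff_of_notMem (by simpa using hefeq)] at hecf
    have hni : ¬ M.Indep (insert e ({f} ∪ J)) := by
      intro hi
      have h6 : (M.contractSet X).Indep (insert e {f}) :=
        (contract_indep_iff hX
          (insert_subset ⟨heE, heX⟩ (singleton_subset_iff.2 hfX))).mpr
          ⟨J, hJ, by rwa [insert_union]⟩
      exact hdep.1 h6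
    have henotin : e ∉ ({f} ∪ J : Set α) := by
      rintro (h | h)
      · exact hefeq (mem_singleton_iff.mp h)
      · exact heX (hJ.subset h)
    have hecfJ : e ∈ M.closure ({f} ∪ J) := by
      by_contra hnot
      exact hni ((hfJ.insert_indep_iff_of_notMem henotin).mpr ⟨heE, hnot⟩)
    have hinter : M.closure (F ∩ ({f} ∪ J)) = M.closure F ∩ M.closure ({f} ∪ J) := by
      apply Matroid.Indep.closure_inter_eq_inter_closure
      have h7 : F ∪ ({f} ∪ J) = F ∪ J := by
        rw [← union_assoc, union_eq_self_of_subset_right (singleton_subset_iff.2 hfF)]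
      rwa [h7]
    have hFcap : F ∩ ({f} ∪ J) = ({f} : Set α) := by
      apply subset_antisymm
      · rintro x ⟨hxF, (h | h)⟩
        · exact h
        · exact absurd (hJ.subset h) (fun hh => (hF hxF).2 hh)
      · exact singleton_subset_iff.2 ⟨hfF, Or.inl rfl⟩
    have hecf2 : e ∈ M.closure {f} := by
      rw [← hFcap, hinter]; exact ⟨he, hecfJ⟩
    have hfsing : M.Indep {f} := by
      have := hsimple f hfX.1 f hfX.1
      rwa [pair_eq_singleton] at this
    have hpairind : M.Indep (insert e {f}) := hsimple e heE f hfX.1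
    exact ((hfsing.insert_indep_iff_of_notMem (by simpa using hefeq)).mp hpairind).2 hecf2
  refine ⟨⟨fun I Y hIF hIY => ?_, hFE⟩, hFindep⟩
  intro y hy
  have h8 : Y ⊆ M.closure I := hIY.subset_closure
  rw [hIF.closure_eq_closure] at h8
  exact hclsub (h8 hy)
end

section
/- If M is a finite simple matroid of rank r with no 2-claw, then the ground set of M has at least 2^r − 1 elements. -/
open Set

private lemma pair_not_mem_closure {α : Type*} {M : Matroid α} {e g : α}
    (h : M.Indep {e, g}) (hne : e ≠ g) : g ∉ M.closure {e} := by
  have h2 := h.notMem_closure_sdiff_of_mem (e := g) (by simp)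
  have hset : ({e, g} : Set α) \ {g} = {e} := by
    ext x; simp only [mem_diff, mem_insert_iff, mem_singleton_iff]
    constructor
    · rintro ⟨h1 | h1, h2⟩ <;> tauto
    · rintro rfl; exact ⟨Or.inl rfl, hne⟩
  rwa [hset] at h2

private lemma Matroid.flat_closure' {α : Type*} (M : Matroid α) (X : Set α) :
    M.IsFlat (M.closure X) := by
  rw [Matroid.closure_def]
  have hne : Nonempty {F // M.IsFlat F ∧ X ∩ M.E ⊆ F} :=
    ⟨⟨M.E, M.ground_isFlat, inter_subset_right⟩⟩
  have h := Matroid.IsFlat.iInter (M := M)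
    (Fs := fun F : {F // M.IsFlat F ∧ X ∩ M.E ⊆ F} => F.1) (fun F => F.2.1)
  convert h using 1
  rw [sInter_eq_iInter]
  rfl

private lemma two_claw_key {α : Type*} (M : Matroid α) (hfin : M.E.Finite)
    (hsimple : M.IsSimple) (hclaw : ¬ ∃ S, M.IsClaw S ∧ S.ncard = 2) :
    ∀ k (I : Set α), M.Indep I → I.ncard = k → 2 ^ k - 1 ≤ (M.closure I).ncard := by
  intro k
  induction k with
  | zero => intro I _ _; simp
  | succ k ih =>
    intro I hI hcard
    have hIE := hI.subset_ground
    have hIfin : I.Finite := hfin.subset hIE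
    have hnonempty : I.Nonempty := by
      rw [Set.nonempty_iff_ne_empty]
      rintro rfl
      simp at hcard
    obtain ⟨e, he⟩ := hnonempty
    have hJindep : M.Indep (I \ {e}) := hI.subset diff_subset
    have hJcard : (I \ {e}).ncard = k := by
      rw [Set.ncard_diff_singleton_of_mem he]; omega
    have IH := ih (I \ {e}) hJindep hJcard
    set H := M.closure (I \ {e}) with hH
    have hHE : H ⊆ M.E := M.closure_subset_ground _
    have hHfin : H.Finite := hfin.subset hHE
    have heE : e ∈ M.E := hIE he
    have heH : e ∉ H := hI.notMem_closure_sdiff_of_mem he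
    have hHI : H ⊆ M.closure I := M.closure_subset_closure diff_subset
    have heI : e ∈ M.closure I := M.subset_closure I hIE he
    have hHflat : M.closure H = H := M.closure_closure _
    -- third point on each line through e and f ∈ H
    have hthird : ∀ f ∈ H, ∃ g, g ∈ M.closure {e, f} ∧ g ∉ ({e, f} : Set α) := by
      intro f hf
      have hfE := hHE hf
      have hfe : f ≠ e := fun h => heH (h ▸ hf)
      have hpair : M.Indep {e, f} := hsimple e heE f hfE
      have hnotflat : ¬ M.IsFlat {e, f} := fun hflat =>
        hclaw ⟨{e, f}, ⟨hflat, hpair⟩, Set.ncard_pair (Ne.symm hfe)⟩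
      by_contra hcon
      push_neg at hcon
      apply hnotflat
      have heq : M.closure {e, f} = {e, f} :=
        subset_antisymm hcon (M.subset_closure _ hpair.subset_ground)
      rw [← heq]; exact M.flat_closure' _
    choose! g hg1 hg2 using hthird
    -- basic facts about g f for f ∈ H
    have hgE : ∀ f ∈ H, g f ∈ M.E := fun f hf =>
      M.closure_subset_ground _ (hg1 f hf)
    have hgne : ∀ f ∈ H, g f ≠ e ∧ g f ≠ f := by
      intro f hf
      have := hg2 f hf
      simp only [mem_insert_iff, mem_singleton_iff, not_or] at this
      exact this
    have hgnotH : ∀ f ∈ H, g f ∉ H := by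
      intro f hf hgH
      have hfE := hHE hf
      have hgf : g f ∉ M.closure {f} :=
        pair_not_mem_closure (hsimple f hfE (g f) (hgE f hf)) (Ne.symm (hgne f hf).2)
      have hg1' : g f ∈ M.closure (insert e {f}) := hg1 f hf
      have hexch := Matroid.mem_closure_insert hgf hg1'
      -- e ∈ closure (insert (g f) {f}) ⊆ closure H = H
      have : e ∈ H := by
        rw [← hHflat]
        refine M.closure_subset_closure ?_ hexch
        intro x hx
        rcases hx with rfl | hx
        · exact hgH
        · rwa [mem_singleton_iff.mp hx]
      exact heH this
    -- injectivity
    have hinj : Set.InjOn g H := by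
      intro f hf f' hf' hgg
      by_contra hne
      have hfE := hHE hf
      have hf'E := hHE hf'
      have hgf' : g f' ∉ M.closure {e} :=
        pair_not_mem_closure (hsimple e heE (g f') (hgE f' hf')) (Ne.symm (hgne f' hf').1)
      have hg1'' : g f' ∈ M.closure (insert f' {e}) := by
        rw [show (insert f' {e} : Set α) = {e, f'} from Set.pair_comm f' e]
        exact hg1 f' hf'
      have hexch' := Matroid.mem_closure_insert hgf' hg1''
      -- f' ∈ closure (insert (g f') {e}) = closure {g f, e} ⊆ closure {e, f}
      have hf'cl : f' ∈ M.closure (insert e {f}) := by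
        refine Matroid.closure_subset_closure_of_subset_closure ?_ hexch'
        intro x hx
        rcases hx with rfl | hx
        · rw [← hgg]; exact hg1 f hf
        · rw [mem_singleton_iff.mp hx]
          exact M.subset_closure _ (hsimple e heE f hfE).subset_ground (by simp)
      have hf'f : f' ∉ M.closure {f} :=
        pair_not_mem_closure (hsimple f hfE f' hf'E) hne
      have hexch2 := Matroid.mem_closure_insert hf'f hf'cl
      have : e ∈ H := by
        rw [← hHflat]
        refine M.closure_subset_closure ?_ hexch2
        intro x hx
        rcases hx with rfl | hx
        · exact hf'
        · rwa [mem_singleton_iff.mp hx]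
      exact heH this
    -- counting
    set G := g '' H with hG
    have hGcard : G.ncard = H.ncard := Set.ncard_image_of_injOn hinj
    have hdisj : Disjoint G (insert e H) := by
      rw [Set.disjoint_left]
      rintro x ⟨f, hf, rfl⟩ hx
      rcases hx with rfl | hx
      · exact (hgne f hf).1 rfl
      · exact hgnotH f hf hx
    have hsub : G ∪ insert e H ⊆ M.closure I := by
      rintro x (⟨f, hf, rfl⟩ | hx)
      · refine Matroid.closure_subset_closure_of_subset_closure ?_ (hg1 f hf)
        intro y hy
        rcases hy with rfl | hy
        · exact heI
        · rw [mem_singleton_iff.mp hy]; exact hHI hf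
      · rcases hx with rfl | hx
        · exact heI
        · exact hHI hx
    have hclfin : (M.closure I).Finite := hfin.subset (M.closure_subset_ground I)
    have hGfin : G.Finite := hHfin.image g
    have hcount := Set.ncard_le_ncard hsub hclfin
    rw [Set.ncard_union_eq hdisj hGfin (hHfin.insert e),
      Set.ncard_insert_of_notMem heH hHfin, hGcard] at hcount
    have hpow : 2 ^ (k + 1) = 2 * 2 ^ k := by ring
    omega

/-- A finite simple matroid of rank `r` with no `2`-claw has at least `2^r − 1` elements. -/
theorem two_claw_free_lower_bound {α : Type*} (r : ℕ) (M : Matroid α)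
    (hfin : M.E.Finite) (hsimple : M.IsSimple)
    (hrank : ∃ B, M.IsBase B ∧ B.ncard = r)
    (hclaw : ¬ ∃ S, M.IsClaw S ∧ S.ncard = 2) :
    2 ^ r - 1 ≤ M.E.ncard := by
  obtain ⟨B, hB, hBcard⟩ := hrank
  have := two_claw_key M hfin hsimple hclaw r B hB.indep hBcard
  rwa [hB.closure_eq] at this
end

section
/- Let r ≥ t ≥ 1 be integers, and let M be a finite loopless matroid of rank r with no (t+1)-claw whose ground set has exactly 2r − t elements. Then there exist pairwise disjoint sets C_1, …, C_{r−t}, each a circuit of M, and a set K disjoint from all C_i, each of whose elements is a coloop of M, such that the ground set of M equals K ∪ C_1 ∪ ⋯ ∪ C_{r−t} and the rank r of M equals |K| + Σ_{i=1}^{r−t} (|C_i| − 1). (That is, M is the direct sum of r − t circuits and some number of coloops.) -/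
/-- A matroid is *loopless* if every single element of the ground set is independent. -/
def Matroid.IsLoopless {α : Type*} (M : Matroid α) : Prop :=
  ∀ e ∈ M.E, M.Indep {e}

/-- A *circuit* of a matroid is a minimal dependent set. -/
def Matroid.IsCircuit' {α : Type*} (M : Matroid α) (C : Set α) : Prop :=
  M.Dep C ∧ ∀ D ⊂ C, M.Indep D

/-- An element is a *coloop* if it belongs to every base. -/
def Matroid.IsColoopElem {α : Type*} (M : Matroid α) (e : α) : Prop :=
  ∀ B, M.IsBase B → e ∈ B

private lemma Matroid.flat_of_closure_eq_self {α : Type*} {M : Matroid α} {S : Set α}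
    (h : M.closure S = S) : M.IsFlat S := by
  refine ⟨fun I X hIS hIX => ?_, h ▸ M.closure_subset_ground S⟩
  have h2 : X ⊆ M.closure I := hIX.subset_closure
  rwa [hIS.closure_eq_closure, h] at h2

private lemma Matroid.exists_isCircuit_subset {α : Type*} {M : Matroid α} :
    ∀ (n : ℕ) (X : Set α), X.Finite → X.ncard ≤ n → M.Dep X →
      ∃ C, C ⊆ X ∧ M.IsCircuit' C := by
  intro n
  induction n with
  | zero =>
    intro X hXfin hle hdep
    exfalso
    rw [Nat.le_zero, Set.ncard_eq_zero hXfin] at hle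
    exact hdep.not_indep (hle ▸ M.empty_indep)
  | succ n ih =>
    intro X hXfin hle hdep
    by_cases h : ∀ D, D ⊂ X → M.Indep D
    · exact ⟨X, Set.Subset.rfl, hdep, h⟩
    · push_neg at h
      obtain ⟨D, hDX, hD⟩ := h
      have hDdep : M.Dep D := Matroid.dep_of_not_indep hD (hDX.subset.trans hdep.subset_ground)
      have hcard := Set.ncard_lt_ncard hDX hXfin
      exact (ih D (hXfin.subset hDX.subset) (by omega) hDdep).imp
        fun C hC => ⟨hC.1.trans hDX.subset, hC.2⟩

private lemma ncard_biUnion_eq {α β : Type*} [DecidableEq β] (s : Finset β) (f : β → Set α)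
    (hf : ∀ b ∈ s, (f b).Finite)
    (hdisj : ∀ b ∈ s, ∀ c ∈ s, b ≠ c → Disjoint (f b) (f c)) :
    (⋃ b ∈ s, f b).ncard = ∑ b ∈ s, (f b).ncard := by
  induction s using Finset.induction_on with
  | empty => simp
  | @insert a s ha ih =>
    rw [Finset.set_biUnion_insert, Finset.sum_insert ha,
      Set.ncard_union_eq ?_ (hf a (Finset.mem_insert_self a s)) ?_,
      ih (fun b hb => hf b (Finset.mem_insert_of_mem hb))
        (fun b hb c hc hbc => hdisj b (Finset.mem_insert_of_mem hb)
          c (Finset.mem_insert_of_mem hc) hbc)]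
    · rw [Set.disjoint_iUnion_right]
      intro i
      rw [Set.disjoint_iUnion_right]
      intro hi
      exact hdisj a (Finset.mem_insert_self a s) i (Finset.mem_insert_of_mem hi)
        (fun h => ha (h ▸ hi))
    · exact Set.Finite.biUnion s.finite_toSet
        (fun b hb => hf b (Finset.mem_insert_of_mem hb))

/-- For `r ≥ t ≥ 1`, a finite loopless rank-`r` matroid with no `(t+1)`-claw and exactly
`2r − t` elements is the direct sum of `r − t` circuits and some number of coloops:
there are pairwise disjoint circuits `C_1, …, C_{r−t}` and a disjoint set `K` of coloops
covering the ground set with `r = |K| + Σ (|C_i| − 1)`. -/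
theorem loopless_claw_free_equality {α : Type*} (r t : ℕ) (ht : 1 ≤ t) (hrt : t ≤ r)
    (M : Matroid α) (hfin : M.E.Finite) (hloopless : M.IsLoopless)
    (hrank : ∃ B, M.IsBase B ∧ B.ncard = r)
    (hclaw : ¬ ∃ S, M.IsClaw S ∧ S.ncard = t + 1)
    (hcard : M.E.ncard = 2 * r - t) :
    ∃ (C : Fin (r - t) → Set α) (K : Set α),
      (∀ i, M.IsCircuit' (C i)) ∧
      (Pairwise (Function.onFun Disjoint C)) ∧
      (∀ i, Disjoint K (C i)) ∧
      (∀ e ∈ K, M.IsColoopElem e) ∧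
      (K ∪ ⋃ i, C i) = M.E ∧
      r = K.ncard + ∑ i, ((C i).ncard - 1) := by
  classical
  obtain ⟨B₀, hB₀, hB₀card⟩ := hrank
  have hbase_card : ∀ B', M.IsBase B' → B'.ncard = r := fun B' hB' => by
    rw [hB'.ncard_eq_ncard_of_isBase hB₀, hB₀card]
  -- the closure of the empty set is empty
  have hclE : M.closure ∅ = ∅ := by
    ext e
    simp only [Set.mem_empty_iff_false, iff_false]
    intro he
    have heE : e ∈ M.E := M.mem_ground_of_mem_closure he
    have h2 := (M.empty_indep.mem_closure_iff').mp he
    exact h2.2 (by simpa using hloopless e heE)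
  have hclawempty : M.IsClaw ∅ := ⟨Matroid.flat_of_closure_eq_self hclE, M.empty_indep⟩
  -- extending a claw inside a bigger claw
  have hclaw_step : ∀ S G x, M.IsClaw S → G ⊆ S → x ∈ S → x ∉ G →
      M.IsClaw (insert x G) ∧ insert x G ⊆ S := by
    intro S G x hS hGS hxS hxG
    have hsub : insert x G ⊆ S := Set.insert_subset hxS hGS
    have h1 : M.closure (insert x G) ⊆ S := by
      rw [← hS.1.closure]
      exact M.closure_subset_closure hsub
    have h2 : M.Indep (M.closure (insert x G)) := hS.2.subset h1
    have h3 : insert x G ⊆ M.closure (insert x G) :=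
      M.subset_closure _ (hsub.trans hS.1.subset_ground)
    have h4 : M.closure (insert x G) = insert x G := by
      by_contra hne
      have hss : insert x G ⊂ M.closure (insert x G) := h3.ssubset_of_ne (Ne.symm hne)
      have h5 := h2.closure_ssubset_closure hss
      rw [M.closure_closure] at h5
      exact h5.ne rfl
    exact ⟨⟨Matroid.flat_of_closure_eq_self h4, hS.2.subset hsub⟩, hsub⟩
  -- every claw has at most t elements
  have hclaw_le : ∀ S, M.IsClaw S → S.ncard ≤ t := by
    intro S hS
    by_contra hgt
    push_neg at hgt
    have hSfin : S.Finite := hfin.subset hS.1.subset_ground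
    have key : ∀ m, m ≤ t + 1 → ∃ G, G ⊆ S ∧ M.IsClaw G ∧ G.ncard = m := by
      intro m
      induction m with
      | zero => exact fun _ => ⟨∅, Set.empty_subset _, hclawempty, Set.ncard_empty _⟩
      | succ m ih =>
        intro hm
        obtain ⟨G, hGS, hG, hGcard⟩ := ih (by omega)
        have hGfin := hSfin.subset hGS
        have hGneS : G ⊂ S := hGS.ssubset_of_ne (fun h => by rw [h] at hGcard; omega)
        obtain ⟨x, hxS, hxG⟩ := Set.exists_of_ssubset hGneS
        obtain ⟨hclaw', hsub'⟩ := hclaw_step S G x hS hGS hxS hxG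
        exact ⟨insert x G, hsub', hclaw',
          by rw [Set.ncard_insert_of_notMem hxG hGfin, hGcard]⟩
    obtain ⟨G, _, hG, hGc⟩ := key (t + 1) le_rfl
    exact hclaw ⟨G, hG, hGc⟩
  -- a maximum claw F
  have hP0 : ∃ S, M.IsClaw S ∧ S.ncard = 0 := ⟨∅, hclawempty, Set.ncard_empty _⟩
  obtain ⟨F, hF, hFcard⟩ :=
    Nat.findGreatest_spec (P := fun m => ∃ S, M.IsClaw S ∧ S.ncard = m) (Nat.zero_le t) hP0
  have hFmax : ∀ S, M.IsClaw S → S.ncard ≤ F.ncard := fun S hS => hFcard ▸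
    Nat.le_findGreatest (P := fun m => ∃ S, M.IsClaw S ∧ S.ncard = m)
      (hclaw_le S hS) ⟨S, hS, rfl⟩
  set mx := F.ncard with hmxdef
  have hFcard : F.ncard = mx := rfl
  have hmxle : mx ≤ t := hFcard ▸ hclaw_le F hF
  have hFE : F ⊆ M.E := hF.1.subset_ground
  have hFflat : M.closure F = F := hF.1.closure
  have hFindep : M.Indep F := hF.2
  have hFfin : F.Finite := hfin.subset hFE
  -- a base containing F
  obtain ⟨B, hB, hFB⟩ := hFindep.exists_isBase_superset
  have hBE : B ⊆ M.E := hB.subset_ground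
  have hBfin : B.Finite := hfin.subset hBE
  have hBcard : B.ncard = r := hbase_card B hB
  have hBindep : M.Indep B := hB.indep
  have hInsIndep : ∀ g ∈ B, M.Indep (insert g F) := fun g hg =>
    hBindep.subset (Set.insert_subset hg hFB)
  -- every element outside F has a parallel partner over F
  have hpartner : ∀ e, e ∈ M.E → e ∉ F →
      ∃ f, f ∈ M.closure (insert e F) ∧ f ∉ F ∧ f ≠ e := by
    intro e heE heF
    have heFi : M.Indep (insert e F) := by
      rw [hFindep.insert_indep_iff_of_notMem heF, hFflat]
      exact ⟨heE, heF⟩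
    by_cases hcl : M.closure (insert e F) = insert e F
    · exfalso
      have hclaw' : M.IsClaw (insert e F) := ⟨Matroid.flat_of_closure_eq_self hcl, heFi⟩
      have hle := hFmax _ hclaw'
      rw [Set.ncard_insert_of_notMem heF hFfin, hFcard] at hle
      omega
    · have hss : insert e F ⊂ M.closure (insert e F) :=
        (M.subset_closure _ (Set.insert_subset heE hFE)).ssubset_of_ne
          (fun h => hcl h.symm)
      obtain ⟨f, hf1, hf2⟩ := Set.exists_of_ssubset hss
      exact ⟨f, hf1, fun h => hf2 (Set.mem_insert_iff.mpr (Or.inr h)),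
        fun h => hf2 (Set.mem_insert_iff.mpr (Or.inl h))⟩
  -- the partner function q on B \ F
  have hqex : ∀ g : α, ∃ f, g ∈ B \ F →
      f ∈ M.closure (insert g F) ∧ f ∉ F ∧ f ≠ g := by
    intro g
    by_cases hg : g ∈ B \ F
    · obtain ⟨f, hf⟩ := hpartner g (hBE hg.1) hg.2
      exact ⟨f, fun _ => hf⟩
    · exact ⟨g, fun h => absurd h hg⟩
  choose q hq using hqex
  have hqE : ∀ g ∈ B \ F, q g ∈ M.E := fun g hg =>
    M.mem_ground_of_mem_closure (hq g hg).1
  have hqgF : ∀ g ∈ B \ F, q g ∉ insert g F := by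
    intro g hg hmem
    rcases Set.mem_insert_iff.mp hmem with h | h
    · exact (hq g hg).2.2 h
    · exact (hq g hg).2.1 h
  have hdep : ∀ g ∈ B \ F, M.Dep (insert (q g) (insert g F)) := by
    intro g hg
    rw [(hInsIndep g hg.1).insert_dep_iff]
    exact ⟨(hq g hg).1, hqgF g hg⟩
  have hqB : ∀ g ∈ B \ F, q g ∉ B := by
    intro g hg hmem
    exact (hdep g hg).not_indep
      (hBindep.subset (Set.insert_subset hmem (Set.insert_subset hg.1 hFB)))
  -- q is injective on B \ F
  have hqinj : ∀ g ∈ B \ F, ∀ h ∈ B \ F, q g = q h → g = h := by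
    intro g hg h hh hqe
    by_contra hne
    have hfg : q g ∈ M.closure (insert g F) := (hq g hg).1
    have hfh : q g ∈ M.closure (insert h F) := hqe ▸ (hq h hh).1
    have hfclF : q g ∉ M.closure F := by rw [hFflat]; exact (hq g hg).2.1
    have hex : h ∈ M.closure (insert (q g) F) \ M.closure F :=
      Matroid.closure_exchange ⟨hfh, hfclF⟩
    have hsub : M.closure (insert (q g) F) ⊆ M.closure (insert g F) := by
      have h1 : M.closure (insert (q g) (insert g F)) = M.closure (insert g F) :=
        Matroid.closure_insert_eq_of_mem_closure hfg
      rw [← h1]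
      exact M.closure_subset_closure (Set.insert_subset_insert (Set.subset_insert _ _))
    have hhcl : h ∈ M.closure (insert g F) := hsub hex.1
    have hhE : h ∈ M.E := hBE hh.1
    have hnotmem : h ∉ insert g F := by
      intro hmem
      rcases Set.mem_insert_iff.mp hmem with h' | h'
      · exact hne h'.symm
      · exact hh.2 h'
    have hindep2 : M.Indep (insert h (insert g F)) :=
      hBindep.subset (Set.insert_subset hh.1 (Set.insert_subset hg.1 hFB))
    exact ((hInsIndep g hg.1).notMem_closure_iff_of_notMem hnotmem hhE).mpr hindep2 hhcl
  -- cardinality bookkeeping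
  have hTfin : (B \ F).Finite := hBfin.diff (t := F)
  have hTcard : (B \ F).ncard = r - mx := by
    rw [Set.ncard_diff hFB hFfin, hBcard, hFcard]
  have hEBcard : (M.E \ B).ncard = r - t := by
    rw [Set.ncard_diff hBE hBfin, hcard, hBcard]
    omega
  have himg : q '' (B \ F) ⊆ M.E \ B := by
    rintro _ ⟨g, hg, rfl⟩
    exact ⟨hqE g hg, hqB g hg⟩
  have hinjOn : Set.InjOn q (B \ F) := fun a ha b hb hab => hqinj a ha b hb hab
  have himgcard : (q '' (B \ F)).ncard = r - mx := by
    rw [Set.ncard_image_of_injOn hinjOn, hTcard]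
  have hle2 : r - mx ≤ r - t := by
    rw [← himgcard, ← hEBcard]
    exact Set.ncard_le_ncard himg (hfin.diff (t := B))
  have hmxr : mx ≤ r := by
    rw [← hFcard, ← hBcard]
    exact Set.ncard_le_ncard hFB hBfin
  have hmxt : mx = t := by omega
  have himgeq : q '' (B \ F) = M.E \ B :=
    Set.eq_of_subset_of_ncard_le himg (by rw [himgcard, hEBcard, hmxt]) (hfin.diff (t := B))
  -- circuits
  have hCex : ∀ g : α, ∃ C, g ∈ B \ F →
      C ⊆ insert (q g) (insert g F) ∧ M.IsCircuit' C := by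
    intro g
    by_cases hg : g ∈ B \ F
    · obtain ⟨C, hC1, hC2⟩ := Matroid.exists_isCircuit_subset
        ((insert (q g) (insert g F)).ncard) (insert (q g) (insert g F))
        ((hFfin.insert g).insert (q g)) le_rfl (hdep g hg)
      exact ⟨C, fun _ => ⟨hC1, hC2⟩⟩
    · exact ⟨∅, fun h => absurd h hg⟩
  choose Cf hCf using hCex
  have hgC : ∀ g ∈ B \ F, g ∈ Cf g := by
    intro g hg
    by_contra hgCf
    have hsub2 : Cf g ⊆ insert (q g) F := by
      intro x hx
      rcases Set.mem_insert_iff.mp ((hCf g hg).1 hx) with h | h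
      · exact Set.mem_insert_iff.mpr (Or.inl h)
      rcases Set.mem_insert_iff.mp h with h | h
      · exact absurd (h ▸ hx) hgCf
      · exact Set.mem_insert_iff.mpr (Or.inr h)
    have hqFi : M.Indep (insert (q g) F) := by
      rw [hFindep.insert_indep_iff_of_notMem (hq g hg).2.1, hFflat]
      exact ⟨hqE g hg, (hq g hg).2.1⟩
    exact (hCf g hg).2.1.not_indep (hqFi.subset hsub2)
  have hqC : ∀ g ∈ B \ F, q g ∈ Cf g := by
    intro g hg
    by_contra hqCf
    have hsub2 : Cf g ⊆ insert g F := by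
      intro x hx
      rcases Set.mem_insert_iff.mp ((hCf g hg).1 hx) with h | h
      · exact absurd (h ▸ hx) hqCf
      · exact h
    exact (hCf g hg).2.1.not_indep ((hInsIndep g hg.1).subset hsub2)
  have hcirc_cl : ∀ C, M.IsCircuit' C → ∀ x, x ∈ C → x ∈ M.closure (C \ {x}) := by
    intro C hC x hx
    have hss : C \ {x} ⊂ C := Set.sdiff_singleton_ssubset.mpr hx
    have hind := hC.2 _ hss
    have hins : insert x (C \ {x}) = C := by
      rw [Set.insert_diff_singleton, Set.insert_eq_of_mem hx]
    rw [hind.mem_closure_iff]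
    exact Or.inl (by rw [hins]; exact hC.1)
  -- swap bases
  have hswap : ∀ g ∈ B \ F, M.IsBase (insert (q g) (B \ {g})) := by
    intro g hg
    have hBgE : insert (q g) (B \ {g}) ⊆ M.E :=
      Set.insert_subset (hqE g hg) (Set.diff_subset.trans hBE)
    have hfclF : q g ∉ M.closure F := by rw [hFflat]; exact (hq g hg).2.1
    have hgcl : g ∈ M.closure (insert (q g) F) :=
      (Matroid.closure_exchange ⟨(hq g hg).1, hfclF⟩).1
    have hsub3 : insert (q g) F ⊆ insert (q g) (B \ {g}) :=
      Set.insert_subset_insert (fun y hy => ⟨hFB hy, fun h => hg.2 (h ▸ hy)⟩)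
    have hgBg : g ∈ M.closure (insert (q g) (B \ {g})) :=
      M.closure_subset_closure hsub3 hgcl
    have h1 : B ⊆ M.closure (insert (q g) (B \ {g})) := by
      intro y hy
      by_cases hyg : y = g
      · exact hyg ▸ hgBg
      · exact M.subset_closure _ hBgE (Set.mem_insert_iff.mpr (Or.inr ⟨hy, hyg⟩))
    have hspan : M.E ⊆ M.closure (insert (q g) (B \ {g})) := by
      calc M.E = M.closure B := hB.closure_eq.symm
        _ ⊆ M.closure (insert (q g) (B \ {g})) :=
            M.closure_subset_closure_of_subset_closure h1
    have hspanning : M.Spanning (insert (q g) (B \ {g})) := by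
      rw [Matroid.spanning_iff_ground_subset_closure hBgE]
      exact hspan
    obtain ⟨B', hB', hB'sub⟩ := hspanning.exists_isBase_subset
    have hBgcard : (insert (q g) (B \ {g})).ncard = r := by
      rw [Set.ncard_insert_of_notMem (fun h => hqB g hg h.1) (hBfin.diff (t := _)),
        Set.ncard_diff_singleton_of_mem hg.1, hBcard]
      omega
    have heq : B' = insert (q g) (B \ {g}) :=
      Set.eq_of_subset_of_ncard_le hB'sub
        (by rw [hBgcard, hbase_card B' hB']) (hfin.subset hBgE)
    rwa [← heq]
  -- overlapping circuits inside F would give a (t+1)-claw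
  have hDdisj : ∀ g ∈ B \ F, ∀ h ∈ B \ F, g ≠ h →
      ∀ x, x ∈ Cf g → x ∈ Cf h → x ∈ F → False := by
    intro g hg h hh hgh x hxg hxh hxF
    have hWB : insert g (insert h (F \ {x})) ⊆ B :=
      Set.insert_subset hg.1 (Set.insert_subset hh.1 (Set.diff_subset.trans hFB))
    set W := insert g (insert h (F \ {x})) with hWdef
    have hWindep : M.Indep W := hBindep.subset hWB
    have hWE : W ⊆ M.E := hWB.trans hBE
    have hxW : x ∉ W := by
      intro hmem
      rcases Set.mem_insert_iff.mp hmem with h' | h'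
      · exact hg.2 (h' ▸ hxF)
      rcases Set.mem_insert_iff.mp h' with h' | h'
      · exact hh.2 (h' ▸ hxF)
      · exact h'.2 rfl
    have hinsW : insert x W = insert g (insert h F) := by
      rw [hWdef, Set.insert_comm x g, Set.insert_comm x h, Set.insert_diff_singleton,
        Set.insert_eq_of_mem hxF]
    have hxWindep : M.Indep (insert x W) := by
      rw [hinsW]
      exact hBindep.subset (Set.insert_subset hg.1 (Set.insert_subset hh.1 hFB))
    have hxE : x ∈ M.E := hFE hxF
    have hxcl : x ∉ M.closure W := by
      rw [hWindep.notMem_closure_iff_of_notMem hxW hxE]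
      exact hxWindep
    have hclW : M.closure W = W := by
      apply subset_antisymm _ (M.subset_closure W hWE)
      intro y hy
      have hyE : y ∈ M.E := M.mem_ground_of_mem_closure hy
      by_cases hyB : y ∈ B
      · by_cases hyF : y ∈ F
        · by_cases hyx : y = x
          · exact absurd (hyx ▸ hy) hxcl
          · exact Set.mem_insert_iff.mpr (Or.inr (Set.mem_insert_iff.mpr
              (Or.inr ⟨hyF, hyx⟩)))
        · by_cases hyg : y = g
          · exact Set.mem_insert_iff.mpr (Or.inl hyg)
          by_cases hyh : y = h
          · exact Set.mem_insert_iff.mpr (Or.inr (Set.mem_insert_iff.mpr (Or.inl hyh)))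
          · exfalso
            have hyW : y ∉ W := by
              intro hmem
              rcases Set.mem_insert_iff.mp hmem with h' | h'
              · exact hyg h'
              rcases Set.mem_insert_iff.mp h' with h' | h'
              · exact hyh h'
              · exact hyF h'.1
            have hind3 : M.Indep (insert y W) :=
              hBindep.subset (Set.insert_subset hyB hWB)
            exact ((hWindep.notMem_closure_iff_of_notMem hyW hyE).mpr hind3) hy
      · have hyq : y ∈ q '' (B \ F) := by rw [himgeq]; exact ⟨hyE, hyB⟩
        obtain ⟨g', hg', rfl⟩ := hyq
        by_cases hgg : g' = g
        · exfalso
          subst hgg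
          have hsubC : Cf g' \ {x} ⊆ M.closure W := by
            intro z hz
            rcases Set.mem_insert_iff.mp ((hCf g' hg').1 hz.1) with h' | h'
            · exact h' ▸ hy
            rcases Set.mem_insert_iff.mp h' with h' | h'
            · exact M.subset_closure W hWE (h' ▸ Set.mem_insert_iff.mpr (Or.inl rfl))
            · exact M.subset_closure W hWE (Set.mem_insert_iff.mpr (Or.inr
                (Set.mem_insert_iff.mpr (Or.inr ⟨h', hz.2⟩))))
          exact hxcl ((M.closure_subset_closure_of_subset_closure hsubC)
            (hcirc_cl _ (hCf g' hg').2 x hxg))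
        by_cases hgh' : g' = h
        · exfalso
          subst hgh'
          have hsubC : Cf g' \ {x} ⊆ M.closure W := by
            intro z hz
            rcases Set.mem_insert_iff.mp ((hCf g' hg').1 hz.1) with h' | h'
            · exact h' ▸ hy
            rcases Set.mem_insert_iff.mp h' with h' | h'
            · exact M.subset_closure W hWE (h' ▸ Set.mem_insert_iff.mpr
                (Or.inr (Set.mem_insert_iff.mpr (Or.inl rfl))))
            · exact M.subset_closure W hWE (Set.mem_insert_iff.mpr (Or.inr
                (Set.mem_insert_iff.mpr (Or.inr ⟨h', hz.2⟩))))
          exact hxcl ((M.closure_subset_closure_of_subset_closure hsubC)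
            (hcirc_cl _ (hCf g' hg').2 x hxh))
        · exfalso
          have hyW : q g' ∉ W := fun hmem => (hqB g' hg') (hWB hmem)
          have hWBg' : W ⊆ B \ {g'} := by
            intro z hz
            refine ⟨hWB hz, ?_⟩
            rcases Set.mem_insert_iff.mp hz with h' | h'
            · exact fun hc => hgg (by rw [← hc, ← h'])
            rcases Set.mem_insert_iff.mp h' with h' | h'
            · exact fun hc => hgh' (by rw [← hc, ← h'])
            · exact fun hc => hg'.2 (by rw [← hc]; exact h'.1)
          have hind4 : M.Indep (insert (q g') W) :=
            (hswap g' hg').indep.subset (Set.insert_subset_insert hWBg')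
          exact ((hWindep.notMem_closure_iff_of_notMem hyW hyE).mpr hind4) hy
    have hWclaw : M.IsClaw W := ⟨Matroid.flat_of_closure_eq_self hclW, hWindep⟩
    have h1 : g ∉ insert h (F \ {x}) := by
      intro hmem
      rcases Set.mem_insert_iff.mp hmem with h' | h'
      · exact hgh h'
      · exact hg.2 h'.1
    have h2 : h ∉ F \ {x} := fun hm => hh.2 hm.1
    have hWcard : W.ncard = t + 1 := by
      rw [hWdef, Set.ncard_insert_of_notMem h1 ((hFfin.diff (t := _)).insert h),
        Set.ncard_insert_of_notMem h2 (hFfin.diff (t := _)),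
        Set.ncard_diff_singleton_of_mem hxF, hFcard, hmxt]
      omega
    exact hclaw ⟨W, hWclaw, hWcard⟩
  -- elements of F in no circuit are coloops
  have hcoloop : ∀ x, x ∈ F → (∀ g ∈ B \ F, x ∉ Cf g) → M.IsColoopElem x := by
    intro x hxF hxC
    have hxB : x ∈ B := hFB hxF
    have hxcl : x ∉ M.closure (B \ {x}) := hBindep.notMem_closure_diff_of_mem hxB
    have hspan2 : M.E \ {x} ⊆ M.closure (B \ {x}) := by
      intro y hy
      by_cases hyB : y ∈ B
      · exact M.subset_closure _ (Set.diff_subset.trans hBE) ⟨hyB, hy.2⟩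
      · have hyq : y ∈ q '' (B \ F) := by rw [himgeq]; exact ⟨hy.1, hyB⟩
        obtain ⟨g, hg, rfl⟩ := hyq
        have h1 : q g ∈ M.closure (Cf g \ {q g}) := hcirc_cl _ (hCf g hg).2 _ (hqC g hg)
        have h2 : Cf g \ {q g} ⊆ B \ {x} := by
          intro z hz
          refine ⟨?_, fun hzx => hxC g hg (hzx ▸ hz.1)⟩
          rcases Set.mem_insert_iff.mp ((hCf g hg).1 hz.1) with h' | h'
          · exact absurd h' hz.2
          rcases Set.mem_insert_iff.mp h' with h' | h'
          · exact h' ▸ hg.1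
          · exact hFB h'
        exact M.closure_subset_closure h2 h1
    intro B' hB'
    by_contra hxB'
    have hB'sub : B' ⊆ M.E \ {x} := fun z hz =>
      ⟨hB'.subset_ground hz, fun h => hxB' (h ▸ hz)⟩
    have hsp : M.E ⊆ M.closure (B \ {x}) := by
      calc M.E = M.closure B' := hB'.closure_eq.symm
        _ ⊆ M.closure (M.E \ {x}) := M.closure_subset_closure hB'sub
        _ ⊆ M.closure (M.closure (B \ {x})) := M.closure_subset_closure hspan2
        _ = M.closure (B \ {x}) := M.closure_closure (B \ {x})
    exact hxcl (hsp (hFE hxF))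
  -- pairwise disjointness of the circuits
  have hCdisj : ∀ g ∈ B \ F, ∀ h ∈ B \ F, g ≠ h → Disjoint (Cf g) (Cf h) := by
    intro g hg h hh hgh
    rw [Set.disjoint_left]
    intro z hzg hzh
    rcases Set.mem_insert_iff.mp ((hCf g hg).1 hzg) with h1 | h1
    · rcases Set.mem_insert_iff.mp ((hCf h hh).1 hzh) with h2 | h2
      · exact hgh (hqinj g hg h hh (by rw [← h1, ← h2]))
      rcases Set.mem_insert_iff.mp h2 with h2 | h2
      · exact hqB g hg (by rw [h1] at h2; rw [h2]; exact hh.1)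
      · exact hqB g hg (by rw [h1] at h2; exact hFB h2)
    rcases Set.mem_insert_iff.mp h1 with h1 | h1
    · rcases Set.mem_insert_iff.mp ((hCf h hh).1 hzh) with h2 | h2
      · exact hqB h hh (by rw [← h2, h1]; exact hg.1)
      rcases Set.mem_insert_iff.mp h2 with h2 | h2
      · exact hgh (by rw [← h1, ← h2])
      · exact hg.2 (h1 ▸ h2)
    · rcases Set.mem_insert_iff.mp ((hCf h hh).1 hzh) with h2 | h2
      · exact hqB h hh (by rw [← h2]; exact hFB h1)
      rcases Set.mem_insert_iff.mp h2 with h2 | h2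
      · exact hh.2 (h2 ▸ h1)
      · exact hDdisj g hg h hh hgh z hzg hzh h1
  -- indexing the circuits by Fin (r - t)
  have hTfc : hTfin.toFinset.card = r - t := by
    rw [← Set.ncard_eq_toFinset_card _ hTfin, hTcard, hmxt]
  have hcardcoe : Fintype.card {x // x ∈ hTfin.toFinset} = r - t := by
    rw [Fintype.card_coe]; exact hTfc
  set eqv : {x // x ∈ hTfin.toFinset} ≃ Fin (r - t) :=
    Fintype.equivFinOfCardEq hcardcoe with heqv
  have hmem : ∀ i : Fin (r - t), (eqv.symm i).1 ∈ B \ F := fun i =>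
    hTfin.mem_toFinset.mp (eqv.symm i).2
  set Cidx : Fin (r - t) → Set α := fun i => Cf ((eqv.symm i).1) with hCidx
  set K : Set α := F \ ⋃ i, Cidx i with hK
  have hCidx_eq : ∀ g (hg : g ∈ B \ F), Cf g = Cidx (eqv ⟨g, hTfin.mem_toFinset.mpr hg⟩) := by
    intro g hg
    simp only [hCidx, Equiv.symm_apply_apply]
  have hcircs : ∀ i, M.IsCircuit' (Cidx i) := fun i => (hCf _ (hmem i)).2
  have hKdisj : ∀ i, Disjoint K (Cidx i) := by
    intro i
    rw [Set.disjoint_left]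
    intro z hz hz2
    exact hz.2 (Set.mem_iUnion.mpr ⟨i, hz2⟩)
  have hKcoloop : ∀ e ∈ K, M.IsColoopElem e := by
    intro e he
    refine hcoloop e he.1 ?_
    intro g hg hecf
    exact he.2 (Set.mem_iUnion.mpr ⟨eqv ⟨g, hTfin.mem_toFinset.mpr hg⟩, (hCidx_eq g hg) ▸ hecf⟩)
  have hcover : K ∪ ⋃ i, Cidx i = M.E := by
    apply subset_antisymm
    · rintro z (hz | hz)
      · exact hFE hz.1
      · obtain ⟨i, hi⟩ := Set.mem_iUnion.mp hz
        exact (hcircs i).1.subset_ground hi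
    · intro y hyE
      by_cases hyU : y ∈ ⋃ i, Cidx i
      · exact Or.inr hyU
      by_cases hyB : y ∈ B
      · by_cases hyF : y ∈ F
        · exact Or.inl ⟨hyF, hyU⟩
        · exfalso
          apply hyU
          have hyT : y ∈ B \ F := ⟨hyB, hyF⟩
          exact Set.mem_iUnion.mpr ⟨eqv ⟨y, hTfin.mem_toFinset.mpr hyT⟩,
            (hCidx_eq y hyT) ▸ hgC y hyT⟩
      · exfalso
        apply hyU
        have hyq : y ∈ q '' (B \ F) := by rw [himgeq]; exact ⟨hyE, hyB⟩
        obtain ⟨g, hg, rfl⟩ := hyq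
        exact Set.mem_iUnion.mpr ⟨eqv ⟨g, hTfin.mem_toFinset.mpr hg⟩,
          (hCidx_eq g hg) ▸ hqC g hg⟩
  -- cardinality count
  have hCfinite : ∀ i, (Cidx i).Finite := fun i =>
    hfin.subset (hcircs i).1.subset_ground
  have hUcard : (⋃ i, Cidx i).ncard = ∑ i, (Cidx i).ncard := by
    have h1 : (⋃ i, Cidx i) = ⋃ i ∈ (Finset.univ : Finset (Fin (r - t))), Cidx i := by
      simp
    rw [h1, ncard_biUnion_eq Finset.univ Cidx (fun b _ => hCfinite b) ?_]
    intro b _ c _ hbc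
    refine hCdisj _ (hmem b) _ (hmem c) ?_
    intro hcoe
    exact hbc (by
      have : eqv.symm b = eqv.symm c := Subtype.ext hcoe
      simpa using congrArg eqv this)
  have hKfin : K.Finite := hFfin.subset Set.diff_subset
  have hUfin : (⋃ i, Cidx i).Finite := Set.finite_iUnion hCfinite
  have hKUdisj : Disjoint K (⋃ i, Cidx i) := by
    rw [Set.disjoint_left]
    intro z hz hz2
    exact hz.2 hz2
  have hEcard2 : K.ncard + ∑ i, (Cidx i).ncard = 2 * r - t := by
    rw [← hUcard, ← Set.ncard_union_eq hKUdisj hKfin hUfin, hcover, hcard]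
  have hCge1 : ∀ i, 1 ≤ (Cidx i).ncard := by
    intro i
    rw [Nat.one_le_iff_ne_zero]
    intro h0
    rw [Set.ncard_eq_zero (hCfinite i)] at h0
    have hmem' : (eqv.symm i).1 ∈ Cidx i := hgC _ (hmem i)
    rw [h0] at hmem'
    exact hmem'
  have hsum : ∑ i, ((Cidx i).ncard - 1) + (r - t) = ∑ i, (Cidx i).ncard := by
    have hcongr : ∑ i : Fin (r - t), ((Cidx i).ncard - 1 + 1) = ∑ i, (Cidx i).ncard :=
      Finset.sum_congr rfl fun i _ => by have := hCge1 i; omega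
    rw [← hcongr, Finset.sum_add_distrib, Finset.sum_const, Finset.card_univ,
      Fintype.card_fin, smul_eq_mul, mul_one]
  refine ⟨Cidx, K, hcircs, ?_, hKdisj, hKcoloop, hcover, ?_⟩
  · intro i j hij
    refine hCdisj _ (hmem i) _ (hmem j) ?_
    intro hcoe
    exact hij (by
      have : eqv.symm i = eqv.symm j := Subtype.ext hcoe
      simpa using congrArg eqv this)
  · omega
end

section
/- Let t ≥ 1 be an integer and let M be a simple matroid. Suppose Z is a flat of M of rank t + 1 such that Z is finite with at most t + 2 elements. Then M has a t-claw, i.e., a t-element set that is both a flat of M and independent in M. -/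
private lemma flat_of_closure_eq_s10 {α : Type*} {M : Matroid α} {F : Set α}
    (hF : M.closure F = F) (hFE : F ⊆ M.E) : M.IsFlat F := by
  refine ⟨fun I X hIF hIX ↦ ?_, hFE⟩
  have h1 : M.closure I = M.closure F := hIF.closure_eq_closure
  have h2 : M.closure I = M.closure X := hIX.closure_eq_closure
  have hX : X ⊆ M.closure X := M.subset_closure X hIX.subset_ground
  rw [← h2, h1, hF] at hX
  exact hX

/-- If a simple matroid has a finite rank-`(t+1)` flat with at most `t+2` elements
(`t ≥ 1`), then it has a `t`-claw. -/
theorem t_claw_of_small_flat {α : Type*} (t : ℕ) (ht : 1 ≤ t) (M : Matroid α)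
    (hsimple : M.IsSimple) (Z : Set α) (hZflat : M.IsFlat Z) (hZfin : Z.Finite)
    (hZrank : ∃ I, M.IsBasis I Z ∧ I.ncard = t + 1)
    (hZcard : Z.ncard ≤ t + 2) :
    ∃ S, M.IsClaw S ∧ S.ncard = t := by
  obtain ⟨I, hI, hIcard⟩ := hZrank
  have hIZ : I ⊆ Z := hI.subset
  have hIfin : I.Finite := hZfin.subset hIZ
  have hIE : I ⊆ M.E := hI.indep.subset_ground
  have hclI : M.closure I = Z := by rw [hI.closure_eq_closure, hZflat.closure]
  -- the key step: if removing `e` from `I` leaves nothing outside `I` in the closure,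
  -- then `I \ {e}` is a `t`-claw.
  have key : ∀ e ∈ I, (∀ x, x ∈ Z → x ∉ I → x ∉ M.closure (I \ {e})) →
      ∃ S, M.IsClaw S ∧ S.ncard = t := by
    intro e he hx
    have hJE : I \ {e} ⊆ M.E := Set.diff_subset.trans hIE
    have hcl : M.closure (I \ {e}) = I \ {e} := by
      apply subset_antisymm _ (M.subset_closure _ hJE)
      intro x hxJ
      have hxZ : x ∈ Z := by
        rw [← hclI]
        exact M.closure_subset_closure Set.diff_subset hxJ
      by_cases hxI : x ∈ I
      · rcases eq_or_ne x e with rfl | hne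
        · exact absurd hxJ (hI.indep.notMem_closure_diff_of_mem he)
        · exact ⟨hxI, hne⟩
      · exact absurd hxJ (hx x hxZ hxI)
    refine ⟨I \ {e}, ⟨flat_of_closure_eq_s10 hcl hJE, hI.indep.subset Set.diff_subset⟩, ?_⟩
    rw [Set.ncard_diff_singleton_of_mem he, hIcard]
    omega
  by_cases hZI : Z ⊆ I
  · -- Z = I : remove any element of I
    have hne : I.Nonempty := by
      rw [Set.nonempty_iff_ne_empty]
      intro h
      rw [h, Set.ncard_empty] at hIcard
      omega
    obtain ⟨e, he⟩ := hne
    exact key e he (fun x hxZ hxI _ ↦ hxI (hZI hxZ))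
  · obtain ⟨z, hzZ, hzI⟩ := Set.not_subset.1 hZI
    have hzE : z ∈ M.E := hZflat.subset_ground hzZ
    -- Z \ I = {z} by cardinality
    have hZsub : ∀ x, x ∈ Z → x ∉ I → x = z := by
      intro x hxZ hxI
      by_contra hne
      have hsub : insert z (insert x I) ⊆ Z := by
        refine Set.insert_subset hzZ (Set.insert_subset hxZ hIZ)
      have hc1 : (insert x I).ncard = t + 2 := by
        rw [Set.ncard_insert_of_notMem hxI hIfin, hIcard]
      have hzni : z ∉ insert x I := by
        simp only [Set.mem_insert_iff, not_or]
        exact ⟨fun h ↦ hne h.symm, hzI⟩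
      have hc2 : (insert z (insert x I)).ncard = t + 3 := by
        rw [Set.ncard_insert_of_notMem hzni (hIfin.insert x), hc1]
      have := Set.ncard_le_ncard hsub hZfin
      omega
    -- take a minimal subset K of I whose closure contains z
    have hzclI : z ∈ M.closure I := by rw [hclI]; exact hzZ
    set s : Set (Set α) := {K | K ⊆ I ∧ z ∈ M.closure K} with hs_def
    have hsfin : s.Finite := (hIfin.finite_subsets).subset (fun K hK ↦ hK.1)
    have hsne : s.Nonempty := ⟨I, Set.Subset.rfl, hzclI⟩
    obtain ⟨K, hKs, hKmin'⟩ := hsfin.exists_minimal hsne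
    have hKmin : ∀ K' ∈ s, id K' ≤ id K → id K = id K' :=
      fun K' h h' ↦ le_antisymm (hKmin' h h') h'
    obtain ⟨hKI, hzK⟩ := hKs
    -- K is nonempty since z is not a loop
    have hKne : K.Nonempty := by
      rw [Set.nonempty_iff_ne_empty]
      rintro rfl
      have hzs : M.Indep {z} := by
        have := hsimple z hzE z hzE
        simpa using this
      have := hzs.notMem_closure_diff_of_mem (Set.mem_singleton z)
      simp only [Set.diff_self] at this
      exact this hzK
    obtain ⟨e, heK⟩ := hKne
    have heI : e ∈ I := hKI heK
    -- z is not in the closure of K \ {e}, by minimality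
    have hzKe : z ∉ M.closure (K \ {e}) := by
      intro hmem
      have : K = K \ {e} :=
        hKmin (K \ {e}) ⟨Set.diff_subset.trans hKI, hmem⟩ Set.diff_subset
      exact (this ▸ heK).2 rfl
    apply key e heI
    intro x hxZ hxI hmem
    rw [hZsub x hxZ hxI] at hmem
    -- exchange: e ∈ closure (insert z (K \ {e}))
    have hzKcl : z ∈ M.closure (insert e (K \ {e})) := by
      rwa [Set.insert_diff_singleton, Set.insert_eq_of_mem heK]
    have hex := Matroid.closure_exchange ⟨hzKcl, hzKe⟩
    have he1 : e ∈ M.closure (insert z (I \ {e})) :=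
      M.closure_subset_closure
        (Set.insert_subset_insert (Set.diff_subset_diff_left hKI)) hex.1
    rw [Matroid.closure_insert_eq_of_mem_closure hmem] at he1
    exact hI.indep.notMem_closure_diff_of_mem heI he1
end

section
/- Let n ≥ 1 and t ≥ 1 be integers and let G be a simple graph on n vertices such that no forest on 2t+1 vertices is an induced subgraph of G, i.e., for every set S of 2t+1 vertices the induced subgraph G[S] is not acyclic. Then the number of edges of G is at least g(n,t), where g is defined by g(n,t) = 0 for n < 2t, g(n,t) = 3(n − 2t) for 2t ≤ n ≤ 4t, and g(n,t) = g(n−1,t) + ⌈n/t⌉ − 1 for n > 4t. -/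
/-- The extremal function `g(n,t)`: `g(n,t) = 0` for `n < 2t`, `g(n,t) = 3(n − 2t)` for
`2t ≤ n ≤ 4t`, and `g(n,t) = g(n−1,t) + ⌈n/t⌉ − 1` for `n > 4t`. -/
def g (t : ℕ) : ℕ → ℕ
  | 0 => 0
  | n + 1 =>
    if n + 1 < 2 * t then 0
    else if n + 1 ≤ 4 * t then 3 * (n + 1 - 2 * t)
    else g t n + (n + 1 + t - 1) / t - 1

namespace ClawFreeAux

open Finset SimpleGraph

set_option linter.unusedVariables false
set_option linter.unusedSectionVars false

lemma g_succ (t n : ℕ) : g t (n+1) =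
    if n + 1 < 2 * t then 0
    else if n + 1 ≤ 4 * t then 3 * (n + 1 - 2 * t)
    else g t n + (n + 1 + t - 1) / t - 1 := rfl

lemma g_zero {t n : ℕ} (ht : 1 ≤ t) (h : n ≤ 2*t) : g t n = 0 := by
  cases n with
  | zero => rfl
  | succ m =>
    rw [g_succ]
    split_ifs with h1 h2
    · rfl
    · omega
    · omega

lemma g_mid {t n : ℕ} (h1 : 2*t < n) (h2 : n ≤ 4*t) : g t n = 3*(n - 2*t) := by
  cases n with
  | zero => omega
  | succ m =>
    rw [g_succ]
    split_ifs <;> omega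

lemma g_mid_step {t n : ℕ} (ht : 1 ≤ t) (h1 : 2*t < n) (h2 : n ≤ 4*t) :
    g t n ≤ g t (n-1) + 3 := by
  rcases Nat.lt_or_ge (2*t) (n-1) with h3 | h3
  · rw [g_mid h1 h2, g_mid h3 (by omega)]
    omega
  · rw [g_mid h1 h2, g_zero ht (by omega)]
    omega

lemma g_high {t n : ℕ} (ht : 1 ≤ t) (h : 4*t < n) :
    g t n = g t (n-1) + ((n + t - 1)/t - 1) := by
  cases n with
  | zero => omega
  | succ m =>
    rw [g_succ]
    have h5 : 5 ≤ (m + 1 + t - 1)/t := by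
      rw [Nat.le_div_iff_mul_le (by omega)]
      omega
    split_ifs <;> simp only [Nat.add_sub_cancel] <;> omega

private lemma list_getLast?_head {α : Type*} {a : α} {l : List α} (h : (a :: l).Nodup)
    (h2 : (a :: l).getLast? = some a) : l = [] := by
  cases l with
  | nil => rfl
  | cons c l' =>
    rw [List.getLast?_cons_cons] at h2
    rw [List.nodup_cons] at h
    exact absurd (List.mem_of_getLast? h2) h.1

lemma cycle_decomp {W : Type*} {G' : SimpleGraph W} {vv : W} (c : G'.Walk vv vv)
    (hc : c.IsCycle) :
    ∃ x y : W, G'.Adj vv x ∧ G'.Adj vv y ∧ x ≠ y ∧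
      (∃ z, G'.Adj x z ∧ z ≠ vv) ∧ (∃ w, G'.Adj y w ∧ w ≠ vv) := by
  have hlen := hc.three_le_length
  have hnd : c.edges.Nodup := hc.isCircuit.isTrail.edges_nodup
  cases c with
  | nil => simp at hlen
  | @cons _ x' _ h p =>
    obtain ⟨y', q, h', hqe⟩ := SimpleGraph.Walk.exists_cons_eq_concat h p
    -- basic lengths
    have hplen : 2 ≤ p.length := by
      simp only [SimpleGraph.Walk.length_cons] at hlen; omega
    have hqlen : 2 ≤ q.length := by
      have : (SimpleGraph.Walk.cons h p).length = q.length + 1 := by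
        rw [hqe, SimpleGraph.Walk.concat_eq_append]
        simp
      simp only [SimpleGraph.Walk.length_cons] at this; omega
    have hce : (SimpleGraph.Walk.cons h p).edges = s(vv, x') :: p.edges := by simp
    have hce' : (SimpleGraph.Walk.cons h p).edges = q.edges ++ [s(y', vv)] := by
      rw [hqe, SimpleGraph.Walk.concat_eq_append]
      simp [SimpleGraph.Walk.edges_append]
    -- x' ≠ y'
    have hpe_ne : p.edges ≠ [] := by
      intro h0
      have := p.length_edges
      rw [h0] at this; simp at this; omega
    have hxy : x' ≠ y' := by
      intro heq
      have h1 : (SimpleGraph.Walk.cons h p).edges.getLast? = some (s(y', vv)) := by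
        rw [hce']
        exact List.getLast?_concat
      have h2 : (s(vv, x') :: p.edges).getLast? = some (s(vv, x')) := by
        rw [← hce, h1, heq, Sym2.eq_swap]
      exact hpe_ne (list_getLast?_head (hce ▸ hnd) h2)
    -- neighbor z of x' away from vv
    obtain ⟨z', h2, p2⟩ : ∃ z' , G'.Adj x' z' ∧ ∃ p2 : G'.Walk z' vv, p.edges = s(x', z') :: p2.edges := by
      cases p with
      | nil => simp at hplen
      | @cons _ z' _ h2 p2 => exact ⟨z', h2, p2, by simp⟩
    obtain ⟨p2, hp2⟩ := p2
    have hz : z' ≠ vv := by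
      intro heq
      rw [hce, hp2] at hnd
      rw [List.nodup_cons] at hnd
      apply hnd.1
      have hsw : s(vv, x') = s(x', z') := by rw [heq]; exact Sym2.eq_swap
      rw [hsw]
      exact List.mem_cons_self
    -- neighbor w of y' away from vv
    obtain ⟨w', h4, hqe2⟩ : ∃ w', G'.Adj w' y' ∧ ∃ q3 : G'.Walk vv w',
        q.edges = q3.edges ++ [s(w', y')] := by
      cases q with
      | nil => simp at hqlen
      | @cons _ m _ hm qm =>
        obtain ⟨w', q3, h4, hq4⟩ := SimpleGraph.Walk.exists_cons_eq_concat hm qm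
        refine ⟨w', h4, q3, ?_⟩
        rw [hq4, SimpleGraph.Walk.concat_eq_append]
        simp [SimpleGraph.Walk.edges_append]
    obtain ⟨q3, hq3⟩ := hqe2
    have hw : w' ≠ vv := by
      intro heq
      rw [hce'] at hnd
      have hnotin : s(y', vv) ∉ q.edges := by
        have hdisj := List.disjoint_of_nodup_append hnd
        intro hmem
        exact hdisj hmem (List.mem_singleton_self _)
      apply hnotin
      rw [hq3]
      apply List.mem_append_right
      have hsw : s(y', vv) = s(w', y') := by rw [heq]; exact Sym2.eq_swap
      rw [hsw]
      exact List.mem_singleton_self _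
    exact ⟨x', y', h, h'.symm, hxy, ⟨z', h2, hz⟩, ⟨w', h4.symm, hw⟩⟩

section
variable {V : Type*} (G : SimpleGraph V)

def inclHom {S T : Set V} (h : S ⊆ T) : G.induce S →g G.induce T where
  toFun x := ⟨x.1, h x.2⟩
  map_rel' := fun hab => hab

lemma inclHom_injective {S T : Set V} (hST : S ⊆ T) :
    Function.Injective (inclHom G hST) :=
  Set.inclusion_injective hST

lemma acyclic_mono {S T : Set V} (h : S ⊆ T)
    (hT : (G.induce T).IsAcyclic) : (G.induce S).IsAcyclic := by
  intro v c hc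
  exact hT (c.map (inclHom G h)) (hc.map (inclHom_injective G h))

lemma walk_lower {S T : Set V} (hST : S ⊆ T) {a b : ↥T}
    (w : (G.induce T).Walk a b) :
    ∀ (ha : ↑a ∈ S) (hb : ↑b ∈ S), (∀ x ∈ w.support, ↑x ∈ S) →
    ∃ w' : (G.induce S).Walk ⟨a, ha⟩ ⟨b, hb⟩,
      w'.support.map (inclHom G hST) = w.support ∧
      w'.edges.map (Sym2.map (inclHom G hST)) = w.edges := by
  induction w with
  | nil =>
    intro ha _ _
    exact ⟨SimpleGraph.Walk.nil, by simp [inclHom]; rfl, by simp⟩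
  | @cons u c d h p ih =>
    intro ha hb hsup
    have hc : ↑c ∈ S := hsup c (by simp)
    obtain ⟨p', hps, hpe⟩ := ih hc hb (fun x hx => hsup x (by simp [hx]))
    refine ⟨SimpleGraph.Walk.cons (by exact h) p', ?_, ?_⟩
    · show inclHom G hST _ :: List.map (inclHom G hST) p'.support = u :: p.support
      rw [hps]
      rfl
    · show Sym2.map (inclHom G hST) _ :: List.map (Sym2.map (inclHom G hST)) p'.edges = s(u, c) :: p.edges
      rw [hpe]
      congr 1


lemma exists_two_nbrs {S : Set V} {v : V} (hvS : v ∉ S)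
    (hacyc : (G.induce S).IsAcyclic) (hnot : ¬(G.induce (insert v S)).IsAcyclic) :
    ∃ x ∈ S, ∃ y ∈ S, x ≠ y ∧ G.Adj v x ∧ G.Adj v y ∧
      (∃ z ∈ S, G.Adj x z) ∧ (∃ w ∈ S, G.Adj y w) := by
  unfold SimpleGraph.IsAcyclic at hnot
  push_neg at hnot
  obtain ⟨u, c, hc⟩ := hnot
  classical
  have hvT : v ∈ (insert v S : Set V) := Set.mem_insert _ _
  have val_mem : ∀ a : ↥(insert v S : Set V), a ≠ ⟨v, hvT⟩ → ↑a ∈ S := by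
    intro a ha
    rcases a.2 with h | h
    · exact absurd (Subtype.ext h) ha
    · exact h
  by_cases hmem : (⟨v, hvT⟩ : ↥(insert v S : Set V)) ∈ c.support
  · have hc1 := hc.rotate hmem
    obtain ⟨x', y', hx, hy, hxy, ⟨z', hz1, hz2⟩, ⟨w', hw1, hw2⟩⟩ := cycle_decomp _ hc1
    have hxv : x' ≠ ⟨v, hvT⟩ := fun h => (hx.ne h.symm).elim
    have hyv : y' ≠ ⟨v, hvT⟩ := fun h => (hy.ne h.symm).elim
    refine ⟨↑x', val_mem x' hxv, ↑y', val_mem y' hyv, ?_, hx, hy, 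
      ⟨↑z', val_mem z' hz2, hz1⟩, ⟨↑w', val_mem w' hw2, hw1⟩⟩
    intro h
    exact hxy (Subtype.ext h)
  · have hsub : ∀ x ∈ c.support, ↑x ∈ S := fun x hx =>
      val_mem x (fun h => hmem (h ▸ hx))
    have hu : ↑u ∈ S := hsub u c.start_mem_support
    obtain ⟨w', hws, hwe⟩ := walk_lower G (Set.subset_insert v S) c hu hu hsub
    exfalso
    apply hacyc w'
    rw [SimpleGraph.Walk.isCycle_def]
    refine ⟨?_, ?_, ?_⟩
    · rw [SimpleGraph.Walk.isTrail_def]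
      have h1 : c.edges.Nodup := hc.isCircuit.isTrail.edges_nodup
      rw [← hwe] at h1
      exact h1.of_map _
    · intro h
      have h2 := congrArg List.length hws
      rw [h] at h2
      simp only [SimpleGraph.Walk.support_nil, List.map_cons, List.map_nil,
        List.length_cons, List.length_nil, SimpleGraph.Walk.length_support] at h2
      have h3 : c.length = 0 := by omega
      exact hc.ne_nil (SimpleGraph.Walk.nil_iff_eq_nil.mp (SimpleGraph.Walk.length_eq_zero_iff.mp h3))
    · have h1 : c.support.tail.Nodup := hc.support_nodup
      rw [← hws, ← List.map_tail] at h1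
      exact h1.of_map _
end

section
variable {V : Type*} [Fintype V] [DecidableEq V]

def gw (G : SimpleGraph V) (A : Finset V) : SimpleGraph V where
  Adj x y := x ∈ A ∧ y ∈ A ∧ G.Adj x y
  symm := ⟨fun x y h => ⟨h.2.1, h.1, h.2.2.symm⟩⟩
  loopless := ⟨fun x h => G.loopless.irrefl x h.2.2⟩

instance (G : SimpleGraph V) [DecidableRel G.Adj] (A : Finset V) :
    DecidableRel (gw G A).Adj :=
  fun x y => inferInstanceAs (Decidable (x ∈ A ∧ y ∈ A ∧ G.Adj x y))

lemma double_count (H : SimpleGraph V) [DecidableRel H.Adj] (P Q : Finset V) :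
    ∑ x ∈ P, (Q.filter (H.Adj x)).card = ∑ u ∈ Q, (P.filter (H.Adj u)).card := by
  simp only [Finset.card_filter]
  rw [Finset.sum_comm]
  congr 1
  ext u
  congr 1
  ext x
  simp [SimpleGraph.adj_comm]

section
variable (G : SimpleGraph V) [DecidableRel G.Adj]

lemma gw_erase_edgeFinset (A : Finset V) (v : V) :
    (gw G (A.erase v)).edgeFinset = (gw G A).edgeFinset \ (gw G A).incidenceFinset v := by
  ext e
  induction e with
  | _ x y =>
    simp only [mem_edgeFinset, mem_sdiff, mem_incidenceFinset, incidenceSet,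
      Set.mem_setOf_eq, mem_edgeSet, Sym2.mem_iff, Set.mem_sep_iff]
    constructor
    · rintro ⟨hx, hy, hadj⟩
      refine ⟨⟨A.mem_of_mem_erase hx, A.mem_of_mem_erase hy, hadj⟩, ?_⟩
      rintro ⟨-, h | h⟩
      · exact (Finset.ne_of_mem_erase hx) h.symm
      · exact (Finset.ne_of_mem_erase hy) h.symm
    · rintro ⟨⟨hx, hy, hadj⟩, hne⟩
      push_neg at hne
      have h2 := hne ⟨hx, hy, hadj⟩
      exact ⟨Finset.mem_erase.2 ⟨fun h => h2.1 h.symm, hx⟩,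
        Finset.mem_erase.2 ⟨fun h => h2.2 h.symm, hy⟩, hadj⟩

lemma gw_card_erase (A : Finset V) {v : V} (hv : v ∈ A) :
    (gw G A).edgeFinset.card
      = (gw G (A.erase v)).edgeFinset.card + (gw G A).degree v := by
  rw [gw_erase_edgeFinset, ← card_incidenceFinset_eq_degree,
    Finset.card_sdiff_add_card_eq_card]
  intro e he
  rw [mem_incidenceFinset] at he
  exact (SimpleGraph.mem_edgeFinset).2 he.1

end

theorem main_lemma (G : SimpleGraph V) [DecidableRel G.Adj] (t : ℕ) (ht : 1 ≤ t)
    (hforest : ∀ S : Set V, S.ncard = 2*t+1 → ¬(G.induce S).IsAcyclic) :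
    ∀ (n : ℕ) (A : Finset V), A.card = n → g t n ≤ (gw G A).edgeFinset.card := by
  intro n
  induction n using Nat.strong_induction_on with
  | _ n ih =>
  intro A hA
  by_cases hsmall : n ≤ 2*t
  · rw [g_zero ht hsmall]; exact Nat.zero_le _
  push_neg at hsmall
  classical
  -- maximum acyclic subset S of A
  obtain ⟨S, hSmem, hSmax⟩ := Finset.exists_max_image
    (A.powerset.filter (fun B : Finset V => (G.induce (↑B : Set V)).IsAcyclic)) Finset.card
    ⟨∅, by
      simp only [Finset.mem_filter, Finset.mem_powerset]
      refine ⟨Finset.empty_subset _, ?_⟩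
      intro v
      exact absurd v.2 (by simp)⟩
  rw [Finset.mem_filter, Finset.mem_powerset] at hSmem
  obtain ⟨hSA, hSacyc⟩ := hSmem
  -- s ≤ 2t
  have hsle : S.card ≤ 2*t := by
    by_contra hcon
    push_neg at hcon
    obtain ⟨S', hS'sub, hS'card⟩ := Finset.exists_subset_card_eq (show 2*t+1 ≤ S.card by omega)
    apply hforest (↑S' : Set V) (by rw [Set.ncard_coe_finset]; exact hS'card)
    exact acyclic_mono G (Finset.coe_subset.2 hS'sub) hSacyc
  have hsn : S.card ≤ n := hA ▸ Finset.card_le_card hSA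
  -- outside vertices have the key property
  have key : ∀ v ∈ A, v ∉ S → ∃ x ∈ S, ∃ y ∈ S, x ≠ y ∧ G.Adj v x ∧ G.Adj v y ∧
      (∃ z ∈ S, G.Adj x z) ∧ (∃ w ∈ S, G.Adj y w) := by
    intro v hvA hvS
    have hnot : ¬(G.induce (insert v (↑S : Set V))).IsAcyclic := by
      intro hacyc
      have hmem2 : insert v S ∈ A.powerset.filter (fun B : Finset V => (G.induce (↑B : Set V)).IsAcyclic) := by
        rw [Finset.mem_filter, Finset.mem_powerset]
        refine ⟨Finset.insert_subset hvA hSA, ?_⟩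
        rw [Finset.coe_insert]
        exact hacyc
      have := hSmax _ hmem2
      rw [Finset.card_insert_of_notMem hvS] at this
      omega
    obtain ⟨x, hx, y, hy, hxy, h1, h2, ⟨z, hz, h3⟩, ⟨w, hw, h4⟩⟩ :=
      exists_two_nbrs G (by simpa using hvS) hSacyc hnot
    exact ⟨x, hx, y, hy, hxy, h1, h2, ⟨z, hz, h3⟩, ⟨w, hw, h4⟩⟩
  -- S2 : non-isolated vertices of S
  set S2 := S.filter (fun x => ∃ z ∈ S, G.Adj x z) with hS2
  have hS2S : S2 ⊆ S := Finset.filter_subset _ _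
  have hs2le : S2.card ≤ S.card := Finset.card_le_card hS2S
  have hS2A : S2 ⊆ A := hS2S.trans hSA
  have hcardout : (A \ S).card = n - S.card := by
    rw [Finset.card_sdiff_of_subset hSA, hA]
  -- each outside vertex has ≥ 2 neighbors in S2
  have hout : ∀ u ∈ A \ S, 2 ≤ (S2.filter ((gw G A).Adj u)).card := by
    intro u hu
    rw [Finset.mem_sdiff] at hu
    obtain ⟨x, hx, y, hy, hxy, h1, h2, hzx, hwy⟩ := key u hu.1 hu.2
    have hxm : x ∈ S2.filter ((gw G A).Adj u) := by
      rw [Finset.mem_filter]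
      exact ⟨Finset.mem_filter.2 ⟨hx, hzx⟩, hu.1, hSA hx, h1⟩
    have hym : y ∈ S2.filter ((gw G A).Adj u) := by
      rw [Finset.mem_filter]
      exact ⟨Finset.mem_filter.2 ⟨hy, hwy⟩, hu.1, hSA hy, h2⟩
    calc 2 = ({x, y} : Finset V).card := (Finset.card_pair hxy).symm
    _ ≤ _ := Finset.card_le_card (by
        intro a ha
        rcases Finset.mem_insert.1 ha with rfl | ha
        · exact hxm
        · rw [Finset.mem_singleton] at ha; subst ha; exact hym)
  -- X : number of S2-outside adjacencies
  have hXout : 2 * (n - S.card) ≤ ∑ x ∈ S2, ((A \ S).filter ((gw G A).Adj x)).card := by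
    rw [double_count (gw G A) S2 (A \ S)]
    calc 2 * (n - S.card) = ∑ _u ∈ A \ S, 2 := by
          rw [Finset.sum_const, hcardout, smul_eq_mul, mul_comm]
    _ ≤ _ := Finset.sum_le_sum hout
  -- degree lower bound for x ∈ S2
  have hdegS2 : ∀ x ∈ S2, 1 + ((A \ S).filter ((gw G A).Adj x)).card ≤ (gw G A).degree x := by
    intro x hx
    have hz : ∃ z ∈ S, G.Adj x z := (Finset.mem_filter.1 hx).2
    obtain ⟨z, hzS, hadj⟩ := hz
    have h1 : (S.filter ((gw G A).Adj x)).Nonempty := by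
      refine ⟨z, Finset.mem_filter.2 ⟨hzS, hS2A hx, hSA hzS, hadj⟩⟩
    have hdisj2 : Disjoint (S.filter ((gw G A).Adj x)) ((A \ S).filter ((gw G A).Adj x)) :=
      Finset.disjoint_filter_filter Finset.sdiff_disjoint.symm
    calc 1 + ((A \ S).filter ((gw G A).Adj x)).card
        ≤ (S.filter ((gw G A).Adj x)).card + ((A \ S).filter ((gw G A).Adj x)).card := by
          have := Finset.card_pos.2 h1; omega
    _ = ((S.filter ((gw G A).Adj x)) ∪ ((A \ S).filter ((gw G A).Adj x))).card :=
          (Finset.card_union_of_disjoint hdisj2).symm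
    _ ≤ (Finset.univ.filter ((gw G A).Adj x)).card := Finset.card_le_card (by
          intro a ha
          rcases Finset.mem_union.1 ha with h | h
          · exact Finset.mem_filter.2 ⟨Finset.mem_univ _, (Finset.mem_filter.1 h).2⟩
          · exact Finset.mem_filter.2 ⟨Finset.mem_univ _, (Finset.mem_filter.1 h).2⟩)
    _ = (gw G A).degree x := by rw [← SimpleGraph.neighborFinset_eq_filter,
          SimpleGraph.card_neighborFinset_eq_degree]
  have hsumS2 : S2.card + (∑ x ∈ S2, ((A \ S).filter ((gw G A).Adj x)).card) ≤ ∑ x ∈ S2, (gw G A).degree x := by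
    calc S2.card + (∑ x ∈ S2, ((A \ S).filter ((gw G A).Adj x)).card)
        = ∑ x ∈ S2, (1 + ((A \ S).filter ((gw G A).Adj x)).card) := by
          rw [Finset.sum_add_distrib, Finset.sum_const, smul_eq_mul, mul_one]
    _ ≤ _ := Finset.sum_le_sum hdegS2
  have houtdeg : 2 * (n - S.card) ≤ ∑ u ∈ A \ S, (gw G A).degree u := by
    calc 2 * (n - S.card) = ∑ _u ∈ A \ S, 2 := by
          rw [Finset.sum_const, hcardout, smul_eq_mul, mul_comm]
    _ ≤ _ := Finset.sum_le_sum (by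
          intro u hu
          calc 2 ≤ (S2.filter ((gw G A).Adj u)).card := hout u hu
          _ ≤ (Finset.univ.filter ((gw G A).Adj u)).card :=
              Finset.card_le_card (Finset.filter_subset_filter _ (Finset.subset_univ _))
          _ = (gw G A).degree u := by rw [← SimpleGraph.neighborFinset_eq_filter,
                SimpleGraph.card_neighborFinset_eq_degree])
  have hdisjout : Disjoint (A \ S) S2 :=
    Finset.disjoint_of_subset_right hS2S Finset.sdiff_disjoint
  have hsplit : (∑ u ∈ A \ S, (gw G A).degree u) + (∑ x ∈ S2, (gw G A).degree x)
      ≤ 2 * (gw G A).edgeFinset.card := by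
    rw [← SimpleGraph.sum_degrees_eq_twice_card_edges, ← Finset.sum_union hdisjout]
    exact Finset.sum_le_sum_of_subset (Finset.subset_univ _)
  by_cases hmid : n ≤ 4*t
  · -- middle range
    by_cases hbig : ∃ v ∈ A, 3 ≤ (gw G A).degree v
    · obtain ⟨v, hvA, hvdeg⟩ := hbig
      have hih := ih (n-1) (by omega) (A.erase v) (by rw [Finset.card_erase_of_mem hvA, hA])
      have hrec := gw_card_erase G A hvA
      have hstep := g_mid_step ht hsmall hmid
      omega
    · push_neg at hbig
      have hdeg2 : ∑ x ∈ S2, (gw G A).degree x ≤ 2 * S2.card := by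
        calc ∑ x ∈ S2, (gw G A).degree x ≤ ∑ _x ∈ S2, 2 :=
              Finset.sum_le_sum (fun x hx => by have := hbig x (hS2A hx); omega)
        _ = 2 * S2.card := by rw [Finset.sum_const, smul_eq_mul, mul_comm]
      rw [g_mid hsmall hmid]
      omega
  · -- high range
    push_neg at hmid
    have hK5 : 5 ≤ (n + t - 1)/t := by
      rw [Nat.le_div_iff_mul_le (by omega)]
      omega
    have hKt : ((n + t - 1)/t) * t ≤ n + t - 1 := Nat.div_mul_le_self _ _
    by_cases hbig : ∃ v ∈ A, (n + t - 1)/t - 1 ≤ (gw G A).degree v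
    · obtain ⟨v, hvA, hvdeg⟩ := hbig
      have hih := ih (n-1) (by omega) (A.erase v) (by rw [Finset.card_erase_of_mem hvA, hA])
      have hrec := gw_card_erase G A hvA
      have hstep := g_high ht hmid
      omega
    · push_neg at hbig
      exfalso
      have hdegK : ∑ x ∈ S2, (gw G A).degree x + 2 * S2.card ≤ ((n + t - 1)/t) * S2.card := by
        calc ∑ x ∈ S2, (gw G A).degree x + 2 * S2.card = ∑ x ∈ S2, ((gw G A).degree x + 2) := by
              rw [Finset.sum_add_distrib, Finset.sum_const, smul_eq_mul, mul_comm]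
        _ ≤ ∑ _x ∈ S2, (n + t - 1)/t := Finset.sum_le_sum (fun x hx => by
              have := hbig x (hS2A hx); omega)
        _ = ((n + t - 1)/t) * S2.card := by rw [Finset.sum_const, smul_eq_mul, mul_comm]
      have e1 : ((n + t - 1)/t - 3) * S2.card + 3 * S2.card = ((n + t - 1)/t) * S2.card := by
        rw [← Nat.add_mul, Nat.sub_add_cancel (by omega)]
      have hXle : (∑ x ∈ S2, ((A \ S).filter ((gw G A).Adj x)).card)
          ≤ ((n + t - 1)/t - 3) * S2.card := by omega
      have e2 : ((n + t - 1)/t - 3) * S2.card ≤ ((n + t - 1)/t - 3) * (2*t) :=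
        Nat.mul_le_mul_left _ (by omega)
      have e3 : ((n + t - 1)/t - 3) * (2*t) + 3 * (2*t) = ((n + t - 1)/t) * (2*t) := by
        rw [← Nat.add_mul, Nat.sub_add_cancel (by omega)]
      have e4 : ((n + t - 1)/t) * (2*t) = 2 * (((n + t - 1)/t) * t) := by ring
      omega

end

end ClawFreeAux

/-- If `G` is a simple graph on `n ≥ 1` vertices with no induced forest on `2t+1`
vertices (`t ≥ 1`), then `G` has at least `g(n,t)` edges. -/
theorem graph_claw_free_lower_bound {V : Type*} [Fintype V] (n t : ℕ) (hn : 1 ≤ n)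
    (ht : 1 ≤ t) (hcard : Fintype.card V = n) (G : SimpleGraph V)
    (hforest : ∀ S : Set V, S.ncard = 2 * t + 1 → ¬ (G.induce S).IsAcyclic) :
    g t n ≤ G.edgeSet.ncard := by
  classical
  have h := ClawFreeAux.main_lemma G t ht hforest n Finset.univ (by simpa using hcard)
  have hgw : ClawFreeAux.gw G Finset.univ = G := by
    ext x y
    show (x ∈ Finset.univ ∧ y ∈ Finset.univ ∧ G.Adj x y) ↔ G.Adj x y
    simp
  have h2 : (ClawFreeAux.gw G Finset.univ).edgeSet = G.edgeSet := by rw [hgw]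
  calc g t n ≤ (ClawFreeAux.gw G Finset.univ).edgeFinset.card := h
  _ = (ClawFreeAux.gw G Finset.univ).edgeSet.ncard := by
      rw [← SimpleGraph.coe_edgeFinset, Set.ncard_coe_finset]
  _ = G.edgeSet.ncard := by rw [h2]
end

section
/- Let n ≥ 1 and t ≥ 1 be integers with n < 4t, and let G be a simple graph on n vertices such that for every set S of 2t+1 vertices the induced subgraph G[S] is not acyclic, and suppose the number of edges of G equals g(n,t). Then every connected component of G is a complete graph on 1, 3, or 4 vertices; that is, any two distinct vertices in the same connected component are adjacent, and every connected component has exactly 1, 3, or 4 vertices. -/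
set_option linter.unusedSectionVars false

namespace ClawFreeAux

open Finset SimpleGraph

variable {V : Type*} [Fintype V] [DecidableEq V] (G : SimpleGraph V) [DecidableRel G.Adj]

/-- Degree of `v` into the finset `s`. -/
def dIn (s : Finset V) (v : V) : ℕ := (s.filter (fun w => G.Adj v w)).card

/-- Edges of `G` inside the finset `s`. -/
def eIn (s : Finset V) : Finset (Sym2 V) := G.edgeFinset.filter (fun e => ∀ x ∈ e, x ∈ s)

/-- There is no cycle of `G` lying entirely inside `s`. -/
def NoCyc (s : Finset V) : Prop :=
  ∀ ⦃v : V⦄ (c : G.Walk v v), c.IsCycle → ¬ (∀ x ∈ c.support, x ∈ s)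

/-- Adjacency is "transitive" within `s` (any two neighbours of a vertex are adjacent). -/
def Trans (s : Finset V) : Prop :=
  ∀ a ∈ s, ∀ b ∈ s, ∀ c ∈ s, G.Adj a b → G.Adj a c → b ≠ c → G.Adj b c

/-- `G` restricted to `s` is a disjoint union of cliques of sizes 1, 3, 4. -/
def Struct (s : Finset V) : Prop :=
  Trans G s ∧ ∀ u ∈ s, dIn G s u = 0 ∨ dIn G s u = 2 ∨ dIn G s u = 3

/-- Every `m`-subset of `s` contains a cycle. -/
def QQ (m : ℕ) (s : Finset V) : Prop := ∀ A ⊆ s, A.card = m → ¬ NoCyc G A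

/-- The closed neighbourhood of `u` inside `s'`. -/
def comp (s' : Finset V) (u : V) : Finset V := insert u (s'.filter (fun w => G.Adj u w))

variable {G}

/-! ### Walk lemmas -/

lemma endpoint_mem_tail {u : V} {c : G.Walk u u} (hc : ¬c.Nil) : u ∈ c.support.tail := by
  have h := c.tail.end_mem_support
  rwa [SimpleGraph.Walk.support_tail_of_not_nil c hc] at h

lemma mem_support_closed_iff {u x : V} {c : G.Walk u u} (hc : ¬c.Nil) :
    x ∈ c.support ↔ x ∈ c.support.tail := by
  rw [SimpleGraph.Walk.mem_support_iff]
  constructor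
  · rintro (rfl | h)
    · exact endpoint_mem_tail hc
    · exact h
  · exact Or.inr

lemma mem_support_rotate {u w x : V} {c : G.Walk u u} (hc : c.IsCycle) (h : w ∈ c.support) :
    x ∈ (c.rotate w h).support ↔ x ∈ c.support := by
  rw [mem_support_closed_iff (hc.rotate h).not_nil, mem_support_closed_iff hc.not_nil]
  exact (SimpleGraph.Walk.support_rotate c w h).mem_iff

/-- The base point of a cycle has two distinct neighbours on the cycle. -/
lemma two_nbrs {u : V} {c : G.Walk u u} (hc : c.IsCycle) :
    ∃ x y, x ≠ y ∧ G.Adj u x ∧ G.Adj u y ∧ x ∈ c.support ∧ y ∈ c.support := by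
  have hnn : ¬c.Nil := hc.not_nil
  have hnnr : ¬c.reverse.Nil := by
    rw [SimpleGraph.Walk.not_nil_iff_lt_length] at hnn ⊢
    simpa using hnn
  obtain ⟨x, hux, q, hcq⟩ := SimpleGraph.Walk.not_nil_iff.1 hnn
  obtain ⟨y, huy, q', hrq⟩ := SimpleGraph.Walk.not_nil_iff.1 hnnr
  have hxs : x ∈ c.support := by
    rw [hcq, SimpleGraph.Walk.support_cons]
    exact List.mem_cons_of_mem _ q.start_mem_support
  have hys : y ∈ c.support := by
    have : y ∈ c.reverse.support := by
      rw [hrq, SimpleGraph.Walk.support_cons]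
      exact List.mem_cons_of_mem _ q'.start_mem_support
    rwa [SimpleGraph.Walk.support_reverse, List.mem_reverse] at this
  refine ⟨x, y, ?_, hux, huy, hxs, hys⟩
  rintro rfl
  -- derive a contradiction with nodup edges
  have hnod : c.edges.Nodup := hc.edges_nodup
  have hlen : 3 ≤ c.length := hc.three_le_length
  have he1 : c.edges = s(u, x) :: q.edges := by rw [hcq, SimpleGraph.Walk.edges_cons]
  have he2 : c.edges.reverse = s(u, x) :: q'.edges := by
    rw [← SimpleGraph.Walk.edges_reverse, hrq, SimpleGraph.Walk.edges_cons]
  have he3 : c.edges = q'.edges.reverse ++ [s(u, x)] := by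
    have := congrArg List.reverse he2
    simpa using this
  -- so s(u,x) is both the head and the last entry of a nodup list of length ≥ 3
  have hmem : s(u, x) ∈ q.edges := by
    have hql : q'.edges.reverse ≠ [] := by
      intro h
      rw [h] at he3
      have := congrArg List.length he3
      rw [SimpleGraph.Walk.length_edges] at this
      simp at this
      omega
    obtain ⟨a, l, hl⟩ := List.exists_cons_of_ne_nil hql
    rw [hl] at he3
    have : s(u, x) :: q.edges = a :: (l ++ [s(u, x)]) := by rw [← he1, he3]; simp
    have ha : a = s(u, x) := by
      have := congrArg List.head? this
      simpa using this.symm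
    have hq : q.edges = l ++ [s(u, x)] := by
      have := congrArg List.tail this
      simpa using this
    rw [hq]
    simp
  rw [he1] at hnod
  exact (List.nodup_cons.1 hnod).1 hmem

/-- Every vertex on a cycle has two distinct neighbours on the cycle. -/
lemma two_nbrs_mem {u w : V} {c : G.Walk u u} (hc : c.IsCycle) (hw : w ∈ c.support) :
    ∃ x y, x ≠ y ∧ G.Adj w x ∧ G.Adj w y ∧ x ∈ c.support ∧ y ∈ c.support := by
  obtain ⟨x, y, hxy, hx, hy, hxs, hys⟩ := two_nbrs (hc.rotate hw)
  exact ⟨x, y, hxy, hx, hy, (mem_support_rotate hc hw).1 hxs,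
    (mem_support_rotate hc hw).1 hys⟩

lemma exists_crossing {u w : V} (p : G.Walk u w) (A : Finset V) (hu : u ∈ A) (hw : w ∉ A) :
    ∃ a b, G.Adj a b ∧ a ∈ A ∧ b ∉ A ∧ b ∈ p.support := by
  induction p with
  | nil => exact absurd hu hw
  | @cons u v w h q ih =>
    by_cases hv : v ∈ A
    · obtain ⟨a, b, hab, ha, hb, hbs⟩ := ih hv hw
      exact ⟨a, b, hab, ha, hb, by simp [SimpleGraph.Walk.support_cons, hbs]⟩
    · exact ⟨u, v, h, hu, hv, by simp [SimpleGraph.Walk.support_cons, q.start_mem_support]⟩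

/-! ### NoCyc lemmas -/

lemma noCyc_mono {s t : Finset V} (hts : t ⊆ s) (h : NoCyc G s) : NoCyc G t := by
  intro v c hc hall
  exact h c hc fun x hx => hts (hall x hx)

lemma noCyc_union {A B : Finset V} (hA : NoCyc G A) (hB : NoCyc G B)
    (hAB : ∀ a ∈ A, ∀ b ∈ B, ¬G.Adj a b) : NoCyc G (A ∪ B) := by
  intro v c hc hall
  by_cases hvA : v ∈ A
  · by_cases hIn : ∀ x ∈ c.support, x ∈ A
    · exact hA c hc hIn
    · push_neg at hIn
      obtain ⟨z, hzs, hzA⟩ := hIn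
      obtain ⟨a, b, hab, ha, hb, hbs⟩ := exists_crossing (c.takeUntil z hzs) A hvA hzA
      have hbB : b ∈ B := by
        have := hall b ((c.support_takeUntil_subset hzs) hbs)
        rw [Finset.mem_union] at this
        tauto
      exact hAB a ha b hbB hab
  · have hvB : v ∈ B := by have := hall v c.start_mem_support; rw [Finset.mem_union] at this; tauto
    by_cases hIn : ∀ x ∈ c.support, x ∈ B
    · exact hB c hc hIn
    · push_neg at hIn
      obtain ⟨z, hzs, hzB⟩ := hIn
      obtain ⟨a, b, hab, ha, hb, hbs⟩ := exists_crossing (c.takeUntil z hzs) B hvB hzB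
      have hbA : b ∈ A := by
        have := hall b ((c.support_takeUntil_subset hzs) hbs)
        rw [Finset.mem_union] at this
        tauto
      exact hAB b hbA a ha hab.symm

lemma noCyc_of_rank (A : Finset V) (f : V → ℕ)
    (hinj : ∀ a ∈ A, ∀ b ∈ A, f a = f b → a = b)
    (hdeg : ∀ u ∈ A, (A.filter (fun w => G.Adj u w ∧ f u < f w)).card ≤ 1) : NoCyc G A := by
  intro v c hc hall
  obtain ⟨u, hu, hmin⟩ :=
    (c.support.toFinset).exists_min_image f ⟨v, List.mem_toFinset.2 c.start_mem_support⟩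
  have hus : u ∈ c.support := List.mem_toFinset.1 hu
  have huA : u ∈ A := hall u hus
  obtain ⟨x, y, hxy, hax, hay, hxs, hys⟩ := two_nbrs_mem hc hus
  have hxA : x ∈ A := hall x hxs
  have hyA : y ∈ A := hall y hys
  have hfx : f u < f x :=
    lt_of_le_of_ne (hmin x (List.mem_toFinset.2 hxs))
      (fun h => hax.ne (hinj u huA x hxA h))
  have hfy : f u < f y :=
    lt_of_le_of_ne (hmin y (List.mem_toFinset.2 hys))
      (fun h => hay.ne (hinj u huA y hyA h))
  have h2 : 1 < (A.filter (fun w => G.Adj u w ∧ f u < f w)).card :=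
    Finset.one_lt_card.2 ⟨x, by simp [hxA, hax, hfx], y, by simp [hyA, hay, hfy], hxy⟩
  exact absurd (hdeg u huA) (by omega)

lemma isAcyclic_induce_of_noCyc {s : Finset V} (h : NoCyc G s) :
    (G.induce (↑s : Set V)).IsAcyclic := by
  intro v c hc
  let emb : G.induce (↑s : Set V) ↪g G := SimpleGraph.Embedding.induce _
  have hinj : Function.Injective emb.toHom := by
    intro a b hab
    exact emb.injective (by simpa using hab)
  have hmap := hc.map hinj
  refine h _ hmap fun x hx => ?_
  rw [SimpleGraph.Walk.support_map, List.mem_map] at hx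
  obtain ⟨a, _, rfl⟩ := hx
  exact a.2


/-! ### Edge counting -/

lemma mem_eIn {s : Finset V} {e : Sym2 V} :
    e ∈ eIn G s ↔ e ∈ G.edgeSet ∧ ∀ x ∈ e, x ∈ s := by
  simp [eIn, SimpleGraph.mem_edgeFinset]

lemma mem_eIn' {s : Finset V} {a b : V} :
    s(a, b) ∈ eIn G s ↔ G.Adj a b ∧ a ∈ s ∧ b ∈ s := by
  rw [mem_eIn, SimpleGraph.mem_edgeSet]
  constructor
  · rintro ⟨h, hall⟩
    exact ⟨h, hall a (by simp), hall b (by simp)⟩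
  · rintro ⟨h, ha, hb⟩
    refine ⟨h, fun x hx => ?_⟩
    rcases Sym2.mem_iff.1 hx with rfl | rfl <;> assumption

lemma eIn_mono {s t : Finset V} (h : s ⊆ t) : eIn G s ⊆ eIn G t := by
  intro e he
  rw [mem_eIn] at he ⊢
  exact ⟨he.1, fun x hx => h (he.2 x hx)⟩

lemma eIn_empty : eIn G (∅ : Finset V) = ∅ := by
  ext e
  induction e using Sym2.ind with
  | _ a b => simp [mem_eIn']

lemma dIn_insert {s : Finset V} {v u : V} (hv : v ∉ s) :
    dIn G (insert v s) u = dIn G s u + if G.Adj u v then 1 else 0 := by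
  unfold dIn
  by_cases h : G.Adj u v
  · rw [Finset.filter_insert, if_pos h,
      Finset.card_insert_of_notMem (fun hm => hv (Finset.mem_filter.1 hm).1), if_pos h]
  · rw [Finset.filter_insert, if_neg h, if_neg h]
    omega

lemma dIn_erase_self {s : Finset V} {v : V} : dIn G (s.erase v) v = dIn G s v := by
  unfold dIn
  congr 1
  ext w
  simp only [Finset.mem_filter, Finset.mem_erase]
  constructor
  · rintro ⟨⟨_, hw⟩, ha⟩; exact ⟨hw, ha⟩
  · rintro ⟨hw, ha⟩; exact ⟨⟨ha.ne', hw⟩, ha⟩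

lemma card_eIn_insert {s : Finset V} {v : V} (hv : v ∉ s) :
    (eIn G (insert v s)).card = (eIn G s).card + dIn G s v := by
  have hun : eIn G (insert v s)
      = eIn G s ∪ (s.filter (fun w => G.Adj v w)).image (fun w => s(v, w)) := by
    ext e
    induction e using Sym2.ind with
    | _ a b =>
      simp only [mem_eIn', Finset.mem_union, Finset.mem_image, Finset.mem_filter,
        Finset.mem_insert]
      constructor
      · rintro ⟨hab, ha, hb⟩
        rcases ha with rfl | ha
        · right
          refine ⟨b, ⟨hb.resolve_left (fun h => G.irrefl (h ▸ hab)), hab⟩, rfl⟩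
        · rcases hb with rfl | hb
          · right
            exact ⟨a, ⟨ha, hab.symm⟩, Sym2.eq_swap⟩
          · exact Or.inl ⟨hab, ha, hb⟩
      · rintro (⟨hab, ha, hb⟩ | ⟨w, ⟨hw, hvw⟩, he⟩)
        · exact ⟨hab, Or.inr ha, Or.inr hb⟩
        · rcases Sym2.eq_iff.1 he with ⟨rfl, rfl⟩ | ⟨rfl, rfl⟩
          · exact ⟨hvw, Or.inl rfl, Or.inr hw⟩
          · exact ⟨hvw.symm, Or.inr hw, Or.inl rfl⟩
  have hdisj : Disjoint (eIn G s)
      ((s.filter (fun w => G.Adj v w)).image (fun w => s(v, w))) := by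
    rw [Finset.disjoint_right]
    intro e hei hes
    obtain ⟨w, _, rfl⟩ := Finset.mem_image.1 hei
    exact hv ((mem_eIn.1 hes).2 v (by simp))
  have hinj : Set.InjOn (fun w => s(v, w)) (s.filter (fun w => G.Adj v w)) :=
    fun x _ y _ h => Sym2.congr_right.1 h
  rw [hun, Finset.card_union_of_disjoint hdisj, Finset.card_image_of_injOn hinj, dIn]

lemma card_eIn_erase {s : Finset V} {v : V} (hv : v ∈ s) :
    (eIn G s).card = (eIn G (s.erase v)).card + dIn G s v := by
  conv_lhs => rw [← Finset.insert_erase hv]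
  rw [card_eIn_insert (Finset.notMem_erase v s), dIn_erase_self]

lemma sum_dIn (s : Finset V) : ∑ u ∈ s, dIn G s u = 2 * (eIn G s).card := by
  induction s using Finset.induction_on with
  | empty => simp [eIn_empty]
  | @insert v s hv ih =>
    rw [Finset.sum_insert hv, card_eIn_insert hv]
    have h1 : dIn G (insert v s) v = dIn G s v := by
      unfold dIn
      rw [Finset.filter_insert, if_neg (G.irrefl)]
    have h2 : ∀ u ∈ s, dIn G (insert v s) u = dIn G s u + if G.Adj u v then 1 else 0 :=
      fun u _ => dIn_insert hv
    have h3 : ∑ u ∈ s, (if G.Adj u v then 1 else 0) = dIn G s v := by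
      rw [← Finset.card_filter]
      unfold dIn
      congr 1
      exact Finset.filter_congr (fun u _ => by rw [G.adj_comm])
    rw [h1, Finset.sum_congr rfl h2, Finset.sum_add_distrib, h3, ih]
    ring

lemma card_eIn_split {s B : Finset V} (hB : B ⊆ s)
    (hcross : ∀ a ∈ B, ∀ b ∈ s, b ∉ B → ¬G.Adj a b) :
    (eIn G s).card = (eIn G B).card + (eIn G (s \ B)).card := by
  have hun : eIn G s = eIn G B ∪ eIn G (s \ B) := by
    ext e
    induction e using Sym2.ind with
    | _ a b =>
      simp only [mem_eIn', Finset.mem_union, Finset.mem_sdiff]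
      constructor
      · rintro ⟨hab, ha, hb⟩
        by_cases haB : a ∈ B
        · by_cases hbB : b ∈ B
          · exact Or.inl ⟨hab, haB, hbB⟩
          · exact absurd hab (hcross a haB b hb hbB)
        · by_cases hbB : b ∈ B
          · exact absurd hab.symm (hcross b hbB a ha haB)
          · exact Or.inr ⟨hab, ⟨ha, haB⟩, ⟨hb, hbB⟩⟩
      · rintro (⟨hab, ha, hb⟩ | ⟨hab, ⟨ha, _⟩, ⟨hb, _⟩⟩)
        · exact ⟨hab, hB ha, hB hb⟩
        · exact ⟨hab, ha, hb⟩
  have hdisj : Disjoint (eIn G B) (eIn G (s \ B)) := by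
    rw [Finset.disjoint_left]
    intro e heB heS
    have hx := (mem_eIn.1 heB).2 e.out.1 (Sym2.out_fst_mem e)
    have hy := (mem_eIn.1 heS).2 e.out.1 (Sym2.out_fst_mem e)
    exact (Finset.mem_sdiff.1 hy).2 hx
  rw [hun, Finset.card_union_of_disjoint hdisj]

lemma dIn_clique {C : Finset V} (hC : ∀ a ∈ C, ∀ b ∈ C, a ≠ b → G.Adj a b) {u : V}
    (hu : u ∈ C) : dIn G C u = C.card - 1 := by
  unfold dIn
  have h : C.filter (fun w => G.Adj u w) = C.erase u := by
    ext w
    simp only [Finset.mem_filter, Finset.mem_erase]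
    constructor
    · rintro ⟨hw, ha⟩; exact ⟨ha.ne', hw⟩
    · rintro ⟨hne, hw⟩; exact ⟨hw, hC u hu w hw (Ne.symm hne)⟩
  rw [h, Finset.card_erase_of_mem hu]

lemma card_eIn_clique {C : Finset V} (hC : ∀ a ∈ C, ∀ b ∈ C, a ≠ b → G.Adj a b) :
    2 * (eIn G C).card = C.card * (C.card - 1) := by
  rw [← sum_dIn, Finset.sum_congr rfl (fun u hu => dIn_clique hC hu), Finset.sum_const,
    smul_eq_mul]

lemma eIn_univ : eIn G Finset.univ = G.edgeFinset := by
  ext e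
  simp [eIn]


/-! ### Component machinery -/

lemma mem_comp_iff {s' : Finset V} {u w : V} :
    w ∈ comp G s' u ↔ w = u ∨ (w ∈ s' ∧ G.Adj u w) := by
  simp [comp]

lemma self_mem_comp {s' : Finset V} {u : V} : u ∈ comp G s' u := Finset.mem_insert_self _ _

lemma comp_subset {s' : Finset V} {u : V} (hu : u ∈ s') : comp G s' u ⊆ s' :=
  Finset.insert_subset hu (Finset.filter_subset _ _)

lemma card_comp {s' : Finset V} {u : V} : (comp G s' u).card = dIn G s' u + 1 := by
  rw [comp, Finset.card_insert_of_notMem (fun h => G.irrefl (Finset.mem_filter.1 h).2), dIn]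

lemma comp_eq_of_adj' {s' : Finset V} (hT : Trans G s') {u w : V} (hu : u ∈ s') (hw : w ∈ s')
    (h : G.Adj u w) : comp G s' u = comp G s' w := by
  have key : ∀ a b : V, a ∈ s' → b ∈ s' → G.Adj a b → comp G s' a ⊆ comp G s' b := by
    intro a b ha hb hab x hx
    rw [mem_comp_iff] at hx
    rw [mem_comp_iff]
    rcases hx with rfl | ⟨hxs, hax⟩
    · exact Or.inr ⟨ha, hab.symm⟩
    · by_cases hxb : x = b
      · exact Or.inl hxb
      · exact Or.inr ⟨hxs, hT a ha b hb x hxs hab hax (Ne.symm hxb)⟩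
  exact Finset.Subset.antisymm (key u w hu hw h) (key w u hw hu h.symm)

lemma comp_eq_of_mem {s' : Finset V} (hT : Trans G s') {u w : V} (hu : u ∈ s')
    (hw : w ∈ comp G s' u) : comp G s' w = comp G s' u := by
  rw [mem_comp_iff] at hw
  rcases hw with rfl | ⟨hws, hadj⟩
  · rfl
  · exact (comp_eq_of_adj' hT hu hws hadj).symm


/-! ### Base case -/

lemma walk_mem_support_of_mem_edges {u w : V} {p : G.Walk u w} {e : Sym2 V} {x : V}
    (he : e ∈ p.edges) (hx : x ∈ e) : x ∈ p.support := by
  induction e using Sym2.ind with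
  | _ a b =>
    rcases Sym2.mem_iff.1 hx with rfl | rfl
    · exact p.fst_mem_support_of_mem_edges he
    · exact p.snd_mem_support_of_mem_edges he

lemma base_case (s : Finset V) (m : ℕ) (hm : s.card = m) (hQ : QQ G m s) :
    3 ≤ (eIn G s).card ∧ ((eIn G s).card = 3 → Struct G s) := by
  have hnc : ¬ NoCyc G s := hQ s Finset.Subset.rfl hm
  rw [NoCyc] at hnc
  push_neg at hnc
  obtain ⟨v, c, hc, hall⟩ := hnc
  have hsub : c.edges.toFinset ⊆ eIn G s := by
    intro e he'
    have he := List.mem_toFinset.1 he'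
    rw [mem_eIn]
    exact ⟨c.edges_subset_edgeSet he,
      fun x hx => hall x (walk_mem_support_of_mem_edges he hx)⟩
  have hcard3 : 3 ≤ c.edges.toFinset.card := by
    rw [List.toFinset_card_of_nodup hc.edges_nodup, SimpleGraph.Walk.length_edges]
    exact hc.three_le_length
  refine ⟨le_trans hcard3 (Finset.card_le_card hsub), fun hE => ?_⟩
  have heq : c.edges.toFinset = eIn G s :=
    Finset.eq_of_subset_of_card_le hsub (by omega)
  have hlen : c.length = 3 := by
    have h1 : c.edges.toFinset.card = c.length := by
      rw [List.toFinset_card_of_nodup hc.edges_nodup, SimpleGraph.Walk.length_edges]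
    have h2 := congrArg Finset.card heq
    omega
  clear hcard3
  rcases c with _ | ⟨h1, p⟩
  · simp at hlen
  rename_i a
  rcases p with _ | ⟨h2, p⟩
  · simp at hlen
  rename_i b
  rcases p with _ | ⟨h3, p⟩
  · simp at hlen
  rename_i d
  rcases p with _ | ⟨h4, p⟩
  swap
  · simp [SimpleGraph.Walk.length_cons] at hlen
  -- now the cycle is v → a → b → v
  have hnd := hc.support_nodup
  simp only [SimpleGraph.Walk.support_cons, SimpleGraph.Walk.support_nil, List.tail_cons,
    List.nodup_cons, List.mem_cons, List.mem_singleton, List.not_mem_nil] at hnd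
  have hab : a ≠ b := by tauto
  have hav : a ≠ v := by tauto
  have hbv : b ≠ v := by tauto
  have hvs : v ∈ s := hall v (by simp [SimpleGraph.Walk.support_cons])
  have has : a ∈ s := hall a (by simp [SimpleGraph.Walk.support_cons])
  have hbs : b ∈ s := hall b (by simp [SimpleGraph.Walk.support_cons])
  have hedges : eIn G s = {s(v, a), s(a, b), s(b, v)} := by
    rw [← heq]
    simp [SimpleGraph.Walk.edges_cons, SimpleGraph.Walk.edges_nil]
  have hpair : ∀ x y : V, G.Adj x y → x ∈ s → y ∈ s →
      ((x = v ∧ y = a) ∨ (x = a ∧ y = v) ∨ (x = a ∧ y = b) ∨ (x = b ∧ y = a) ∨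
        (x = b ∧ y = v) ∨ (x = v ∧ y = b)) := by
    intro x y hxy hx hy
    have hm' : s(x, y) ∈ eIn G s := mem_eIn'.2 ⟨hxy, hx, hy⟩
    rw [hedges] at hm'
    simp only [Finset.mem_insert, Finset.mem_singleton, Sym2.eq_iff] at hm'
    tauto
  have htri : ∀ x y : V, (x = v ∨ x = a ∨ x = b) → (y = v ∨ y = a ∨ y = b) → x ≠ y →
      G.Adj x y := by
    rintro x y (rfl | rfl | rfl) (rfl | rfl | rfl) hne' <;>
      first
      | exact absurd rfl hne'
      | exact h1 | exact h1.symm | exact h2 | exact h2.symm | exact h3 | exact h3.symm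
  constructor
  · intro α hα β hβ γ hγ hαβ hαγ hne
    have hp1 := hpair α β hαβ hα hβ
    have hp2 := hpair α γ hαγ hα hγ
    have hb' : β = v ∨ β = a ∨ β = b := by
      rcases hp1 with ⟨_, rfl⟩ | ⟨_, rfl⟩ | ⟨_, rfl⟩ | ⟨_, rfl⟩ | ⟨_, rfl⟩ | ⟨_, rfl⟩ <;> simp
    have hc' : γ = v ∨ γ = a ∨ γ = b := by
      rcases hp2 with ⟨_, rfl⟩ | ⟨_, rfl⟩ | ⟨_, rfl⟩ | ⟨_, rfl⟩ | ⟨_, rfl⟩ | ⟨_, rfl⟩ <;> simp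
    exact htri β γ hb' hc' hne
  · intro u hu
    by_cases huv : u = v
    · subst huv
      right; left
      have hfil : s.filter (fun w => G.Adj u w) = {a, b} := by
        ext w
        simp only [Finset.mem_filter, Finset.mem_insert, Finset.mem_singleton]
        constructor
        · rintro ⟨hw, hadj⟩
          rcases hpair u w hadj hu hw with ⟨_, rfl⟩ | ⟨h, _⟩ | ⟨h, _⟩ | ⟨h, _⟩ | ⟨h, _⟩ |
            ⟨_, rfl⟩
          · exact Or.inl rfl
          · exact absurd h.symm hav
          · exact absurd h.symm hav
          · exact absurd h.symm hbv
          · exact absurd h.symm hbv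
          · exact Or.inr rfl
        · rintro (rfl | rfl)
          · exact ⟨has, h1⟩
          · exact ⟨hbs, h3.symm⟩
      rw [dIn, hfil, Finset.card_insert_of_notMem (by simp [hab]), Finset.card_singleton]
    by_cases hua : u = a
    · subst hua
      right; left
      have hfil : s.filter (fun w => G.Adj u w) = {v, b} := by
        ext w
        simp only [Finset.mem_filter, Finset.mem_insert, Finset.mem_singleton]
        constructor
        · rintro ⟨hw, hadj⟩
          rcases hpair u w hadj hu hw with ⟨h, _⟩ | ⟨_, rfl⟩ | ⟨_, rfl⟩ | ⟨h, _⟩ | ⟨h, _⟩ |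
            ⟨h, _⟩
          · exact absurd h hav
          · exact Or.inl rfl
          · exact Or.inr rfl
          · exact absurd h hab
          · exact absurd h hab
          · exact absurd h hav
        · rintro (rfl | rfl)
          · exact ⟨hvs, h1.symm⟩
          · exact ⟨hbs, h2⟩
      rw [dIn, hfil, Finset.card_insert_of_notMem (by simp [Ne.symm hbv]),
        Finset.card_singleton]
    by_cases hub : u = b
    · subst hub
      right; left
      have hfil : s.filter (fun w => G.Adj u w) = {a, v} := by
        ext w
        simp only [Finset.mem_filter, Finset.mem_insert, Finset.mem_singleton]
        constructor
        · rintro ⟨hw, hadj⟩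
          rcases hpair u w hadj hu hw with ⟨h, _⟩ | ⟨h, _⟩ | ⟨h, _⟩ | ⟨_, rfl⟩ | ⟨_, rfl⟩ |
            ⟨h, _⟩
          · exact absurd h hbv
          · exact absurd h (Ne.symm hab)
          · exact absurd h (Ne.symm hab)
          · exact Or.inl rfl
          · exact Or.inr rfl
          · exact absurd h hbv
        · rintro (rfl | rfl)
          · exact ⟨has, h2.symm⟩
          · exact ⟨hvs, h3⟩
      rw [dIn, hfil, Finset.card_insert_of_notMem (by simp [hav]), Finset.card_singleton]
    · left
      rw [dIn, Finset.card_eq_zero, Finset.filter_eq_empty_iff]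
      intro w hw hadj
      rcases hpair u w hadj hu hw with ⟨h, _⟩ | ⟨h, _⟩ | ⟨h, _⟩ | ⟨h, _⟩ | ⟨h, _⟩ | ⟨h, _⟩ <;>
        tauto


/-! ### The case where all degrees are at most two -/

lemma maxdeg2_case (s : Finset V) (m : ℕ) (hm1 : 1 ≤ m) (hms : m + 1 ≤ s.card)
    (hQ : QQ G m s) (hdeg : ∀ u ∈ s, dIn G s u ≤ 2)
    (IH : ∀ s' : Finset V, s'.card < s.card → ∀ m', 1 ≤ m' → m' ≤ s'.card → QQ G m' s' →
      3 * (s'.card + 1 - m') ≤ (eIn G s').card ∧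
      ((eIn G s').card = 3 * (s'.card + 1 - m') → Struct G s')) :
    3 * (s.card + 1 - m) ≤ (eIn G s).card ∧
    ((eIn G s).card = 3 * (s.card + 1 - m) → Struct G s) := by
  obtain ⟨A, hAs, hAcard⟩ := Finset.exists_subset_card_eq (show m ≤ s.card by omega)
  have hnc := hQ A hAs hAcard
  rw [NoCyc] at hnc
  push_neg at hnc
  obtain ⟨v, c, hc, hall⟩ := hnc
  set C := c.support.toFinset with hCdef
  have hmemC : ∀ x, x ∈ C ↔ x ∈ c.support := fun x => List.mem_toFinset
  have hCs : C ⊆ s := fun x hx => hAs (hall x ((hmemC x).1 hx))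
  have hnbr : ∀ u ∈ C, (s.filter (fun w => G.Adj u w)) ⊆ C ∧ dIn G s u = 2 := by
    intro u hu
    obtain ⟨x, y, hxy, hax, hay, hxs, hys⟩ := two_nbrs_mem hc ((hmemC u).1 hu)
    have hxC : x ∈ C := (hmemC x).2 hxs
    have hyC : y ∈ C := (hmemC y).2 hys
    have hsub2 : {x, y} ⊆ s.filter (fun w => G.Adj u w) := by
      intro z hz
      rcases Finset.mem_insert.1 hz with rfl | hz
      · exact Finset.mem_filter.2 ⟨hCs hxC, hax⟩
      · rw [Finset.mem_singleton] at hz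
        subst hz
        exact Finset.mem_filter.2 ⟨hCs hyC, hay⟩
    have hcard2 : ({x, y} : Finset V).card = 2 := by
      rw [Finset.card_insert_of_notMem (by simp [hxy]), Finset.card_singleton]
    have hd := hdeg u (hCs hu)
    rw [dIn] at hd
    have hfil : s.filter (fun w => G.Adj u w) = {x, y} :=
      (Finset.eq_of_subset_of_card_le hsub2 (by omega)).symm
    constructor
    · rw [hfil]
      exact Finset.insert_subset hxC (Finset.singleton_subset_iff.2 hyC)
    · rw [dIn, hfil, hcard2]
  have hclosed : ∀ u ∈ C, ∀ w ∈ s, G.Adj u w → w ∈ C := by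
    intro u hu w hw hadj
    exact (hnbr u hu).1 (Finset.mem_filter.2 ⟨hw, hadj⟩)
  have hvC : v ∈ C := (hmemC v).2 c.start_mem_support
  have hk3 : 3 ≤ C.card := by
    obtain ⟨x, y, hxy, hax, hay, hxs, hys⟩ := two_nbrs_mem hc ((hmemC v).1 hvC)
    have hsub3 : {v, x, y} ⊆ C := by
      intro z hz
      rcases Finset.mem_insert.1 hz with rfl | hz
      · exact hvC
      rcases Finset.mem_insert.1 hz with rfl | hz
      · exact (hmemC z).2 hxs
      rw [Finset.mem_singleton] at hz
      subst hz
      exact (hmemC z).2 hys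
    have h3 : ({v, x, y} : Finset V).card = 3 := by
      rw [Finset.card_insert_of_notMem (by simp [hax.ne, hay.ne]),
        Finset.card_insert_of_notMem (by simp [hxy]), Finset.card_singleton]
    calc 3 = ({v, x, y} : Finset V).card := h3.symm
    _ ≤ C.card := Finset.card_le_card hsub3
  have hNCer : ∀ x₀ ∈ C, NoCyc G (C.erase x₀) := by
    intro x₀ hx₀ v₂ c₂ hc₂ hall₂
    set S₂ := c₂.support.toFinset with hS₂def
    have hmemS₂ : ∀ x, x ∈ S₂ ↔ x ∈ c₂.support := fun x => List.mem_toFinset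
    have hS₂sub : S₂ ⊆ C.erase x₀ := fun z hz => hall₂ z ((hmemS₂ z).1 hz)
    have hS₂closed : ∀ z ∈ S₂, ∀ w ∈ s, G.Adj z w → w ∈ S₂ := by
      intro z hz w hw hadj
      obtain ⟨x, y, hxy, hax, hay, hxs, hys⟩ := two_nbrs_mem hc₂ ((hmemS₂ z).1 hz)
      have hxS : x ∈ S₂ := (hmemS₂ x).2 hxs
      have hyS : y ∈ S₂ := (hmemS₂ y).2 hys
      have hzs : z ∈ s := hCs (Finset.mem_of_mem_erase (hS₂sub hz))
      have hxs' : x ∈ s := hCs (Finset.mem_of_mem_erase (hS₂sub hxS))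
      have hys' : y ∈ s := hCs (Finset.mem_of_mem_erase (hS₂sub hyS))
      have hsub2 : {x, y} ⊆ s.filter (fun w => G.Adj z w) := by
        intro q hq
        rcases Finset.mem_insert.1 hq with rfl | hq
        · exact Finset.mem_filter.2 ⟨hxs', hax⟩
        · rw [Finset.mem_singleton] at hq
          subst hq
          exact Finset.mem_filter.2 ⟨hys', hay⟩
      have hcard2 : ({x, y} : Finset V).card = 2 := by
        rw [Finset.card_insert_of_notMem (by simp [hxy]), Finset.card_singleton]
      have hd := hdeg z hzs
      rw [dIn] at hd
      have hfil : s.filter (fun w => G.Adj z w) = {x, y} :=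
        (Finset.eq_of_subset_of_card_le hsub2 (by omega)).symm
      have hwmem : w ∈ ({x, y} : Finset V) := by
        rw [← hfil]
        exact Finset.mem_filter.2 ⟨hw, hadj⟩
      rcases Finset.mem_insert.1 hwmem with rfl | hw2
      · exact hxS
      · rw [Finset.mem_singleton] at hw2
        subst hw2
        exact hyS
    have hv₂S : v₂ ∈ S₂ := (hmemS₂ v₂).2 c₂.start_mem_support
    have hv₂C : v₂ ∈ c.support := (hmemC v₂).1 (Finset.mem_of_mem_erase (hS₂sub hv₂S))
    have hx₀r : x₀ ∈ (c.rotate v₂ hv₂C).support :=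
      (mem_support_rotate hc hv₂C).2 ((hmemC x₀).1 hx₀)
    have hx₀S : x₀ ∉ S₂ := fun h => Finset.notMem_erase x₀ C (hS₂sub h)
    obtain ⟨α, β, hαβ, hα, hβ, hβs⟩ :=
      exists_crossing ((c.rotate v₂ hv₂C).takeUntil x₀ hx₀r) S₂ hv₂S hx₀S
    have hβC : β ∈ C := (hmemC β).2
      ((mem_support_rotate hc hv₂C).1 (((c.rotate v₂ hv₂C).support_takeUntil_subset hx₀r) hβs))
    exact hβ (hS₂closed α hα β (hCs hβC) hαβ)
  have hkm : C.card ≤ m := by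
    by_contra hkm
    push_neg at hkm
    obtain ⟨A₀, hA₀sub, hA₀card⟩ := Finset.exists_subset_card_eq
      (show m ≤ (C.erase v).card by rw [Finset.card_erase_of_mem hvC]; omega)
    exact hQ A₀ (fun z hz => hCs (Finset.mem_of_mem_erase (hA₀sub hz))) hA₀card
      (noCyc_mono hA₀sub (hNCer v hvC))
  have hQrest : QQ G (m + 1 - C.card) (s \ C) := by
    intro A' hA' hcard' hNC'
    have hcross : ∀ a ∈ A', ∀ b ∈ C.erase v, ¬G.Adj a b := by
      intro a ha b hb hadj
      have hbC : b ∈ C := Finset.mem_of_mem_erase hb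
      have haS : a ∈ s := (Finset.mem_sdiff.1 (hA' ha)).1
      exact (Finset.mem_sdiff.1 (hA' ha)).2 (hclosed b hbC a haS hadj.symm)
    have hun := noCyc_union hNC' (hNCer v hvC) hcross
    apply hQ (A' ∪ C.erase v) ?_ ?_ hun
    · exact Finset.union_subset (fun z hz => (Finset.mem_sdiff.1 (hA' hz)).1)
        (fun z hz => hCs (Finset.mem_of_mem_erase hz))
    · have hdisj : Disjoint A' (C.erase v) := Finset.disjoint_left.2
        (fun z hz hz' => (Finset.mem_sdiff.1 (hA' hz)).2 (Finset.mem_of_mem_erase hz'))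
      rw [Finset.card_union_of_disjoint hdisj, Finset.card_erase_of_mem hvC]
      omega
  have hcardrest : (s \ C).card = s.card - C.card := Finset.card_sdiff_of_subset hCs
  have hkle := Finset.card_le_card hCs
  obtain ⟨hineq', heq'⟩ := IH (s \ C) (by omega) (m + 1 - C.card) (by omega) (by omega) hQrest
  have hsplit : (eIn G s).card = (eIn G C).card + (eIn G (s \ C)).card :=
    card_eIn_split hCs (fun a ha b hb hbC hadj => hbC (hclosed a ha b hb hadj))
  have hdC : ∀ u ∈ C, dIn G C u = 2 := by
    intro u hu
    have h1 : C.filter (fun w => G.Adj u w) = s.filter (fun w => G.Adj u w) := by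
      apply Finset.Subset.antisymm
      · exact Finset.filter_subset_filter _ hCs
      · intro w hw
        rw [Finset.mem_filter] at hw ⊢
        exact ⟨(hnbr u hu).1 (Finset.mem_filter.2 hw), hw.2⟩
    have h2 := (hnbr u hu).2
    rw [dIn] at h2 ⊢
    rw [h1, h2]
  have hEC : (eIn G C).card = C.card := by
    have h1 := sum_dIn (G := G) C
    rw [Finset.sum_congr rfl (fun u hu => hdC u hu), Finset.sum_const, smul_eq_mul] at h1
    omega
  constructor
  · omega
  · intro hEq
    have hk3' : C.card = 3 := by omega
    have hrest : (eIn G (s \ C)).card = 3 * ((s \ C).card + 1 - (m + 1 - C.card)) := by omega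
    have hSrest := heq' hrest
    obtain ⟨x, y, hxy, hax, hay, hxs, hys⟩ := two_nbrs_mem hc ((hmemC v).1 hvC)
    have hxC : x ∈ C := (hmemC x).2 hxs
    have hyC : y ∈ C := (hmemC y).2 hys
    have hsub3 : {v, x, y} ⊆ C := by
      intro z hz
      rcases Finset.mem_insert.1 hz with rfl | hz
      · exact hvC
      rcases Finset.mem_insert.1 hz with rfl | hz
      · exact hxC
      rw [Finset.mem_singleton] at hz
      subst hz
      exact hyC
    have h3 : ({v, x, y} : Finset V).card = 3 := by
      rw [Finset.card_insert_of_notMem (by simp [hax.ne, hay.ne]),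
        Finset.card_insert_of_notMem (by simp [hxy]), Finset.card_singleton]
    have hCeq : ({v, x, y} : Finset V) = C :=
      Finset.eq_of_subset_of_card_le hsub3 (by omega)
    have hxyadj : G.Adj x y := by
      have hfx : s.filter (fun w => G.Adj x w) ⊆ C := (hnbr x hxC).1
      have hdx := (hnbr x hxC).2
      rw [dIn] at hdx
      have hsub' : s.filter (fun w => G.Adj x w) ⊆ {v, y} := by
        intro z hz
        have hzC : z ∈ ({v, x, y} : Finset V) := hCeq ▸ hfx hz
        have hzx : z ≠ x := fun h => G.irrefl (h ▸ (Finset.mem_filter.1 hz).2)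
        rcases Finset.mem_insert.1 hzC with rfl | hzC
        · exact Finset.mem_insert_self _ _
        rcases Finset.mem_insert.1 hzC with rfl | hzC
        · exact absurd rfl hzx
        · exact Finset.mem_insert_of_mem hzC
      have hvy : ({v, y} : Finset V).card = 2 := by
        rw [Finset.card_insert_of_notMem (by simp [hay.ne]), Finset.card_singleton]
      have hfileq : s.filter (fun w => G.Adj x w) = {v, y} :=
        Finset.eq_of_subset_of_card_le hsub' (by omega)
      have hy' : y ∈ s.filter (fun w => G.Adj x w) := by
        rw [hfileq]
        exact Finset.mem_insert_of_mem (Finset.mem_singleton_self y)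
      exact (Finset.mem_filter.1 hy').2
    have hcliqueC : ∀ a ∈ C, ∀ b ∈ C, a ≠ b → G.Adj a b := by
      intro a ha b hb hne
      rw [← hCeq] at ha hb
      simp only [Finset.mem_insert, Finset.mem_singleton] at ha hb
      rcases ha with rfl | rfl | rfl <;> rcases hb with rfl | rfl | rfl <;>
        first
        | exact absurd rfl hne
        | exact hax | exact hax.symm | exact hay | exact hay.symm
        | exact hxyadj | exact hxyadj.symm
    constructor
    · intro α hα β hβ γ hγ hαβ hαγ hne
      by_cases hαC : α ∈ C
      · exact hcliqueC β (hclosed α hαC β hβ hαβ) γ (hclosed α hαC γ hγ hαγ) hne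
      · have hβC : β ∉ C := fun h => hαC (hclosed β h α hα hαβ.symm)
        have hγC : γ ∉ C := fun h => hαC (hclosed γ h α hα hαγ.symm)
        exact hSrest.1 α (Finset.mem_sdiff.2 ⟨hα, hαC⟩) β (Finset.mem_sdiff.2 ⟨hβ, hβC⟩)
          γ (Finset.mem_sdiff.2 ⟨hγ, hγC⟩) hαβ hαγ hne
    · intro u hu
      by_cases huC : u ∈ C
      · right; left
        exact (hnbr u huC).2
      · have hfil : s.filter (fun w => G.Adj u w) = (s \ C).filter (fun w => G.Adj u w) := by
          ext w
          simp only [Finset.mem_filter, Finset.mem_sdiff]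
          constructor
          · rintro ⟨hw, hadj⟩
            refine ⟨⟨hw, fun hwC => huC (hclosed w hwC u hu hadj.symm)⟩, hadj⟩
          · rintro ⟨⟨hw, _⟩, hadj⟩
            exact ⟨hw, hadj⟩
        have hres := hSrest.2 u (Finset.mem_sdiff.2 ⟨hu, huC⟩)
        rw [dIn] at hres ⊢
        rw [hfil]
        exact hres

/-! ### The degree-three equality case -/

lemma deg3_struct (s : Finset V) (m : ℕ) (v : V) (hm1 : 1 ≤ m) (hv : v ∈ s)
    (hdv : dIn G s v = 3) (hms : m + 1 ≤ s.card) (hS' : Struct G (s.erase v))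
    (hE' : (eIn G (s.erase v)).card = 3 * (s.card - m)) (hQ : QQ G m s) : Struct G s := by
  obtain ⟨hT, hdegs⟩ := hS'
  set s' := s.erase v with hs'def
  have hvs' : v ∉ s' := Finset.notMem_erase v s
  have hcards' : s'.card = s.card - 1 := Finset.card_erase_of_mem hv
  set B := s'.filter (fun w => G.Adj v w) with hBdef
  have hBs : B ⊆ s' := Finset.filter_subset _ _
  have hBcard : B.card = 3 := by
    have hfeq : s.filter (fun w => G.Adj v w) = B := by
      ext w
      simp only [hBdef, hs'def, Finset.mem_filter, Finset.mem_erase]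
      constructor
      · rintro ⟨hw, ha⟩
        exact ⟨⟨ha.ne', hw⟩, ha⟩
      · rintro ⟨⟨_, hw⟩, ha⟩
        exact ⟨hw, ha⟩
    have h2 := hdv
    rw [dIn, hfeq] at h2
    exact h2
  have hadjvB : ∀ u, u ∈ B ↔ (u ∈ s' ∧ G.Adj v u) := by
    intro u
    simp [hBdef, Finset.mem_filter]
  have hsins : s = insert v s' := (Finset.insert_erase hv).symm
  by_cases hX : ∃ z ∈ s', comp G s' z = B
  · -- the neighbourhood of v is a triangle component; assemble the structure
    obtain ⟨z, hzs, hzB⟩ := hX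
    have hBclique : ∀ a ∈ B, ∀ b ∈ B, a ≠ b → G.Adj a b := by
      intro a ha b hb hne
      rw [← hzB, mem_comp_iff] at ha hb
      rcases ha with rfl | ⟨has, hza⟩
      · rcases hb with rfl | ⟨hbs, hzb⟩
        · exact absurd rfl hne
        · exact hzb
      · rcases hb with rfl | ⟨hbs, hzb⟩
        · exact hza.symm
        · exact hT z hzs a has b hbs hza hzb hne
    have hcompB : ∀ u ∈ B, comp G s' u = B := by
      intro u hu
      rw [← hzB]
      exact comp_eq_of_mem hT hzs (hzB ▸ hu)
    have hdB : ∀ u ∈ B, dIn G s' u = 2 := by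
      intro u hu
      have h2 : (comp G s' u).card = dIn G s' u + 1 := card_comp
      rw [hcompB u hu, hBcard] at h2
      omega
    constructor
    · intro a ha b hb c hc hab hac hbc
      by_cases hav : a = v
      · subst hav
        have hbB : b ∈ B := (hadjvB b).2 ⟨Finset.mem_erase.2 ⟨hab.ne', hb⟩, hab⟩
        have hcB : c ∈ B := (hadjvB c).2 ⟨Finset.mem_erase.2 ⟨hac.ne', hc⟩, hac⟩
        exact hBclique b hbB c hcB hbc
      · have has' : a ∈ s' := Finset.mem_erase.2 ⟨hav, ha⟩
        by_cases hbv : b = v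
        · subst hbv
          have hcs' : c ∈ s' := Finset.mem_erase.2 ⟨Ne.symm hbc, hc⟩
          have haB : a ∈ B := (hadjvB a).2 ⟨has', hab.symm⟩
          have hcomp : comp G s' a = B := hcompB a haB
          have hcB : c ∈ B := by
            rw [← hcomp, mem_comp_iff]
            exact Or.inr ⟨hcs', hac⟩
          exact ((hadjvB c).1 hcB).2
        · by_cases hcv : c = v
          · subst hcv
            have hbs' : b ∈ s' := Finset.mem_erase.2 ⟨hbv, hb⟩
            have haB : a ∈ B := (hadjvB a).2 ⟨has', hac.symm⟩
            have hcomp : comp G s' a = B := hcompB a haB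
            have hbB : b ∈ B := by
              rw [← hcomp, mem_comp_iff]
              exact Or.inr ⟨hbs', hab⟩
            exact ((hadjvB b).1 hbB).2.symm
          · exact hT a has' b (Finset.mem_erase.2 ⟨hbv, hb⟩) c (Finset.mem_erase.2 ⟨hcv, hc⟩)
              hab hac hbc
    · intro u hu
      by_cases huv : u = v
      · subst huv
        right; right
        exact hdv
      · have hus' : u ∈ s' := Finset.mem_erase.2 ⟨huv, hu⟩
        have hsplit : dIn G s u = dIn G s' u + if G.Adj u v then 1 else 0 := by
          conv_lhs => rw [hsins]
          exact dIn_insert hvs'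
        by_cases huB : u ∈ B
        · have hadj : G.Adj u v := ((hadjvB u).1 huB).2.symm
          rw [hsplit, if_pos hadj, hdB u huB]
          right; right; rfl
        · have hnadj : ¬ G.Adj u v := fun h => huB ((hadjvB u).2 ⟨hus', h.symm⟩)
          rw [hsplit, if_neg hnadj]
          have := hdegs u hus'
          omega
  · -- otherwise we build an induced forest on m vertices, contradiction
    exfalso
    have hex : ∀ C : Finset V, ∃ P : Finset V,
        ((∃ z ∈ s', comp G s' z = C) → 3 ≤ C.card →
          (P ⊆ C ∧ P.card = 2 ∧ (P ∩ B).card ≤ 1)) := by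
      intro C
      by_cases hC : (∃ z ∈ s', comp G s' z = C) ∧ 3 ≤ C.card
      · obtain ⟨⟨z, hzs, hzC⟩, hC3⟩ := hC
        have hCB : ¬ C ⊆ B := by
          intro hsub
          have hCeq : C = B := Finset.eq_of_subset_of_card_le hsub (by omega)
          exact hX ⟨z, hzs, by rw [hzC, hCeq]⟩
        obtain ⟨x, hxC, hxB⟩ := Finset.not_subset.1 hCB
        have hCx : (C.erase x).Nonempty := by
          rw [← Finset.card_pos, Finset.card_erase_of_mem hxC]
          omega
        obtain ⟨y, hy⟩ := hCx
        have hyx : y ≠ x := (Finset.mem_erase.1 hy).1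
        refine ⟨{x, y}, fun _ _ => ⟨?_, ?_, ?_⟩⟩
        · exact Finset.insert_subset hxC
            (Finset.singleton_subset_iff.2 (Finset.mem_of_mem_erase hy))
        · rw [Finset.card_insert_of_notMem (by simp [Ne.symm hyx]), Finset.card_singleton]
        · have hsub : ({x, y} : Finset V) ∩ B ⊆ {y} := by
            intro q hq
            obtain ⟨hq1, hq2⟩ := Finset.mem_inter.1 hq
            rcases Finset.mem_insert.1 hq1 with rfl | hq1
            · exact absurd hq2 hxB
            · exact hq1
          calc (({x, y} : Finset V) ∩ B).card ≤ ({y} : Finset V).card :=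
                Finset.card_le_card hsub
          _ = 1 := Finset.card_singleton y
      · exact ⟨∅, fun h1 h2 => absurd ⟨h1, h2⟩ hC⟩
    choose pk hpk using hex
    set T := s'.filter (fun u => dIn G s' u = 0 ∨ u ∈ pk (comp G s' u)) with hTdef
    have hfib : ∀ C ∈ s'.image (fun u => comp G s' u),
        s'.filter (fun u => comp G s' u = C) = C := by
      intro C hC
      obtain ⟨z, hzs, hzC⟩ := Finset.mem_image.1 hC
      ext w
      simp only [Finset.mem_filter]
      constructor
      · rintro ⟨hws, hwc⟩
        rw [← hwc]
        exact self_mem_comp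
      · intro hwC
        rw [← hzC] at hwC
        have hws : w ∈ s' := comp_subset hzs hwC
        refine ⟨hws, ?_⟩
        rw [← hzC]
        exact comp_eq_of_mem hT hzs hwC
    have hsum : ∑ u ∈ s',
        ((if dIn G s' u = 0 ∨ u ∈ pk (comp G s' u) then 6 else 0) + dIn G s' u)
        = 6 * s'.card := by
      set K := s'.image (fun u => comp G s' u) with hK
      have hmaps : ∀ u ∈ s', comp G s' u ∈ K := fun u hu => Finset.mem_image_of_mem _ hu
      rw [← Finset.sum_fiberwise_of_maps_to hmaps]
      have hper : ∀ C ∈ K, ∑ u ∈ s'.filter (fun u => comp G s' u = C),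
          ((if dIn G s' u = 0 ∨ u ∈ pk (comp G s' u) then 6 else 0) + dIn G s' u)
          = 6 * C.card := by
        intro C hC
        rw [hfib C hC]
        obtain ⟨z, hzs, hzC⟩ := Finset.mem_image.1 hC
        have hCsub : C ⊆ s' := hzC ▸ comp_subset hzs
        have hcompC : ∀ u ∈ C, comp G s' u = C := by
          intro u hu
          rw [← hzC] at hu ⊢
          exact comp_eq_of_mem hT hzs hu
        have hdinC : ∀ u ∈ C, dIn G s' u = C.card - 1 := by
          intro u hu
          have h2 : (comp G s' u).card = dIn G s' u + 1 := card_comp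
          rw [hcompC u hu] at h2
          omega
        have hcz : C.card = dIn G s' z + 1 := by
          rw [← hzC, card_comp]
        have hdz := hdegs z hzs
        by_cases hz0 : dIn G s' z = 0
        · have hc1 : C.card = 1 := by omega
          obtain ⟨w, hw⟩ := Finset.card_eq_one.1 hc1
          have hwC : w ∈ C := by
            rw [hw]
            exact Finset.mem_singleton_self w
          have hw0 : dIn G s' w = 0 := by
            have := hdinC w hwC
            omega
          rw [hw, Finset.sum_singleton, hw0, Finset.card_singleton]
          rw [if_pos (Or.inl rfl)]
        · have h23 : 3 ≤ C.card := by
            rcases hdz with h | h | h <;> omega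
          obtain ⟨hpk1, hpk2, _⟩ := hpk C ⟨z, hzs, hzC⟩ h23
          have hkept : ∀ u ∈ C,
              (if dIn G s' u = 0 ∨ u ∈ pk (comp G s' u) then 6 else 0)
              = (if u ∈ pk C then 6 else 0) := by
            intro u hu
            rw [hcompC u hu]
            have hd : dIn G s' u = C.card - 1 := hdinC u hu
            have hne0 : ¬ dIn G s' u = 0 := by omega
            by_cases hupk : u ∈ pk C
            · rw [if_pos (Or.inr hupk), if_pos hupk]
            · rw [if_neg (by tauto), if_neg hupk]
          rw [Finset.sum_congr rfl (fun u hu => by rw [hkept u hu, hdinC u hu]),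
            Finset.sum_add_distrib]
          have hsum1 : ∑ u ∈ C, (if u ∈ pk C then 6 else 0) = 12 := by
            rw [Finset.sum_ite_mem, Finset.inter_eq_right.2 hpk1, Finset.sum_const, hpk2,
              smul_eq_mul]
          have hsum2 : ∑ _u ∈ C, (C.card - 1) = C.card * (C.card - 1) := by
            rw [Finset.sum_const, smul_eq_mul]
          rw [hsum1, hsum2]
          have hc34 : C.card = 3 ∨ C.card = 4 := by
            rcases hdz with h | h | h <;> omega
          rcases hc34 with h | h <;> rw [h]
      rw [Finset.sum_congr rfl hper, ← Finset.mul_sum]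
      congr 1
      have h1 : s'.card = ∑ C ∈ K, (s'.filter (fun u => comp G s' u = C)).card :=
        Finset.card_eq_sum_card_fiberwise hmaps
      rw [h1]
      exact (Finset.sum_congr rfl (fun C hC => by rw [hfib C hC])).symm
    have hTcard : T.card = m - 1 := by
      have h1 : ∑ u ∈ s', (if dIn G s' u = 0 ∨ u ∈ pk (comp G s' u) then 6 else 0)
          = 6 * T.card := by
        rw [hTdef]
        rw [← Finset.sum_filter]
        rw [Finset.sum_const, smul_eq_mul, mul_comm]
      have h2 := sum_dIn (G := G) s'
      rw [Finset.sum_add_distrib, h1, h2, hE'] at hsum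
      omega
    set N := Fintype.card V with hN
    set e0 := Fintype.equivFin V with he0
    set f : V → ℕ := fun u =>
      if u = v then 2 * N + 1 else if G.Adj v u then N + (e0 u : ℕ) else (e0 u : ℕ) with hf
    have hfv : f v = 2 * N + 1 := by simp [hf]
    have hfadj : ∀ u, u ≠ v → G.Adj v u → f u = N + (e0 u : ℕ) := by
      intro u h1 h2
      simp [hf, h1, h2]
    have hfnadj : ∀ u, u ≠ v → ¬G.Adj v u → f u = (e0 u : ℕ) := by
      intro u h1 h2
      simp [hf, h1, h2]
    have he0lt : ∀ u : V, (e0 u : ℕ) < N := fun u => (e0 u).isLt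
    have hfinj : ∀ a b : V, f a = f b → a = b := by
      intro a b hab
      by_cases ha : a = v <;> by_cases hb : b = v
      · rw [ha, hb]
      · exfalso
        rw [ha, hfv] at hab
        have := he0lt b
        by_cases hadj : G.Adj v b
        · rw [hfadj b hb hadj] at hab
          omega
        · rw [hfnadj b hb hadj] at hab
          omega
      · exfalso
        rw [hb, hfv] at hab
        have := he0lt a
        by_cases hadj : G.Adj v a
        · rw [hfadj a ha hadj] at hab
          omega
        · rw [hfnadj a ha hadj] at hab
          omega
      · have hea : (e0 a : ℕ) < N := he0lt a
        have heb : (e0 b : ℕ) < N := he0lt b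
        have hval : (e0 a : ℕ) = (e0 b : ℕ) := by
          by_cases hadja : G.Adj v a <;> by_cases hadjb : G.Adj v b
          · rw [hfadj a ha hadja, hfadj b hb hadjb] at hab
            omega
          · rw [hfadj a ha hadja, hfnadj b hb hadjb] at hab
            omega
          · rw [hfnadj a ha hadja, hfadj b hb hadjb] at hab
            omega
          · rw [hfnadj a ha hadja, hfnadj b hb hadjb] at hab
            omega
        exact e0.injective (Fin.val_inj.1 hval)
    have hTs' : T ⊆ s' := Finset.filter_subset _ _
    have hvT : v ∉ T := fun h => hvs' (hTs' h)
    have hTnbr : ∀ u ∈ T, ∀ w ∈ T, G.Adj u w →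
        (dIn G s' u ≠ 0 ∧ w ∈ pk (comp G s' u) ∧ w ≠ u) := by
      intro u hu w hw hadj
      have hus' := hTs' hu
      have hws' := hTs' hw
      have hdu : dIn G s' u ≠ 0 := by
        intro h0
        rw [dIn, Finset.card_eq_zero] at h0
        have : w ∈ s'.filter (fun x => G.Adj u x) := Finset.mem_filter.2 ⟨hws', hadj⟩
        rw [h0] at this
        exact absurd this (Finset.notMem_empty w)
      have hdw : dIn G s' w ≠ 0 := by
        intro h0
        rw [dIn, Finset.card_eq_zero] at h0
        have : u ∈ s'.filter (fun x => G.Adj w x) := Finset.mem_filter.2 ⟨hus', hadj.symm⟩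
        rw [h0] at this
        exact absurd this (Finset.notMem_empty u)
      have hwkept := (Finset.mem_filter.1 hw).2
      have hwpk : w ∈ pk (comp G s' w) := by
        rcases hwkept with h | h
        · exact absurd h hdw
        · exact h
      have hcc : comp G s' w = comp G s' u := comp_eq_of_adj' hT hws' hus' hadj.symm
      exact ⟨hdu, hcc ▸ hwpk, hadj.ne'⟩
    have hcond : ∀ u ∈ insert v T,
        ((insert v T).filter (fun w => G.Adj u w ∧ f u < f w)).card ≤ 1 := by
      intro u hu
      rcases Finset.mem_insert.1 hu with rfl | huT
      · have hempty : (insert u T).filter (fun w => G.Adj u w ∧ f u < f w) = ∅ := by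
          rw [Finset.filter_eq_empty_iff]
          intro w _
          rintro ⟨hadj, hlt⟩
          have hwv : w ≠ u := hadj.ne'
          rw [hfv] at hlt
          have := he0lt w
          by_cases hadj2 : G.Adj u w
          · rw [hfadj w hwv hadj2] at hlt
            omega
          · rw [hfnadj w hwv hadj2] at hlt
            omega
        rw [hempty]
        simp
      · have hus' := hTs' huT
        have huv : u ≠ v := fun h => hvs' (h ▸ hus')
        by_cases hd0 : dIn G s' u = 0
        · apply Finset.card_le_one.2
          intro w1 hw1 w2 hw2
          have hsub : ∀ w ∈ (insert v T).filter (fun w => G.Adj u w ∧ f u < f w), w = v := by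
            intro w hw
            obtain ⟨hwm, hadj, _⟩ := Finset.mem_filter.1 hw
            rcases Finset.mem_insert.1 hwm with rfl | hwT
            · rfl
            · exact absurd hd0 (hTnbr u huT w hwT hadj).1
          rw [hsub w1 hw1, hsub w2 hw2]
        · have hupk : u ∈ pk (comp G s' u) := by
            have h := (Finset.mem_filter.1 huT).2
            tauto
          have hcompu : 3 ≤ (comp G s' u).card := by
            have h1 := hdegs u hus'
            have h2 : (comp G s' u).card = dIn G s' u + 1 := card_comp
            omega
          obtain ⟨hp1, hp2, hp3⟩ := hpk (comp G s' u) ⟨u, hus', rfl⟩ hcompu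
          by_cases huB : u ∈ B
          · apply Finset.card_le_one.2
            intro w1 hw1 w2 hw2
            have hsub : ∀ w ∈ (insert v T).filter (fun w => G.Adj u w ∧ f u < f w),
                w = v := by
              intro w hw
              obtain ⟨hwm, hadj, hlt⟩ := Finset.mem_filter.1 hw
              rcases Finset.mem_insert.1 hwm with rfl | hwT
              · rfl
              · exfalso
                obtain ⟨_, hwpk, hwne⟩ := hTnbr u huT w hwT hadj
                by_cases hwB : w ∈ B
                · have h2le : 2 ≤ ((pk (comp G s' u)) ∩ B).card :=
                    Finset.one_lt_card.2 ⟨u, Finset.mem_inter.2 ⟨hupk, huB⟩, w,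
                      Finset.mem_inter.2 ⟨hwpk, hwB⟩, Ne.symm hwne⟩
                  omega
                · have hws' := hTs' hwT
                  have hnadj : ¬ G.Adj v w := fun h =>
                    hwB (Finset.mem_filter.2 ⟨hws', h⟩)
                  have hadjvu : G.Adj v u := ((hadjvB u).1 huB).2
                  have hwv : w ≠ v := fun h => hvs' (h ▸ hws')
                  rw [hfadj u huv hadjvu, hfnadj w hwv hnadj] at hlt
                  have := he0lt w
                  omega
            rw [hsub w1 hw1, hsub w2 hw2]
          · have hsub : (insert v T).filter (fun w => G.Adj u w ∧ f u < f w)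
                ⊆ (pk (comp G s' u)).erase u := by
              intro w hw
              obtain ⟨hwm, hadj, _⟩ := Finset.mem_filter.1 hw
              rcases Finset.mem_insert.1 hwm with rfl | hwT
              · exact absurd (Finset.mem_filter.2 ⟨hus', hadj.symm⟩) huB
              · obtain ⟨_, hwpk, hwne⟩ := hTnbr u huT w hwT hadj
                exact Finset.mem_erase.2 ⟨hwne, hwpk⟩
            have h1 := Finset.card_le_card hsub
            have h2 := Finset.card_erase_of_mem hupk
            omega
    have hNC : NoCyc G (insert v T) := noCyc_of_rank _ f (fun a _ b _ h => hfinj a b h) hcond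
    have hcard : (insert v T).card = m := by
      rw [Finset.card_insert_of_notMem hvT, hTcard]
      omega
    have hsubs : insert v T ⊆ s :=
      Finset.insert_subset hv (fun z hz => Finset.erase_subset _ _ (hTs' hz))
    exact hQ (insert v T) hsubs hcard hNC


/-! ### Main induction -/

lemma main : ∀ (n : ℕ) (s : Finset V), s.card = n → ∀ m : ℕ, 1 ≤ m → m ≤ n → QQ G m s →
    3 * (n + 1 - m) ≤ (eIn G s).card ∧
    ((eIn G s).card = 3 * (n + 1 - m) → Struct G s) := by
  intro n
  induction n using Nat.strong_induction_on with
  | _ n IH =>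
    intro s hs m hm1 hmn hQ
    subst hs
    rcases eq_or_lt_of_le hmn with heq | hlt
    · have h1 : 3 * (s.card + 1 - m) = 3 := by omega
      have hb := base_case (G := G) s m heq.symm hQ
      rw [h1]
      exact hb
    · by_cases hdeg : ∃ w ∈ s, 3 ≤ dIn G s w
      · obtain ⟨v, hv, hdv3⟩ := hdeg
        have hQ' : QQ G m (s.erase v) :=
          fun A hA hAc => hQ A (hA.trans (Finset.erase_subset v s)) hAc
        have hcard' : (s.erase v).card = s.card - 1 := Finset.card_erase_of_mem hv
        obtain ⟨h1, h2⟩ := IH (s.card - 1) (by omega) (s.erase v) hcard' m hm1 (by omega) hQ'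
        have hsplitE : (eIn G s).card = (eIn G (s.erase v)).card + dIn G s v :=
          card_eIn_erase hv
        constructor
        · omega
        · intro hEq
          have hdv : dIn G s v = 3 := by omega
          have hE' : (eIn G (s.erase v)).card = 3 * (s.card - m) := by omega
          have hS' : Struct G (s.erase v) := h2 (by omega)
          exact deg3_struct s m v hm1 hv hdv (by omega) hS' hE' hQ
      · push_neg at hdeg
        exact maxdeg2_case s m hm1 (by omega) hQ (fun u hu => by have := hdeg u hu; omega)
          (fun s' hlt' m' ha hb hc => IH s'.card (by omega) s' rfl m' ha hb hc)

lemma reach_adj (hT : Trans G Finset.univ) : ∀ {u w : V}, G.Walk u w → u ≠ w → G.Adj u w := by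
  intro u w p
  induction p with
  | nil => exact fun h => absurd rfl h
  | @cons a x b h q ih =>
    intro hne
    by_cases hxb : x = b
    · subst hxb
      exact h
    · exact hT x (Finset.mem_univ x) a (Finset.mem_univ a) b (Finset.mem_univ b)
        h.symm (ih hxb) hne


end ClawFreeAux

/-- Equality case for `n < 4t`: a simple graph on `n ≥ 1` vertices with no induced forest
on `2t+1` vertices (`t ≥ 1`) and exactly `g(n,t)` edges has every connected component a
complete graph on `1`, `3` or `4` vertices. -/
theorem graph_claw_free_equality_small {V : Type*} [Fintype V] (n t : ℕ) (hn : 1 ≤ n)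
    (ht : 1 ≤ t) (hnt : n < 4 * t) (hcard : Fintype.card V = n) (G : SimpleGraph V)
    (hforest : ∀ S : Set V, S.ncard = 2 * t + 1 → ¬ (G.induce S).IsAcyclic)
    (hedges : G.edgeSet.ncard = g t n) :
    (∀ u w : V, G.Reachable u w → u ≠ w → G.Adj u w) ∧
    (∀ v : V, (G.connectedComponentMk v).supp.ncard = 1 ∨
      (G.connectedComponentMk v).supp.ncard = 3 ∨
      (G.connectedComponentMk v).supp.ncard = 4) := by
  classical
  by_cases h2t : n ≤ 2 * t
  · have hg : g t n = 0 := by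
      obtain ⟨n', rfl⟩ : ∃ n', n = n' + 1 := ⟨n - 1, by omega⟩
      by_cases hltg : n' + 1 < 2 * t
      · simp [g, hltg]
      · simp only [g, if_neg hltg, if_pos (show n' + 1 ≤ 4 * t by omega)]
        omega
    rw [hg] at hedges
    have hnoedge : G.edgeSet = ∅ := by
      rwa [Set.ncard_eq_zero (Set.toFinite _)] at hedges
    have hbot : G = ⊥ := SimpleGraph.edgeSet_eq_empty.1 hnoedge
    subst hbot
    constructor
    · intro u w hr hne
      exact absurd (SimpleGraph.reachable_bot.1 hr) hne
    · intro v
      left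
      have hsupp : (SimpleGraph.connectedComponentMk ⊥ v).supp = {v} := by
        ext w
        simp [SimpleGraph.ConnectedComponent.mem_supp_iff,
          SimpleGraph.ConnectedComponent.eq, SimpleGraph.reachable_bot]
      rw [hsupp, Set.ncard_singleton]
  · have hg : g t n = 3 * (n - 2 * t) := by
      obtain ⟨n', rfl⟩ : ∃ n', n = n' + 1 := ⟨n - 1, by omega⟩
      simp [g, show ¬(n' + 1 < 2 * t) by omega, show n' + 1 ≤ 4 * t by omega]
    have hQ : ClawFreeAux.QQ G (2 * t + 1) (Finset.univ : Finset V) := by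
      intro A _ hAcard hNC
      have hacy := ClawFreeAux.isAcyclic_induce_of_noCyc hNC
      exact hforest (↑A) (by rw [Set.ncard_coe_finset, hAcard]) hacy
    have hcardV : (Finset.univ : Finset V).card = n := by rw [Finset.card_univ, hcard]
    have hedgeeq : (ClawFreeAux.eIn G Finset.univ).card = G.edgeSet.ncard := by
      rw [ClawFreeAux.eIn_univ]
      exact (Set.ncard_eq_toFinset_card' _).symm
    obtain ⟨hineq, heqs⟩ :=
      ClawFreeAux.main n Finset.univ hcardV (2 * t + 1) (by omega) (by omega) hQ
    have hEq : (ClawFreeAux.eIn G Finset.univ).card = 3 * (n + 1 - (2 * t + 1)) := by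
      rw [hedgeeq, hedges, hg]
      congr 1
      omega
    obtain ⟨hTr, hdeg⟩ := heqs hEq
    have hreach : ∀ u w : V, G.Reachable u w → u ≠ w → G.Adj u w := by
      intro u w hr hne
      obtain ⟨p⟩ := hr
      exact ClawFreeAux.reach_adj hTr p hne
    refine ⟨hreach, fun v => ?_⟩
    have hsupp : (G.connectedComponentMk v).supp
        = ↑(insert v (Finset.univ.filter (fun w => G.Adj v w))) := by
      ext w
      simp only [SimpleGraph.ConnectedComponent.mem_supp_iff,
        SimpleGraph.ConnectedComponent.eq, Finset.coe_insert, Set.mem_insert_iff,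
        Finset.coe_filter, Set.mem_setOf_eq, Finset.mem_univ, true_and]
      constructor
      · intro hr
        by_cases hwv : w = v
        · exact Or.inl hwv
        · exact Or.inr (hreach w v hr hwv).symm
      · rintro (rfl | hw)
        · exact SimpleGraph.Reachable.refl _
        · exact hw.symm.reachable
    rw [hsupp, Set.ncard_coe_finset,
      Finset.card_insert_of_notMem (fun h => G.irrefl (Finset.mem_filter.1 h).2)]
    have hd := hdeg v (Finset.mem_univ v)
    have hconv : (Finset.univ.filter (fun w => G.Adj v w)).card
        = ClawFreeAux.dIn G Finset.univ v := rfl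
    rw [hconv]
    omega
end

section
/- Let t ≥ 1 and n > 2t be integers, and let G be a simple graph on n vertices such that for every set S of 2t+1 vertices the induced subgraph G[S] is not acyclic. Then G has a vertex of degree at least ⌈n/t⌉ − 1. -/
open SimpleGraph Finset

section Aux
variable {V : Type*} {G : SimpleGraph V} {S T : Set V}

private lemma walk_lift : ∀ {u v : V} (p : G.Walk u v) (_ : ∀ x ∈ p.support, x ∈ S)
    (hu : u ∈ S) (hv : v ∈ S),
    ∃ q : (G.induce S).Walk ⟨u, hu⟩ ⟨v, hv⟩,
      q.map (SimpleGraph.Embedding.induce S).toHom = p := by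
  intro u v p
  induction p with
  | nil => intro hp hu hv; exact ⟨.nil, rfl⟩
  | @cons a b c h p ih =>
    intro hp hu hv
    have hb : b ∈ S := hp b (by simp)
    obtain ⟨q, hq⟩ := ih (fun x hx => hp x (by simp [hx])) hb hv
    exact ⟨.cons (by simpa using h) q, by simp [hq]⟩

private lemma no_cycle_in (hS : (G.induce S).IsAcyclic) {u : V} (p : G.Walk u u)
    (hp : p.IsCycle) (hsub : ∀ x ∈ p.support, x ∈ S) : False := by
  have hu : u ∈ S := hsub u p.start_mem_support
  obtain ⟨q, hq⟩ := walk_lift p hsub hu hu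
  have : q.IsCycle := by
    have hinj : Function.Injective ((Embedding.induce (G := G) S).toHom) :=
      (Embedding.induce (G := G) S).injective
    rw [← SimpleGraph.Walk.map_isCycle_iff_of_injective hinj, hq]
    exact hp
  exact hS q this

private lemma acyclic_mono (hST : S ⊆ T) (hT : (G.induce T).IsAcyclic) :
    (G.induce S).IsAcyclic := by
  intro u q hq
  have hc : (q.map (SimpleGraph.Embedding.induce S).toHom).IsCycle :=
    hq.map (Embedding.induce (G := G) S).injective
  exact no_cycle_in hT _ hc (by
    intro x hx
    rw [SimpleGraph.Walk.support_map] at hx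
    obtain ⟨y, _, rfl⟩ := List.mem_map.mp hx
    exact hST y.2)

private lemma key_lemma [DecidableEq V] (hS : (G.induce S).IsAcyclic) {w : V} (hw : w ∉ S)
    (hnot : ¬(G.induce (insert w S)).IsAcyclic) :
    ∃ x y : S, x ≠ y ∧ G.Adj w x ∧ G.Adj w y ∧ (G.induce S).Reachable x y := by
  rw [SimpleGraph.IsAcyclic] at hnot
  push_neg at hnot
  obtain ⟨v, c, hc⟩ := hnot
  set p := c.map (Embedding.induce (G := G) (insert w S)).toHom with hpdef
  have hp : p.IsCycle := hc.map (Embedding.induce (G := G) _).injective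
  have hpsub : ∀ x ∈ p.support, x ∈ insert w S := by
    intro x hx
    rw [SimpleGraph.Walk.support_map] at hx
    obtain ⟨y, _, rfl⟩ := List.mem_map.mp hx
    exact y.2
  by_cases hwmem : w ∈ p.support
  · -- rotate to start at w
    obtain ⟨q0, hq0c, hq0sub⟩ : ∃ q : G.Walk w w, q.IsCycle ∧ ∀ x ∈ q.support, x ∈ insert w S := by
      refine ⟨p.rotate w hwmem, hp.rotate hwmem, ?_⟩
      intro x hx
      rw [SimpleGraph.Walk.support_eq_cons] at hx
      rw [List.mem_cons] at hx
      rcases hx with hx | hx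
      · exact hx ▸ Set.mem_insert _ _
      · have := ((SimpleGraph.Walk.support_rotate p w hwmem).perm.mem_iff).mp hx
        exact hpsub x (List.mem_of_mem_tail this)
    clear hpsub hp hwmem hpdef hc
    cases q0 with
    | nil => exact absurd hq0c (by simp [SimpleGraph.Walk.isCycle_def])
    | @cons _ b _ h q =>
      rw [SimpleGraph.Walk.cons_isCycle_iff] at hq0c
      obtain ⟨hqpath, hedge⟩ := hq0c
      have hlen : 2 ≤ q.length := by
        have h3 := (SimpleGraph.Walk.cons_isCycle_iff q h |>.mpr ⟨hqpath, hedge⟩).three_le_length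
        simpa using h3
      cases hrev : q.reverse with
      | nil =>
        exfalso
        have : q = SimpleGraph.Walk.nil.reverse := by
          rw [← hrev]; simp
        rw [this] at hlen; simp at hlen
      | @cons _ y _ hwy r =>
        -- q.reverse = cons hwy r, with hwy : G.Adj w y, r : Walk y b
        have hqrev : q = (SimpleGraph.Walk.cons hwy r).reverse := by rw [← hrev]; simp
        have hrevpath : (SimpleGraph.Walk.cons hwy r).IsPath := by
          rw [← hrev]; exact hqpath.reverse
        have hrpath : r.IsPath := hrevpath.of_cons
        have hwnotr : w ∉ r.support := by
          have := hrevpath.2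
          simp only [SimpleGraph.Walk.support_cons, List.nodup_cons] at this
          exact this.1
        have hbS : b ∈ S := by
          have hb := hq0sub b (by simp)
          rcases hb with hb | hb
          · exact absurd hb.symm h.ne
          · exact hb
        have hyS : y ∈ S := by
          have hy := hq0sub y (by
            simp only [SimpleGraph.Walk.support_cons, List.mem_cons]
            right
            have : y ∈ q.support := by
              rw [hqrev]; simp
            exact this)
          rcases hy with hy | hy
          · exact absurd hy.symm hwy.ne
          · exact hy
        have hrsub : ∀ x ∈ r.support, x ∈ S := by
          intro x hx
          have hxq : x ∈ q.support := by
            rw [hqrev]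
            simp only [SimpleGraph.Walk.support_reverse, List.mem_reverse,
              SimpleGraph.Walk.support_cons, List.mem_cons]
            right; exact hx
          have := hq0sub x (by simp [SimpleGraph.Walk.support_cons, hxq])
          rcases this with h' | h'
          · exact absurd (h' ▸ hx) hwnotr
          · exact h'
        have hbney : b ≠ y := by
          rintro rfl
          have : r.IsPath := hrpath
          have := (SimpleGraph.Walk.isPath_iff_eq_nil (p := r)).mp hrpath
          subst this
          rw [hqrev] at hlen
          simp at hlen
        obtain ⟨rr, -⟩ := walk_lift r hrsub hyS hbS
        exact ⟨⟨b, hbS⟩, ⟨y, hyS⟩, by simpa [Subtype.ext_iff] using hbney,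
          h, hwy, (SimpleGraph.Reachable.symm ⟨rr⟩)⟩
  · exact absurd (no_cycle_in hS p hp (fun x hx => by
      rcases hpsub x hx with h' | h'
      · exact absurd (h' ▸ hx) hwmem
      · exact h')) (by simp)

end Aux

/-- A simple graph on `n > 2t` vertices (`t ≥ 1`) with no induced forest on `2t+1`
vertices has a vertex of degree at least `⌈n/t⌉ − 1`. -/
theorem graph_claw_free_max_degree {V : Type*} [Fintype V] (n t : ℕ)
    (ht : 1 ≤ t) (hnt : 2 * t < n) (hcard : Fintype.card V = n) (G : SimpleGraph V)
    (hforest : ∀ S : Set V, S.ncard = 2 * t + 1 → ¬ (G.induce S).IsAcyclic) :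
    ∃ v : V, (n + t - 1) / t - 1 ≤ (G.neighborSet v).ncard := by
  classical
  suffices hmain : ∃ v : V, n ≤ t * (G.degree v + 1) by
    obtain ⟨v, hv⟩ := hmain
    refine ⟨v, ?_⟩
    have hdeg : (G.neighborSet v).ncard = G.degree v := by
      rw [← SimpleGraph.card_neighborSet_eq_degree, Set.ncard_eq_toFinset_card',
        Set.toFinset_card]
    rw [hdeg]
    have h2 : (n + t - 1) / t ≤ G.degree v + 1 := by
      rw [Nat.div_le_iff_le_mul_add_pred (by omega)]
      have e1 : n + t - 1 = n + (t - 1) := by omega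
      rw [e1]
      exact Nat.add_le_add_right hv _
    exact Nat.sub_le_iff_le_add.mpr (by omega)
  by_contra hcon
  push_neg at hcon
  -- maximal acyclic finset
  have hne : (Finset.univ.filter (fun s : Finset V => (G.induce (↑s : Set V)).IsAcyclic)).Nonempty := by
    refine ⟨∅, Finset.mem_filter.mpr ⟨Finset.mem_univ _, ?_⟩⟩
    intro v
    exact absurd v.2 (by simp)
  obtain ⟨F, hFmem, hFmax⟩ := Finset.exists_max_image _ Finset.card hne
  have hFacy : (G.induce (↑F : Set V)).IsAcyclic := (Finset.mem_filter.mp hFmem).2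
  have hmax : ∀ w, w ∉ F → ¬ (G.induce (insert w (↑F : Set V))).IsAcyclic := by
    intro w hw hacy
    have hmem : insert w F ∈ Finset.univ.filter
        (fun s : Finset V => (G.induce (↑s : Set V)).IsAcyclic) := by
      refine Finset.mem_filter.mpr ⟨Finset.mem_univ _, ?_⟩
      rwa [Finset.coe_insert]
    have := hFmax _ hmem
    rw [Finset.card_insert_of_notMem hw] at this
    omega
  have hcard2t : F.card ≤ 2 * t := by
    by_contra hgt
    obtain ⟨F', hsub, hcardF'⟩ := Finset.exists_subset_card_eq (s := F) (n := 2*t+1) (by omega)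
    exact hforest (↑F' : Set V) (by rw [Set.ncard_coe_finset, hcardF'])
      (acyclic_mono (by exact_mod_cast hsub) hFacy)
  -- key data for outside vertices
  have key : ∀ w : V, w ∉ F → ∃ x y : (↑F : Set V), x ≠ y ∧ G.Adj w x ∧ G.Adj w y ∧
      (G.induce (↑F : Set V)).Reachable x y := by
    intro w hw
    exact key_lemma hFacy (by simpa using hw) (hmax w hw)
  choose X Y hXY hadjX hadjY hreach using key
  set GS := G.induce (↑F : Set V) with hGS
  let κ : {w : V // w ∉ F} → GS.ConnectedComponent :=
    fun w => GS.connectedComponentMk (X w.1 w.2)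
  let nK : GS.ConnectedComponent → ℕ :=
    fun K => (Finset.univ.filter (fun w : {w : V // w ∉ F} => κ w = K)).card
  let fK : GS.ConnectedComponent → ℕ :=
    fun K => (Finset.univ.filter
      (fun v : (↑F : Set V) => GS.connectedComponentMk v = K)).card
  have hsum_n : ∑ K, nK K = n - F.card := by
    have h1 := Finset.card_eq_sum_card_fiberwise
      (s := (Finset.univ : Finset {w : V // w ∉ F})) (f := κ) (t := Finset.univ)
      (fun x _ => Finset.mem_univ _)
    rw [Finset.card_univ] at h1
    have h2 : Fintype.card {w : V // w ∉ F} = n - F.card := by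
      rw [Fintype.card_subtype_compl, hcard, Fintype.card_coe]
    rw [h2] at h1
    exact h1.symm
  have hsum_f : ∑ K, fK K = F.card := by
    have h1 := Finset.card_eq_sum_card_fiberwise
      (s := (Finset.univ : Finset ((↑F : Set V)))) (f := fun v => GS.connectedComponentMk v)
      (t := Finset.univ) (fun x _ => Finset.mem_univ _)
    rw [Finset.card_univ] at h1
    have h2 : Fintype.card (↑F : Set V) = F.card := by
      rw [← Set.toFinset_card, Finset.toFinset_coe]
    rw [h2] at h1
    exact h1.symm
  have hperK : ∀ K, 0 < nK K → 2*t*fK K + 2*t*nK K ≤ fK K * (n-1) := by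
    intro K hKpos
    obtain ⟨w₀, hw₀⟩ := Finset.card_pos.mp hKpos
    have hκw₀ : κ w₀ = K := (Finset.mem_filter.mp hw₀).2
    set A : Finset ((↑F : Set V)) :=
      Finset.univ.filter (fun v : (↑F : Set V) => GS.connectedComponentMk v = K) with hA
    have hmemA : ∀ w : {w : V // w ∉ F}, κ w = K →
        X w.1 w.2 ∈ A ∧ Y w.1 w.2 ∈ A := by
      intro w hw
      constructor
      · exact Finset.mem_filter.mpr ⟨Finset.mem_univ _, hw⟩
      · refine Finset.mem_filter.mpr ⟨Finset.mem_univ _, ?_⟩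
        have hYX : GS.connectedComponentMk (Y w.1 w.2) = GS.connectedComponentMk (X w.1 w.2) :=
          (SimpleGraph.ConnectedComponent.eq).mpr (hreach w.1 w.2).symm
        rw [hYX]; exact hw
    have hA2 : 1 < A.card :=
      Finset.one_lt_card.mpr ⟨_, (hmemA w₀ hκw₀).1, _, (hmemA w₀ hκw₀).2, hXY w₀.1 w₀.2⟩
    have hnbr : ∀ v ∈ A, ∃ z : (↑F : Set V), G.Adj v.1 z.1 := by
      intro v hv
      obtain ⟨u, hu, hne'⟩ := Finset.exists_mem_ne hA2 v
      have hreach' : GS.Reachable v u := by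
        apply (SimpleGraph.ConnectedComponent.eq).mp
        rw [(Finset.mem_filter.mp hv).2, (Finset.mem_filter.mp hu).2]
      obtain ⟨p⟩ := hreach'
      cases p with
      | nil => exact absurd rfl hne'
      | cons hadj q => exact ⟨_, by simpa [hGS] using hadj⟩
    set W : Finset {w : V // w ∉ F} := Finset.univ.filter (fun w => κ w = K) with hW
    have hdegv : ∀ v ∈ A,
        (W.filter (fun w => X w.1 w.2 = v ∨ Y w.1 w.2 = v)).card + 1 ≤ G.degree v.1 := by
      intro v hv
      obtain ⟨z, hz⟩ := hnbr v hv
      set B : Finset V :=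
        (W.filter (fun w => X w.1 w.2 = v ∨ Y w.1 w.2 = v)).image (fun w => w.1) with hB
      have hBcard : B.card = (W.filter (fun w => X w.1 w.2 = v ∨ Y w.1 w.2 = v)).card := by
        apply Finset.card_image_of_injective
        intro a b hab
        exact Subtype.ext hab
      have hBsub : B ⊆ G.neighborFinset v.1 := by
        intro x hx
        obtain ⟨w, hwmem, rfl⟩ := Finset.mem_image.mp hx
        rcases (Finset.mem_filter.mp hwmem).2 with h' | h'
        · rw [SimpleGraph.mem_neighborFinset]
          exact (h' ▸ hadjX w.1 w.2 : G.Adj w.1 v.1).symm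
        · rw [SimpleGraph.mem_neighborFinset]
          exact (h' ▸ hadjY w.1 w.2 : G.Adj w.1 v.1).symm
      have hzB : (z : V) ∉ B := by
        intro hmem
        obtain ⟨w, _, hwz⟩ := Finset.mem_image.mp hmem
        exact w.2 (by rw [hwz]; exact z.2)
      have hzN : (z : V) ∈ G.neighborFinset v.1 := by
        rw [SimpleGraph.mem_neighborFinset]; exact hz
      have hins : insert (z : V) B ⊆ G.neighborFinset v.1 :=
        Finset.insert_subset hzN hBsub
      have hc := Finset.card_le_card hins
      rw [Finset.card_insert_of_notMem hzB, hBcard] at hc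
      rw [← SimpleGraph.card_neighborFinset_eq_degree]
      omega
    have hdouble : ∑ v ∈ A, (W.filter (fun w => X w.1 w.2 = v ∨ Y w.1 w.2 = v)).card
        = 2 * W.card := by
      calc ∑ v ∈ A, (W.filter (fun w => X w.1 w.2 = v ∨ Y w.1 w.2 = v)).card
          = ∑ v ∈ A, ∑ w ∈ W, if X w.1 w.2 = v ∨ Y w.1 w.2 = v then 1 else 0 :=
            Finset.sum_congr rfl (fun v _ => by rw [Finset.card_filter])
        _ = ∑ w ∈ W, ∑ v ∈ A, if X w.1 w.2 = v ∨ Y w.1 w.2 = v then 1 else 0 :=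
            Finset.sum_comm
        _ = ∑ w ∈ W, 2 := by
            refine Finset.sum_congr rfl (fun w hw => ?_)
            rw [← Finset.card_filter]
            have hfil : A.filter (fun v => X w.1 w.2 = v ∨ Y w.1 w.2 = v)
                = {X w.1 w.2, Y w.1 w.2} := by
              ext v
              simp only [Finset.mem_filter, Finset.mem_insert, Finset.mem_singleton]
              constructor
              · rintro ⟨_, h' | h'⟩
                · exact Or.inl h'.symm
                · exact Or.inr h'.symm
              · rintro (rfl | rfl)
                · exact ⟨(hmemA w ((Finset.mem_filter.mp hw).2)).1, Or.inl rfl⟩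
                · exact ⟨(hmemA w ((Finset.mem_filter.mp hw).2)).2, Or.inr rfl⟩
            rw [hfil, Finset.card_insert_of_notMem (by
              simp only [Finset.mem_singleton]; exact hXY w.1 w.2),
              Finset.card_singleton]
        _ = 2 * W.card := by rw [Finset.sum_const, smul_eq_mul, mul_comm]
    have hsumdeg : A.card + 2 * W.card ≤ ∑ v ∈ A, G.degree v.1 := by
      calc A.card + 2 * W.card
          = ∑ v ∈ A, 1 + ∑ v ∈ A, (W.filter (fun w => X w.1 w.2 = v ∨ Y w.1 w.2 = v)).card := by
            rw [Finset.sum_const, smul_eq_mul, mul_one, hdouble]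
        _ = ∑ v ∈ A, ((W.filter (fun w => X w.1 w.2 = v ∨ Y w.1 w.2 = v)).card + 1) := by
            rw [← Finset.sum_add_distrib]
            exact Finset.sum_congr rfl (fun v _ => by omega)
        _ ≤ ∑ v ∈ A, G.degree v.1 := Finset.sum_le_sum hdegv
    obtain ⟨v, hvA, hvmax⟩ := Finset.exists_max_image A (fun v => G.degree v.1)
      ⟨_, (hmemA w₀ hκw₀).1⟩
    have hsummax : ∑ u ∈ A, G.degree u.1 ≤ A.card * G.degree v.1 := by
      calc ∑ u ∈ A, G.degree u.1 ≤ ∑ _u ∈ A, G.degree v.1 :=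
            Finset.sum_le_sum (fun u hu => hvmax u hu)
        _ = A.card * G.degree v.1 := by rw [Finset.sum_const, smul_eq_mul]
    have hineq : fK K + 2 * nK K ≤ fK K * G.degree v.1 :=
      le_trans (le_trans (le_of_eq rfl) hsumdeg) hsummax
    have hdn : t * (G.degree v.1 + 1) ≤ n - 1 := by
      have hcv := hcon v.1
      omega
    calc 2*t*fK K + 2*t*nK K = t * (fK K + 2 * nK K) + t * fK K := by ring
      _ ≤ t * (fK K * G.degree v.1) + t * fK K :=
          Nat.add_le_add_right (Nat.mul_le_mul_left t hineq) _
      _ = fK K * (t * (G.degree v.1 + 1)) := by ring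
      _ ≤ fK K * (n - 1) := Nat.mul_le_mul_left _ hdn
  set P : Finset GS.ConnectedComponent := Finset.univ.filter (fun K => 0 < nK K) with hP
  have h1 : ∑ K ∈ P, nK K = n - F.card := by
    rw [← hsum_n]
    apply Finset.sum_subset (Finset.subset_univ P)
    intro K _ hK
    simp only [hP, Finset.mem_filter, Finset.mem_univ, true_and, not_lt] at hK
    omega
  have h2 : ∑ K ∈ P, fK K ≤ F.card := by
    rw [← hsum_f]
    exact Finset.sum_le_sum_of_subset (Finset.subset_univ P)
  have hbig : 2*t*(∑ K ∈ P, fK K) + 2*t*(n - F.card) ≤ (∑ K ∈ P, fK K) * (n-1) := by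
    rw [← h1]
    calc 2*t*(∑ K ∈ P, fK K) + 2*t*(∑ K ∈ P, nK K)
        = ∑ K ∈ P, (2*t*fK K + 2*t*nK K) := by
          rw [Finset.sum_add_distrib, Finset.mul_sum, Finset.mul_sum]
      _ ≤ ∑ K ∈ P, fK K * (n-1) := Finset.sum_le_sum (fun K hK =>
          hperK K ((Finset.mem_filter.mp hK).2))
      _ = (∑ K ∈ P, fK K) * (n-1) := (Finset.sum_mul _ _ _).symm
  set F' := ∑ K ∈ P, fK K with hF'
  have hsplit : F' * (n-1) = F' * (2*t) + F' * (n-1-2*t) := by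
    rw [← Nat.mul_add]
    congr 1
    omega
  rw [hsplit] at hbig
  have hstep : 2*t*(n - F.card) ≤ F' * (n-1-2*t) := by
    have e : 2*t*F' = F' * (2*t) := by ring
    omega
  have hstep2 : F' * (n-1-2*t) ≤ 2*t * (n-1-2*t) :=
    Nat.mul_le_mul_right _ (le_trans h2 hcard2t)
  have hfin : 2*t*(n - F.card) ≤ 2*t*(n-1-2*t) := le_trans hstep hstep2
  have hfin2 : n - F.card ≤ n-1-2*t := Nat.le_of_mul_le_mul_left hfin (by omega)
  omega
end
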